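/- arXiv:1801.10346 — 4 statements merged into one kernel-verified Lean document; each statement's English description precedes it below -/
import Mathlib

section
/- Let K > 0, h ∈ (0,1), v a unit vector in ℝ^d, and P a Borel probability measure on ℝ^d with support contained in B̄(0,K) such that P({y : ⟨y,v⟩ = c_{P,h}(v)}) = 0. Set x_n = n·v for n ∈ ℕ. Then for P-almost every y ∈ ℝ^d, the indicator 1_{B(x_n, δ_{P,h}(x_n))}(y) converges, as n → ∞, to 1_{H(v, c_{P,h}(v))}(y). -/
open MeasureTheory ENNReal Set Metric

noncomputable section

/-- `d`-dimensional Euclidean space. -/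
abbrev Ed (d : ℕ) : Type := EuclideanSpace ℝ (Fin d)

variable {d : ℕ}

/-- A Borel probability measure is sub-Gaussian with variance `V²` if
`Q {‖x‖ > t} ≤ exp (−t²/(2V²))` for all `t > V`. -/
def IsSubG (Q : Measure (Ed d)) (V : ℝ) : Prop :=
  ∀ t : ℝ, V < t → Q {x : Ed d | t < ‖x‖} ≤ ENNReal.ofReal (Real.exp (-(t ^ 2) / (2 * V ^ 2)))

/-- `δ_{P,l}(x) = inf {r > 0 | P (B̄(x,r)) > l}`. -/
def dtmRadius (P : Measure (Ed d)) (l : ℝ) (x : Ed d) : ℝ :=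
  sInf {r : ℝ | 0 < r ∧ ENNReal.ofReal l < P (closedBall x r)}

/-- The distance to the measure `P` with mass parameter `h`. -/
def dtm (P : Measure (Ed d)) (h : ℝ) (x : Ed d) : ℝ :=
  Real.sqrt ((1 / h) * ∫ l in (0:ℝ)..h, (dtmRadius P l x) ^ 2)

/-- `c_{P,h}(v) = sup {c | P {y | ⟨y,v⟩ > c} > h}`. -/
def cInf (P : Measure (Ed d)) (h : ℝ) (v : Ed d) : ℝ :=
  sSup {c : ℝ | ENNReal.ofReal h < P {y : Ed d | c < (inner ℝ y v : ℝ)}}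

/-- `𝒫_{x,h}(P)`: probability measures `(1/h)·Q` with `Q` a sub-measure of `P` of total mass `h`,
coinciding with `P` on the open ball `B(x, δ_{P,h}(x))` and supported on the closed ball. -/
def PlocPt (P : Measure (Ed d)) (h : ℝ) (x : Ed d) : Set (Measure (Ed d)) :=
  {μ | ∃ Q : Measure (Ed d),
    μ = (ENNReal.ofReal h)⁻¹ • Q ∧ Q ≤ P ∧ Q Set.univ = ENNReal.ofReal h ∧
    (∀ A : Set (Ed d), A ⊆ ball x (dtmRadius P h x) → Q A = P A) ∧
    Q ((closedBall x (dtmRadius P h x))ᶜ) = 0}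

/-- `𝒫_{v∞,h}(P)`: probability measures `(1/h)·Q` with `Q` a sub-measure of `P` of total mass `h`,
coinciding with `P` on the open half-space `H(v, c_{P,h}(v))` and giving no mass to
`{y | ⟨y,v⟩ < c_{P,h}(v)}`. -/
def PlocInf (P : Measure (Ed d)) (h : ℝ) (v : Ed d) : Set (Measure (Ed d)) :=
  {μ | ∃ Q : Measure (Ed d),
    μ = (ENNReal.ofReal h)⁻¹ • Q ∧ Q ≤ P ∧ Q Set.univ = ENNReal.ofReal h ∧
    (∀ A : Set (Ed d), A ⊆ {y : Ed d | cInf P h v < (inner ℝ y v : ℝ)} → Q A = P A) ∧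
    Q {y : Ed d | (inner ℝ y v : ℝ) < cInf P h v} = 0}

/-- Mean of a measure. -/
def mMean (μ : Measure (Ed d)) : Ed d := ∫ u, u ∂μ

/-- Variance of a measure. -/
def mVar (μ : Measure (Ed d)) : ℝ := ∫ u, ‖u - mMean μ‖ ^ 2 ∂μ

/-- The set `M_h(P)` of all means of localized sub-measures of `P`. -/
def Mset (P : Measure (Ed d)) (h : ℝ) : Set (Ed d) :=
  {m | (∃ x : Ed d, ∃ μ ∈ PlocPt P h x, m = mMean μ) ∨
       (∃ v : Ed d, ‖v‖ = 1 ∧ ∃ μ ∈ PlocInf P h v, m = mMean μ)}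

/-- A center is either a point of `ℝ^d` or a point at infinity `v∞` for a unit vector `v`. -/
def ExtPt (d : ℕ) : Type := Ed d ⊕ {v : Ed d // ‖v‖ = 1}

/-- Localized measures at an extended point. -/
def PlocExt (P : Measure (Ed d)) (h : ℝ) : ExtPt d → Set (Measure (Ed d))
  | Sum.inl x => PlocPt P h x
  | Sum.inr v => PlocInf P h v.1

/-- A `k`-center for `P`: centers `t i` with localized measures `μ i ∈ 𝒫_{t i,h}(P)`. -/
def IsKCenter (P : Measure (Ed d)) (h : ℝ) (k : ℕ)
    (t : Fin k → ExtPt d) (μ : Fin k → Measure (Ed d)) : Prop :=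
  ∀ i, μ i ∈ PlocExt P h (t i)

/-- The risk of a `k`-center. -/
def risk (P : Measure (Ed d)) (k : ℕ) (μ : Fin k → Measure (Ed d)) : ℝ :=
  ∫ u, (⨅ i : Fin k, (‖u - mMean (μ i)‖ ^ 2 + mVar (μ i))) ∂P

/-- `f` is a `k`-PDTM of `P`: the square root of the power function of a risk-minimizing
`k`-center. -/
def IsKPDTM (P : Measure (Ed d)) (h : ℝ) (k : ℕ) (f : Ed d → ℝ) : Prop :=
  ∃ (t : Fin k → ExtPt d) (μ : Fin k → Measure (Ed d)),
    IsKCenter P h k t μ ∧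
    (∀ (t' : Fin k → ExtPt d) (μ' : Fin k → Measure (Ed d)),
      IsKCenter P h k t' μ' → risk P k μ ≤ risk P k μ') ∧
    ∀ x, f x = Real.sqrt (⨅ i : Fin k, (‖x - mMean (μ i)‖ ^ 2 + mVar (μ i)))

/-- `f` is an `ε`-approximate `k`-PDTM of `P`. -/
def IsEpsKPDTM (P : Measure (Ed d)) (h : ℝ) (k : ℕ) (ε : ℝ) (f : Ed d → ℝ) : Prop :=
  ∃ (t : Fin k → ExtPt d) (μ : Fin k → Measure (Ed d)),
    IsKCenter P h k t μ ∧
    (∀ (t' : Fin k → ExtPt d) (μ' : Fin k → Measure (Ed d)),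
      IsKCenter P h k t' μ' → risk P k μ ≤ risk P k μ' + ε) ∧
    ∀ x, f x = Real.sqrt (⨅ i : Fin k, (‖x - mMean (μ i)‖ ^ 2 + mVar (μ i)))

/-- `ω²_{P,h}(θ) = sup_x (d_{P,h}²(x) − ‖x−θ‖²)`, as an extended nonnegative real. -/
def omega2 (P : Measure (Ed d)) (h : ℝ) (θ : Ed d) : ℝ≥0∞ :=
  ⨆ x : Ed d, ENNReal.ofReal ((dtm P h x) ^ 2 - ‖x - θ‖ ^ 2)

/-- When `P` puts no mass on spheres, the unique element of `𝒫_{x,h}(P)`. -/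
def locMeasure (P : Measure (Ed d)) (h : ℝ) (x : Ed d) : Measure (Ed d) :=
  (ENNReal.ofReal h)⁻¹ • P.restrict (ball x (dtmRadius P h x))

/-- The `Lᵖ`-Wasserstein distance. -/
def Wdist (p : ℝ) (P Q : Measure (Ed d)) : ℝ :=
  sInf {w | ∃ π : Measure (Ed d × Ed d),
    π.map Prod.fst = P ∧ π.map Prod.snd = Q ∧
    w = (∫ y, ‖y.1 - y.2‖ ^ p ∂π) ^ (1 / p)}

/-- The support of a measure. -/
def msupport (P : Measure (Ed d)) : Set (Ed d) :=
  {x : Ed d | ∀ r : ℝ, 0 < r → 0 < P (ball x r)}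

end

set_option maxHeartbeats 1600000 in
/-- convergence of the indicators of the DTM balls along `x_n = n·v` to the
indicator of the half-space `H(v, c_{P,h}(v))`, `P`-almost surely. -/
theorem stmt_1 {d : ℕ} (K : ℝ) (hK : 0 < K) (h : ℝ) (hh : h ∈ Set.Ioo (0:ℝ) 1)
    (v : Ed d) (hv : ‖v‖ = 1)
    (P : Measure (Ed d)) [IsProbabilityMeasure P]
    (hsupp : P ((closedBall (0 : Ed d) K)ᶜ) = 0)
    (hbd : P {y : Ed d | (inner ℝ y v : ℝ) = cInf P h v} = 0) :
    ∀ᵐ y ∂P, Filter.Tendsto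
      (fun n : ℕ =>
        Set.indicator (ball ((n : ℝ) • v) (dtmRadius P h ((n : ℝ) • v))) (fun _ => (1:ℝ)) y)
      Filter.atTop
      (nhds (Set.indicator {z : Ed d | cInf P h v < (inner ℝ z v : ℝ)} (fun _ => (1:ℝ)) y)) := by
  obtain ⟨hh0, hh1⟩ := hh
  set c := cInf P h v with hcdef
  have hhlt1 : ENNReal.ofReal h < 1 := by
    rw [← ENNReal.ofReal_one]
    exact (ENNReal.ofReal_lt_ofReal_iff_of_nonneg hh0.le).mpr hh1
  have hh0' : (0 : ℝ≥0∞) < ENNReal.ofReal h := ENNReal.ofReal_pos.mpr hh0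
  have hP1 : P (closedBall (0 : Ed d) K) = 1 := by
    have h2 := measure_add_measure_compl (μ := P)
      (measurableSet_closedBall (x := (0 : Ed d)) (ε := K))
    rw [hsupp, add_zero] at h2
    simpa using h2
  have hinner_ball : ∀ y : Ed d, y ∈ closedBall (0 : Ed d) K → |(inner ℝ y v : ℝ)| ≤ K := by
    intro y hy
    calc |(inner ℝ y v : ℝ)| ≤ ‖y‖ * ‖v‖ := abs_real_inner_le_norm y v
      _ = ‖y‖ := by rw [hv, mul_one]
      _ ≤ K := by simpa [mem_closedBall, dist_zero_right] using hy
  -- the set defining cInf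
  set T : Set ℝ := {s : ℝ | ENNReal.ofReal h < P {y : Ed d | s < (inner ℝ y v : ℝ)}} with hTdef
  have hTne : (-(K + 1)) ∈ T := by
    have hsub : closedBall (0 : Ed d) K ⊆ {y : Ed d | -(K + 1) < (inner ℝ y v : ℝ)} := by
      intro y hy
      have h3 := abs_le.mp (hinner_ball y hy)
      simp only [mem_setOf_eq]
      linarith [h3.1]
    calc ENNReal.ofReal h < 1 := hhlt1
      _ = P (closedBall 0 K) := hP1.symm
      _ ≤ _ := measure_mono hsub
  have hTle : ∀ s ∈ T, s ≤ K := by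
    intro s hs
    by_contra hKs
    push_neg at hKs
    have hsub : {y : Ed d | s < (inner ℝ y v : ℝ)} ⊆ (closedBall (0 : Ed d) K)ᶜ := by
      intro y hy
      intro hyK
      have := abs_le.mp (hinner_ball y hyK)
      simp only [mem_setOf_eq] at hy
      linarith [this.2]
    have : P {y : Ed d | s < (inner ℝ y v : ℝ)} = 0 :=
      le_antisymm (le_trans (measure_mono hsub) hsupp.le) zero_le
    rw [hTdef] at hs
    simp only [mem_setOf_eq, this] at hs
    exact absurd hs (by simp)
  have hTbdd : BddAbove T := ⟨K, hTle⟩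
  have hcT : c = sSup T := rfl
  -- below cInf : half-space measure exceeds h
  have hlt : ∀ s : ℝ, s < c → ENNReal.ofReal h < P {y : Ed d | s < (inner ℝ y v : ℝ)} := by
    intro s hs
    obtain ⟨t, htT, hst⟩ := exists_lt_of_lt_csSup ⟨_, hTne⟩ (hcT ▸ hs)
    refine lt_of_lt_of_le htT (measure_mono ?_)
    intro y hy
    simp only [mem_setOf_eq] at hy ⊢
    linarith
  -- above cInf : half-space measure at most h
  have hle : ∀ s : ℝ, c < s → P {y : Ed d | s < (inner ℝ y v : ℝ)} ≤ ENNReal.ofReal h := by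
    intro s hs
    by_contra hcon
    push_neg at hcon
    exact absurd (le_csSup hTbdd hcon) (not_le.mpr hs)
  -- norm expansion
  have hnorm : ∀ (y : Ed d) (n : ℝ), 0 ≤ n →
      ‖y - n • v‖ ^ 2 = ‖y‖ ^ 2 - 2 * n * (inner ℝ y v : ℝ) + n ^ 2 := by
    intro y n hn
    rw [norm_sub_sq_real, real_inner_smul_right, norm_smul, hv, mul_one,
      Real.norm_eq_abs, abs_of_nonneg hn]
    ring
  -- membership of the upper-bound radius
  have hRmem : ∀ ε : ℝ, 0 < ε → ∀ n : ℕ, 2 * |c| + 2 * ε + K + 1 ≤ (n : ℝ) →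
      (0 < Real.sqrt ((n : ℝ) ^ 2 - 2 * n * (c - ε) + K ^ 2) ∧
       ENNReal.ofReal h <
        P (closedBall ((n : ℝ) • v) (Real.sqrt ((n : ℝ) ^ 2 - 2 * n * (c - ε) + K ^ 2)))) := by
    intro ε hε n hn
    have hcabs1 := le_abs_self c
    have hcabs2 := neg_abs_le c
    have habs : (0:ℝ) ≤ |c| := abs_nonneg c
    have hApos : 0 < (n : ℝ) ^ 2 - 2 * n * (c - ε) + K ^ 2 := by nlinarith
    refine ⟨Real.sqrt_pos.mpr hApos, ?_⟩
    have hsub : {y : Ed d | c - ε < (inner ℝ y v : ℝ)} ∩ closedBall (0 : Ed d) K ⊆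
        closedBall ((n : ℝ) • v) (Real.sqrt ((n : ℝ) ^ 2 - 2 * n * (c - ε) + K ^ 2)) := by
      rintro y ⟨hy1, hy2⟩
      simp only [mem_setOf_eq] at hy1
      have hyK : ‖y‖ ≤ K := by simpa [mem_closedBall, dist_zero_right] using hy2
      have hn0 : (0:ℝ) ≤ (n : ℝ) := by positivity
      have hsq : ‖y - (n : ℝ) • v‖ ^ 2 ≤ (n : ℝ) ^ 2 - 2 * n * (c - ε) + K ^ 2 := by
        rw [hnorm y n hn0]
        nlinarith [norm_nonneg y]
      have := Real.sqrt_le_sqrt hsq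
      rw [Real.sqrt_sq (norm_nonneg _)] at this
      simpa [mem_closedBall, dist_eq_norm] using this
    have hmeas : P {y : Ed d | c - ε < (inner ℝ y v : ℝ)} ≤
        P ({y : Ed d | c - ε < (inner ℝ y v : ℝ)} ∩ closedBall (0 : Ed d) K) := by
      have h4 := measure_le_inter_add_diff (μ := P)
        (s := {y : Ed d | c - ε < (inner ℝ y v : ℝ)}) (t := closedBall (0 : Ed d) K)
      have h5 : P ({y : Ed d | c - ε < (inner ℝ y v : ℝ)} \ closedBall (0 : Ed d) K) = 0 :=
        le_antisymm (le_trans (measure_mono (diff_subset_compl _ _)) hsupp.le) zero_le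
      rwa [h5, add_zero] at h4
    calc ENNReal.ofReal h < P {y : Ed d | c - ε < (inner ℝ y v : ℝ)} :=
          hlt (c - ε) (by linarith)
      _ ≤ P ({y : Ed d | c - ε < (inner ℝ y v : ℝ)} ∩ closedBall (0 : Ed d) K) := hmeas
      _ ≤ _ := measure_mono hsub
  -- upper bound on dtmRadius
  have hub : ∀ ε : ℝ, 0 < ε → ∀ n : ℕ, 2 * |c| + 2 * ε + K + 1 ≤ (n : ℝ) →
      dtmRadius P h ((n : ℝ) • v) ≤ Real.sqrt ((n : ℝ) ^ 2 - 2 * n * (c - ε) + K ^ 2) := by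
    intro ε hε n hn
    exact csInf_le ⟨0, fun r hr => hr.1.le⟩ (hRmem ε hε n hn)
  -- lower bound on dtmRadius
  have hlb : ∀ ε : ℝ, 0 < ε → ∀ n : ℕ, 2 * |c| + 2 * ε + K + 1 ≤ (n : ℝ) →
      Real.sqrt ((n : ℝ) ^ 2 - 2 * n * (c + ε)) ≤ dtmRadius P h ((n : ℝ) • v) := by
    intro ε hε n hn
    have hcabs1 := le_abs_self c
    have hcabs2 := neg_abs_le c
    have habs : (0:ℝ) ≤ |c| := abs_nonneg c
    have hn0 : (0:ℝ) < (n : ℝ) := by nlinarith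
    have hB : (0:ℝ) ≤ (n : ℝ) ^ 2 - 2 * n * (c + ε) := by nlinarith
    apply le_csInf ⟨Real.sqrt ((n : ℝ) ^ 2 - 2 * n * (c - ε) + K ^ 2), hRmem ε hε n hn⟩
    intro r hr
    by_contra hcon
    push_neg at hcon
    have hsub : closedBall ((n : ℝ) • v) r ⊆ {y : Ed d | c + ε < (inner ℝ y v : ℝ)} := by
      intro y hy
      have hdist : ‖y - (n : ℝ) • v‖ ≤ r := by
        simpa [mem_closedBall, dist_eq_norm] using hy
      have h6 : ‖y - (n : ℝ) • v‖ < Real.sqrt ((n : ℝ) ^ 2 - 2 * n * (c + ε)) :=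
        lt_of_le_of_lt hdist hcon
      have h7 : ‖y - (n : ℝ) • v‖ ^ 2 < (n : ℝ) ^ 2 - 2 * n * (c + ε) := by
        nlinarith [Real.sq_sqrt hB, norm_nonneg (y - (n : ℝ) • v),
          Real.sqrt_nonneg ((n : ℝ) ^ 2 - 2 * n * (c + ε))]
      rw [hnorm y n hn0.le] at h7
      simp only [mem_setOf_eq]
      nlinarith [sq_nonneg ‖y‖]
    have : P (closedBall ((n : ℝ) • v) r) ≤ ENNReal.ofReal h :=
      le_trans (measure_mono hsub) (hle (c + ε) (by linarith))
    exact absurd hr.2 (not_lt.mpr this)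
  -- a.e. statements
  have hae1 : ∀ᵐ y ∂P, y ∈ closedBall (0 : Ed d) K := by
    have h8 := (MeasureTheory.measure_eq_zero_iff_ae_notMem (μ := P)).mp hsupp
    filter_upwards [h8] with y hy
    simpa using hy
  have hae2 : ∀ᵐ y ∂P, (inner ℝ y v : ℝ) ≠ c := by
    have := (MeasureTheory.measure_eq_zero_iff_ae_notMem (μ := P)).mp hbd
    filter_upwards [this] with y hy
    simpa [mem_setOf_eq] using hy
  filter_upwards [hae1, hae2] with y hyK hyc
  have hyKn : ‖y‖ ≤ K := by simpa [mem_closedBall, dist_zero_right] using hyK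
  rcases hyc.lt_or_gt with hylt | hygt
  · -- inner y v < c : indicator → 0
    set ε : ℝ := (c - (inner ℝ y v : ℝ)) / 2 with hεdef
    have hε : 0 < ε := by simp only [hεdef]; linarith
    have hval : Set.indicator {z : Ed d | c < (inner ℝ z v : ℝ)} (fun _ => (1:ℝ)) y = 0 := by
      apply Set.indicator_of_notMem
      simp only [mem_setOf_eq, not_lt]
      linarith
    rw [hval]
    apply Filter.Tendsto.congr' _ tendsto_const_nhds
    rw [Filter.EventuallyEq, Filter.eventually_atTop]
    refine ⟨⌈2 * |c| + 2 * ε + K + 1 + K ^ 2 / (2 * ε)⌉₊, fun n hn => ?_⟩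
    have hnR : 2 * |c| + 2 * ε + K + 1 + K ^ 2 / (2 * ε) ≤ (n : ℝ) :=
      (Nat.ceil_le.mp hn)
    have hdivnn : (0:ℝ) ≤ K ^ 2 / (2 * ε) := by positivity
    have hn1 : 2 * |c| + 2 * ε + K + 1 ≤ (n : ℝ) := by linarith
    have hn2 : K ^ 2 < 2 * (n : ℝ) * ε := by
      have : K ^ 2 / (2 * ε) < (n : ℝ) := by
        have habs : (0:ℝ) ≤ |c| := abs_nonneg c
        linarith
      calc K ^ 2 = (K ^ 2 / (2 * ε)) * (2 * ε) := by field_simp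
        _ < (n : ℝ) * (2 * ε) := by
            apply mul_lt_mul_of_pos_right this (by linarith)
        _ = 2 * (n : ℝ) * ε := by ring
    have hn0 : (0:ℝ) ≤ (n : ℝ) := by positivity
    have hδ := hub ε hε n hn1
    have hA : (0:ℝ) < (n : ℝ) ^ 2 - 2 * n * (c - ε) + K ^ 2 := by
      have hcabs1 := le_abs_self c
      have hcabs2 := neg_abs_le c
      have habs : (0:ℝ) ≤ |c| := abs_nonneg c
      nlinarith
    have hfar : Real.sqrt ((n : ℝ) ^ 2 - 2 * n * (c - ε) + K ^ 2) < ‖y - (n : ℝ) • v‖ := by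
      have hsq : (n : ℝ) ^ 2 - 2 * n * (c - ε) + K ^ 2 < ‖y - (n : ℝ) • v‖ ^ 2 := by
        rw [hnorm y n hn0]
        have hyv : (inner ℝ y v : ℝ) = c - 2 * ε := by simp only [hεdef]; ring
        rw [hyv]
        nlinarith [sq_nonneg ‖y‖]
      calc Real.sqrt ((n : ℝ) ^ 2 - 2 * n * (c - ε) + K ^ 2)
          < Real.sqrt (‖y - (n : ℝ) • v‖ ^ 2) := Real.sqrt_lt_sqrt hA.le hsq
        _ = ‖y - (n : ℝ) • v‖ := Real.sqrt_sq (norm_nonneg _)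
    refine (Set.indicator_of_notMem ?_ _).symm
    simp only [mem_ball, dist_eq_norm, not_lt]
    exact le_trans hδ (le_of_lt hfar)
  · -- c < inner y v : indicator → 1
    set ε : ℝ := ((inner ℝ y v : ℝ) - c) / 2 with hεdef
    have hε : 0 < ε := by simp only [hεdef]; linarith
    have hval : Set.indicator {z : Ed d | c < (inner ℝ z v : ℝ)} (fun _ => (1:ℝ)) y = 1 := by
      have hmem : y ∈ {z : Ed d | c < (inner ℝ z v : ℝ)} := hygt
      exact Set.indicator_of_mem hmem _
    rw [hval]
    apply Filter.Tendsto.congr' _ tendsto_const_nhds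
    rw [Filter.EventuallyEq, Filter.eventually_atTop]
    refine ⟨⌈2 * |c| + 2 * ε + K + 1 + K ^ 2 / (2 * ε)⌉₊, fun n hn => ?_⟩
    have hnR : 2 * |c| + 2 * ε + K + 1 + K ^ 2 / (2 * ε) ≤ (n : ℝ) :=
      (Nat.ceil_le.mp hn)
    have hdivnn : (0:ℝ) ≤ K ^ 2 / (2 * ε) := by positivity
    have hn1 : 2 * |c| + 2 * ε + K + 1 ≤ (n : ℝ) := by linarith
    have hn2 : K ^ 2 < 2 * (n : ℝ) * ε := by
      have : K ^ 2 / (2 * ε) < (n : ℝ) := by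
        have habs : (0:ℝ) ≤ |c| := abs_nonneg c
        linarith
      calc K ^ 2 = (K ^ 2 / (2 * ε)) * (2 * ε) := by field_simp
        _ < (n : ℝ) * (2 * ε) := by
            apply mul_lt_mul_of_pos_right this (by linarith)
        _ = 2 * (n : ℝ) * ε := by ring
    have hn0 : (0:ℝ) ≤ (n : ℝ) := by positivity
    have hδ := hlb ε hε n hn1
    have hcabs1 := le_abs_self c
    have hcabs2 := neg_abs_le c
    have habs : (0:ℝ) ≤ |c| := abs_nonneg c
    have hB : (0:ℝ) ≤ (n : ℝ) ^ 2 - 2 * n * (c + ε) := by nlinarith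
    have hnear : ‖y - (n : ℝ) • v‖ < Real.sqrt ((n : ℝ) ^ 2 - 2 * n * (c + ε)) := by
      have hsq : ‖y - (n : ℝ) • v‖ ^ 2 < (n : ℝ) ^ 2 - 2 * n * (c + ε) := by
        rw [hnorm y n hn0]
        have hyv : (inner ℝ y v : ℝ) = c + 2 * ε := by simp only [hεdef]; ring
        rw [hyv]
        nlinarith [sq_nonneg ‖y‖, norm_nonneg y, hyKn]
      calc ‖y - (n : ℝ) • v‖ = Real.sqrt (‖y - (n : ℝ) • v‖ ^ 2) :=
            (Real.sqrt_sq (norm_nonneg _)).symm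
        _ < Real.sqrt ((n : ℝ) ^ 2 - 2 * n * (c + ε)) :=
            Real.sqrt_lt_sqrt (sq_nonneg _) hsq
    have hmem : y ∈ ball ((n : ℝ) • v) (dtmRadius P h ((n : ℝ) • v)) := by
      simp only [mem_ball, dist_eq_norm]
      exact lt_of_lt_of_le hnear hδ
    exact (Set.indicator_of_mem hmem (fun _ => (1:ℝ))).symm
end

section
/- Let P be a Borel probability measure on ℝ^d with finite second moment. For all 0 < h < h' ≤ 1, the convex hull Conv(M_{h'}(P)) is contained in the convex hull Conv(M_h(P)). -/
open MeasureTheory ENNReal Set Metric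

noncomputable section Aux

open Filter Topology

variable {d : ℕ}

/-- Finite second moment implies finite first moment. -/
lemma lintegral_norm_lt_top (P : Measure (Ed d)) [IsProbabilityMeasure P]
    (hP2 : ∫⁻ u, ENNReal.ofReal (‖u‖ ^ 2) ∂P < ⊤) :
    ∫⁻ u, ENNReal.ofReal ‖u‖ ∂P < ⊤ := by
  have hle : ∀ u : Ed d, ENNReal.ofReal ‖u‖ ≤ 1 + ENNReal.ofReal (‖u‖ ^ 2) := by
    intro u
    have h1 : ‖u‖ ≤ 1 + ‖u‖ ^ 2 := by nlinarith [sq_nonneg (‖u‖ - 1), norm_nonneg u]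
    calc ENNReal.ofReal ‖u‖ ≤ ENNReal.ofReal (1 + ‖u‖ ^ 2) := ENNReal.ofReal_le_ofReal h1
      _ = ENNReal.ofReal 1 + ENNReal.ofReal (‖u‖ ^ 2) :=
          ENNReal.ofReal_add zero_le_one (sq_nonneg _)
      _ = 1 + ENNReal.ofReal (‖u‖ ^ 2) := by rw [ENNReal.ofReal_one]
  calc ∫⁻ u, ENNReal.ofReal ‖u‖ ∂P ≤ ∫⁻ u, (1 + ENNReal.ofReal (‖u‖ ^ 2)) ∂P :=
        lintegral_mono hle
    _ = ∫⁻ _, (1 : ℝ≥0∞) ∂P + ∫⁻ u, ENNReal.ofReal (‖u‖ ^ 2) ∂P :=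
        lintegral_add_left measurable_const _
    _ < ⊤ := by
        rw [lintegral_one, measure_univ]
        exact ENNReal.add_lt_top.mpr ⟨ENNReal.one_lt_top, hP2⟩

lemma integrable_norm_aux (P : Measure (Ed d)) [IsProbabilityMeasure P]
    (hP2 : ∫⁻ u, ENNReal.ofReal (‖u‖ ^ 2) ∂P < ⊤) :
    Integrable (fun u : Ed d => ‖u‖) P := by
  refine ⟨continuous_norm.aestronglyMeasurable, ?_⟩
  rw [hasFiniteIntegral_iff_ofReal (Filter.Eventually.of_forall fun x => norm_nonneg x)]
  exact lintegral_norm_lt_top P hP2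

lemma integrable_id_aux (P : Measure (Ed d)) [IsProbabilityMeasure P]
    (hP2 : ∫⁻ u, ENNReal.ofReal (‖u‖ ^ 2) ∂P < ⊤) :
    Integrable (fun u : Ed d => u) P := by
  refine ⟨aestronglyMeasurable_id, ?_⟩
  have := (integrable_norm_aux P hP2).2
  simpa [HasFiniteIntegral] using this

/-- Quantile bounds for `cInf`. -/
lemma cInf_bounds (P : Measure (Ed d)) [IsProbabilityMeasure P] {h : ℝ}
    (hh : 0 < h) (hh1 : h < 1) (v : Ed d) :
    P {y : Ed d | cInf P h v < (inner ℝ y v : ℝ)} ≤ ENNReal.ofReal h ∧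
    ENNReal.ofReal h ≤ P {y : Ed d | cInf P h v ≤ (inner ℝ y v : ℝ)} := by
  have hcont : Continuous fun y : Ed d => (inner ℝ y v : ℝ) :=
    continuous_id.inner continuous_const
  set S : Set ℝ := {c : ℝ | ENNReal.ofReal h < P {y : Ed d | c < (inner ℝ y v : ℝ)}} with hS
  -- S is nonempty
  obtain ⟨n₀, hn₀⟩ : ∃ n : ℕ, ENNReal.ofReal h < P {y : Ed d | (-(n : ℝ)) < (inner ℝ y v : ℝ)} := by
    have hdir : Directed (· ⊆ ·) (fun n : ℕ => {y : Ed d | (-(n : ℝ)) < (inner ℝ y v : ℝ)}) := by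
      refine Monotone.directed_le ?_
      intro a b hab y hy
      simp only [Set.mem_setOf_eq] at *
      have hba : (-(b : ℝ)) ≤ -(a : ℝ) := neg_le_neg (by exact_mod_cast hab)
      linarith
    have hun : (⋃ n : ℕ, {y : Ed d | (-(n : ℝ)) < (inner ℝ y v : ℝ)}) = Set.univ := by
      ext y
      simp only [Set.mem_iUnion, Set.mem_univ, iff_true, Set.mem_setOf_eq]
      obtain ⟨n, hn⟩ := exists_nat_gt (-(inner ℝ y v : ℝ))
      exact ⟨n, by linarith⟩
    have hU := Directed.measure_iUnion (μ := P) hdir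
    rw [hun, measure_univ] at hU
    have : ENNReal.ofReal h < ⨆ n : ℕ, P {y : Ed d | (-(n : ℝ)) < (inner ℝ y v : ℝ)} := by
      rw [← hU]; exact ENNReal.ofReal_lt_one.mpr hh1
    exact lt_iSup_iff.mp this
  have hSne : S.Nonempty := ⟨-(n₀ : ℝ), hn₀⟩
  -- S is bounded above
  obtain ⟨n₁, hn₁⟩ : ∃ n : ℕ, P {y : Ed d | (n : ℝ) < (inner ℝ y v : ℝ)} < ENNReal.ofReal h := by
    have hmeas : ∀ n : ℕ, NullMeasurableSet {y : Ed d | (n : ℝ) < (inner ℝ y v : ℝ)} P :=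
      fun n => (measurableSet_lt measurable_const hcont.measurable).nullMeasurableSet
    have hdir : Directed (· ⊇ ·) (fun n : ℕ => {y : Ed d | (n : ℝ) < (inner ℝ y v : ℝ)}) := by
      refine Antitone.directed_ge ?_
      intro a b hab y hy
      simp only [Set.mem_setOf_eq] at *
      have : (a : ℝ) ≤ (b : ℝ) := by exact_mod_cast hab
      linarith
    have hin : (⋂ n : ℕ, {y : Ed d | (n : ℝ) < (inner ℝ y v : ℝ)}) = (∅ : Set (Ed d)) := by
      ext y
      simp only [Set.mem_iInter, Set.mem_empty_iff_false, iff_false, not_forall,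
        Set.mem_setOf_eq, not_lt]
      obtain ⟨n, hn⟩ := exists_nat_gt ((inner ℝ y v : ℝ))
      exact ⟨n, hn.le⟩
    have hI := Directed.measure_iInter hmeas hdir ⟨0, measure_ne_top P _⟩
    rw [hin, measure_empty] at hI
    have : (⨅ n : ℕ, P {y : Ed d | (n : ℝ) < (inner ℝ y v : ℝ)}) < ENNReal.ofReal h := by
      rw [← hI]; exact ENNReal.ofReal_pos.mpr hh
    exact iInf_lt_iff.mp this
  have hSbd : BddAbove S := by
    refine ⟨n₁, fun c hc => ?_⟩
    by_contra hcn
    push_neg at hcn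
    have hsub : {y : Ed d | c < (inner ℝ y v : ℝ)} ⊆ {y : Ed d | (n₁ : ℝ) < (inner ℝ y v : ℝ)} :=
      fun y hy => lt_trans hcn hy
    exact absurd (lt_of_lt_of_le hc (measure_mono hsub)) (not_lt.mpr hn₁.le)
  have hceq : cInf P h v = sSup S := rfl
  constructor
  · -- upper bound
    have hun : {y : Ed d | cInf P h v < (inner ℝ y v : ℝ)} =
        ⋃ n : ℕ, {y : Ed d | cInf P h v + 1 / (n + 1) < (inner ℝ y v : ℝ)} := by
      ext y
      simp only [Set.mem_iUnion, Set.mem_setOf_eq]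
      constructor
      · intro hy
        obtain ⟨n, hn⟩ := exists_nat_one_div_lt (sub_pos.mpr hy)
        exact ⟨n, by push_cast at hn ⊢; linarith⟩
      · rintro ⟨n, hn⟩
        have : (0 : ℝ) < 1 / (n + 1) := by positivity
        linarith
    have hdir : Directed (· ⊆ ·)
        (fun n : ℕ => {y : Ed d | cInf P h v + 1 / (n + 1) < (inner ℝ y v : ℝ)}) := by
      refine Monotone.directed_le ?_
      intro a b hab y hy
      simp only [Set.mem_setOf_eq] at *
      have h1 : (1 : ℝ) / (b + 1) ≤ 1 / (a + 1) := by
        apply one_div_le_one_div_of_le (by positivity)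
        exact_mod_cast Nat.add_le_add_right hab 1
      linarith
    rw [hun, Directed.measure_iUnion hdir]
    refine iSup_le fun n => ?_
    by_contra hlt
    push_neg at hlt
    have hmem : cInf P h v + 1 / (n + 1) ∈ S := hlt
    have := le_csSup hSbd hmem
    rw [hceq] at *
    have : (0 : ℝ) < 1 / (n + 1) := by positivity
    linarith [le_csSup hSbd hmem]
  · -- lower bound
    have hin : {y : Ed d | cInf P h v ≤ (inner ℝ y v : ℝ)} =
        ⋂ n : ℕ, {y : Ed d | cInf P h v - 1 / (n + 1) < (inner ℝ y v : ℝ)} := by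
      ext y
      simp only [Set.mem_iInter, Set.mem_setOf_eq]
      constructor
      · intro hy n
        have : (0 : ℝ) < 1 / (n + 1) := by positivity
        linarith
      · intro hy
        by_contra hcy
        push_neg at hcy
        obtain ⟨n, hn⟩ := exists_nat_one_div_lt (sub_pos.mpr hcy)
        have := hy n
        push_cast at hn this
        linarith
    have hmeas : ∀ n : ℕ,
        NullMeasurableSet {y : Ed d | cInf P h v - 1 / (n + 1) < (inner ℝ y v : ℝ)} P :=
      fun n => (measurableSet_lt measurable_const hcont.measurable).nullMeasurableSet
    have hdir : Directed (· ⊇ ·)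
        (fun n : ℕ => {y : Ed d | cInf P h v - 1 / (n + 1) < (inner ℝ y v : ℝ)}) := by
      refine Antitone.directed_ge ?_
      intro a b hab y hy
      simp only [Set.mem_setOf_eq] at *
      have h1 : (1 : ℝ) / (b + 1) ≤ 1 / (a + 1) := by
        apply one_div_le_one_div_of_le (by positivity)
        exact_mod_cast Nat.add_le_add_right hab 1
      linarith
    rw [hin, Directed.measure_iInter hmeas hdir ⟨0, measure_ne_top P _⟩]
    refine le_iInf fun n => ?_
    have hlt : cInf P h v - 1 / (n + 1) < sSup S := by
      rw [← hceq]
      have : (0 : ℝ) < 1 / (n + 1) := by positivity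
      linarith
    obtain ⟨s, hsS, hs⟩ := exists_lt_of_lt_csSup hSne hlt
    have hsub : {y : Ed d | s < (inner ℝ y v : ℝ)} ⊆
        {y : Ed d | cInf P h v - 1 / (n + 1) < (inner ℝ y v : ℝ)} :=
      fun y hy => lt_trans hs hy
    exact le_trans (le_of_lt hsS) (measure_mono hsub)

/-- Construction of a half-space localized measure. -/
lemma exists_halfspace_measure (P : Measure (Ed d)) [IsProbabilityMeasure P] {h : ℝ}
    (hh : 0 < h) (hh1 : h < 1) (v : Ed d) :
    ∃ Qv : Measure (Ed d),
      Qv ≤ P ∧ Qv Set.univ = ENNReal.ofReal h ∧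
      (∀ A : Set (Ed d), A ⊆ {y : Ed d | cInf P h v < (inner ℝ y v : ℝ)} → Qv A = P A) ∧
      Qv {y : Ed d | (inner ℝ y v : ℝ) < cInf P h v} = 0 := by
  have hcont : Continuous fun y : Ed d => (inner ℝ y v : ℝ) :=
    continuous_id.inner continuous_const
  set c : ℝ := cInf P h v with hc
  set Ap : Set (Ed d) := {y : Ed d | c < (inner ℝ y v : ℝ)} with hAp
  set A0 : Set (Ed d) := {y : Ed d | (inner ℝ y v : ℝ) = c} with hA0
  have hApM : MeasurableSet Ap := measurableSet_lt measurable_const hcont.measurable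
  have hA0M : MeasurableSet A0 := hcont.measurable (measurableSet_singleton c)
  have hdisj : Disjoint Ap A0 := by
    rw [Set.disjoint_left]
    intro y hy hy0
    simp only [hAp, hA0, Set.mem_setOf_eq] at hy hy0
    linarith [hy, hy0.le]
  have hbounds := cInf_bounds P hh hh1 v
  have hup : P Ap ≤ ENNReal.ofReal h := hbounds.1
  have hunion : {y : Ed d | c ≤ (inner ℝ y v : ℝ)} = Ap ∪ A0 := by
    ext y
    simp only [Set.mem_setOf_eq, Set.mem_union, hAp, hA0]
    constructor
    · intro hy
      rcases lt_or_eq_of_le hy with h' | h'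
      · exact Or.inl h'
      · exact Or.inr h'.symm
    · rintro (h' | h')
      · exact h'.le
      · exact h'.ge
  have hlow : ENNReal.ofReal h ≤ P Ap + P A0 := by
    have := hbounds.2
    rwa [hunion, measure_union hdisj hA0M] at this
  set t : ℝ≥0∞ := (ENNReal.ofReal h - P Ap) / P A0 with ht
  have ht1 : t ≤ 1 := by
    apply ENNReal.div_le_of_le_mul
    rw [one_mul]
    exact tsub_le_iff_left.mpr hlow
  have hmass_t : t * P A0 = ENNReal.ofReal h - P Ap := by
    by_cases h0 : P A0 = 0
    · rw [h0, mul_zero]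
      symm
      rw [tsub_eq_zero_iff_le]
      calc ENNReal.ofReal h ≤ P Ap + P A0 := hlow
        _ = P Ap := by rw [h0, add_zero]
    · exact ENNReal.div_mul_cancel h0 (measure_ne_top P _)
  refine ⟨P.restrict Ap + t • P.restrict A0, ?_, ?_, ?_, ?_⟩
  · rw [Measure.le_iff]
    intro s hs
    have h1 : (P.restrict Ap + t • P.restrict A0) s = P (s ∩ Ap) + t * P (s ∩ A0) := by
      rw [Measure.add_apply, Measure.smul_apply, Measure.restrict_apply hs,
        Measure.restrict_apply hs, smul_eq_mul]
    rw [h1]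
    calc P (s ∩ Ap) + t * P (s ∩ A0) ≤ P (s ∩ Ap) + P (s ∩ A0) := by
          gcongr
          calc t * P (s ∩ A0) ≤ 1 * P (s ∩ A0) := by gcongr
            _ = P (s ∩ A0) := one_mul _
      _ = P ((s ∩ Ap) ∪ (s ∩ A0)) := by
          rw [measure_union (hdisj.mono Set.inter_subset_right Set.inter_subset_right)
            (hs.inter hA0M)]
      _ ≤ P s := measure_mono (by rw [← Set.inter_union_distrib_left]; exact Set.inter_subset_left)
  · rw [Measure.add_apply, Measure.smul_apply, Measure.restrict_apply_univ,
      Measure.restrict_apply_univ, smul_eq_mul, hmass_t, add_tsub_cancel_of_le hup]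
  · intro A hA
    have h1 : (P.restrict Ap + t • P.restrict A0) A = P (A ∩ Ap) + t * P (A ∩ A0) := by
      rw [Measure.add_apply, Measure.smul_apply, Measure.restrict_apply' hApM,
        Measure.restrict_apply' hA0M, smul_eq_mul]
    rw [h1, Set.inter_eq_self_of_subset_left hA]
    have : A ∩ A0 = ∅ := by
      apply Set.eq_empty_of_subset_empty
      intro y hy
      have h1 := hA hy.1
      have h2 := hy.2
      simp only [hAp, hA0, Set.mem_setOf_eq] at h1 h2
      exact absurd h2.le (not_le.mpr h1)
    rw [this, measure_empty, mul_zero, add_zero]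
  · have h1 : (P.restrict Ap + t • P.restrict A0) {y : Ed d | (inner ℝ y v : ℝ) < c} =
        P ({y : Ed d | (inner ℝ y v : ℝ) < c} ∩ Ap) +
          t * P ({y : Ed d | (inner ℝ y v : ℝ) < c} ∩ A0) := by
      rw [Measure.add_apply, Measure.smul_apply, Measure.restrict_apply' hApM,
        Measure.restrict_apply' hA0M, smul_eq_mul]
    rw [h1]
    have e1 : {y : Ed d | (inner ℝ y v : ℝ) < c} ∩ Ap = ∅ := by
      apply Set.eq_empty_of_subset_empty
      rintro y ⟨hy1, hy2⟩
      simp only [hAp, Set.mem_setOf_eq] at hy1 hy2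
      linarith
    have e2 : {y : Ed d | (inner ℝ y v : ℝ) < c} ∩ A0 = ∅ := by
      apply Set.eq_empty_of_subset_empty
      rintro y ⟨hy1, hy2⟩
      simp only [hA0, Set.mem_setOf_eq] at hy1 hy2
      linarith [hy2.le]
    rw [e1, e2]; simp

/-- Comparison of linear integrals against the half-space localized measure, with equality case. -/
lemma integral_inner_le_halfspace (P : Measure (Ed d)) [IsProbabilityMeasure P]
    (hP2 : ∫⁻ u, ENNReal.ofReal (‖u‖ ^ 2) ∂P < ⊤) {h : ℝ} (hh : 0 < h) (v : Ed d)
    (Q Qv : Measure (Ed d)) (hQ : Q ≤ P) (hQm : Q Set.univ = ENNReal.ofReal h)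
    (hQv : Qv ≤ P) (hQvm : Qv Set.univ = ENNReal.ofReal h)
    (hQv4 : ∀ A : Set (Ed d), A ⊆ {y : Ed d | cInf P h v < (inner ℝ y v : ℝ)} → Qv A = P A)
    (hQv5 : Qv {y : Ed d | (inner ℝ y v : ℝ) < cInf P h v} = 0) :
    ∫ y, (inner ℝ y v : ℝ) ∂Q ≤ ∫ y, (inner ℝ y v : ℝ) ∂Qv ∧
    (∫ y, (inner ℝ y v : ℝ) ∂Q = ∫ y, (inner ℝ y v : ℝ) ∂Qv →
      (∀ A : Set (Ed d), A ⊆ {y : Ed d | cInf P h v < (inner ℝ y v : ℝ)} → Q A = P A) ∧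
      Q {y : Ed d | (inner ℝ y v : ℝ) < cInf P h v} = 0) := by
  have hcont : Continuous fun y : Ed d => (inner ℝ y v : ℝ) :=
    continuous_id.inner continuous_const
  set c : ℝ := cInf P h v with hc
  set f : Ed d → ℝ := fun y => (inner ℝ y v : ℝ) with hf
  set g : Ed d → ℝ := fun y => max (f y - c) 0 with hg
  set g' : Ed d → ℝ := fun y => max (c - f y) 0 with hg'
  have hgcont : Continuous g := (hcont.sub continuous_const).max continuous_const
  have hg'cont : Continuous g' := (continuous_const.sub hcont).max continuous_const
  have hDom : Integrable (fun y : Ed d => ‖y‖ * ‖v‖ + |c|) P :=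
    ((integrable_norm_aux P hP2).mul_const ‖v‖).add (integrable_const _)
  have hbf : ∀ y : Ed d, ‖f y‖ ≤ ‖y‖ * ‖v‖ + |c| := by
    intro y
    have h1 : |f y| ≤ ‖y‖ * ‖v‖ := abs_real_inner_le_norm y v
    rw [Real.norm_eq_abs]
    linarith [abs_nonneg c]
  have hbg : ∀ y : Ed d, ‖g y‖ ≤ ‖y‖ * ‖v‖ + |c| := by
    intro y
    have h1 : |f y| ≤ ‖y‖ * ‖v‖ := abs_real_inner_le_norm y v
    have h4 : |g y| ≤ |f y| + |c| := by
      rw [abs_of_nonneg (le_max_right _ _)]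
      refine max_le ?_ (by positivity)
      have := le_abs_self (f y)
      have := neg_abs_le c
      linarith
    rw [Real.norm_eq_abs]
    linarith
  have hbg' : ∀ y : Ed d, ‖g' y‖ ≤ ‖y‖ * ‖v‖ + |c| := by
    intro y
    have h1 : |f y| ≤ ‖y‖ * ‖v‖ := abs_real_inner_le_norm y v
    have h4 : |g' y| ≤ |f y| + |c| := by
      rw [abs_of_nonneg (le_max_right _ _)]
      refine max_le ?_ (by positivity)
      have := le_abs_self c
      have := neg_abs_le (f y)
      linarith
    rw [Real.norm_eq_abs]
    linarith
  have hIntf : ∀ ρ : Measure (Ed d), ρ ≤ P → Integrable f ρ := fun ρ hρ =>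
    (hDom.mono_measure hρ).mono' hcont.aestronglyMeasurable (Filter.Eventually.of_forall hbf)
  have hIntg : ∀ ρ : Measure (Ed d), ρ ≤ P → Integrable g ρ := fun ρ hρ =>
    (hDom.mono_measure hρ).mono' hgcont.aestronglyMeasurable (Filter.Eventually.of_forall hbg)
  have hIntg' : ∀ ρ : Measure (Ed d), ρ ≤ P → Integrable g' ρ := fun ρ hρ =>
    (hDom.mono_measure hρ).mono' hg'cont.aestronglyMeasurable (Filter.Eventually.of_forall hbg')
  have hkey : ∀ ρ : Measure (Ed d), ρ ≤ P → ρ Set.univ = ENNReal.ofReal h →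
      ∫ y, f y ∂ρ = ∫ y, g y ∂ρ - ∫ y, g' y ∂ρ + c * h := by
    intro ρ hρ hρm
    haveI : IsFiniteMeasure ρ := ⟨by rw [hρm]; exact ENNReal.ofReal_lt_top⟩
    have h1 : ∀ y : Ed d, f y = g y - g' y + c := by
      intro y
      have h2 := max_zero_sub_max_neg_zero_eq_self (f y - c)
      have h3 : g' y = max (-(f y - c)) 0 := by
        show max (c - f y) 0 = max (-(f y - c)) 0
        rw [neg_sub]
      have h4 : g y = max (f y - c) 0 := rfl
      linarith [h2]
    have h2 : ∫ y, f y ∂ρ = ∫ y, (g y - g' y + c) ∂ρ :=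
      integral_congr_ae (Filter.Eventually.of_forall h1)
    have h3 : ∫ y, (g y - g' y + c) ∂ρ = (∫ y, (g y - g' y) ∂ρ) + ∫ _y, c ∂ρ :=
      integral_add ((hIntg ρ hρ).sub (hIntg' ρ hρ)) (integrable_const c)
    have h4 : ∫ y, (g y - g' y) ∂ρ = (∫ y, g y ∂ρ) - ∫ y, g' y ∂ρ :=
      integral_sub (hIntg ρ hρ) (hIntg' ρ hρ)
    rw [h2, h3, h4, integral_const, measureReal_def, hρm, ENNReal.toReal_ofReal hh.le, smul_eq_mul]
    ring
  set Ap : Set (Ed d) := {y : Ed d | c < f y} with hAp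
  have hApM : MeasurableSet Ap := measurableSet_lt measurable_const hcont.measurable
  have hrestr : Qv.restrict Ap = P.restrict Ap := by
    ext s hs
    rw [Measure.restrict_apply hs, Measure.restrict_apply hs]
    exact hQv4 _ Set.inter_subset_right
  have hgzero : ∀ y ∉ Ap, g y = 0 := by
    intro y hy
    simp only [hAp, Set.mem_setOf_eq, not_lt] at hy
    exact max_eq_right (by linarith)
  have haux : ∀ ρ : Measure (Ed d), ρ ≤ P → ∫ y, g y ∂ρ = ∫ y in Ap, g y ∂ρ := by
    intro ρ hρ
    rw [← integral_add_compl hApM (hIntg ρ hρ)]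
    have h0 : ∫ y in Apᶜ, g y ∂ρ = 0 := by
      rw [setIntegral_congr_fun hApM.compl (fun y hy => hgzero y hy)]
      simp
    rw [h0, add_zero]
  have hgPQv : ∫ y, g y ∂P = ∫ y, g y ∂Qv := by
    rw [haux P le_rfl, haux Qv hQv]
    unfold MeasureTheory.integral
    rw [hrestr]
  have hg'Qv : ∫ y, g' y ∂Qv = 0 := by
    have hnull : Qv {y : Ed d | g' y ≠ 0} = 0 := by
      apply measure_mono_null ?_ hQv5
      intro y hy
      simp only [Set.mem_setOf_eq] at hy ⊢
      by_contra hfy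
      push_neg at hfy
      exact hy (max_eq_right (by linarith))
    have hae : ∀ᵐ y ∂Qv, g' y = 0 := by
      rw [ae_iff]
      simpa using hnull
    exact integral_eq_zero_of_ae hae
  have hgmono : ∫ y, g y ∂Q ≤ ∫ y, g y ∂P :=
    integral_mono_measure hQ (Filter.Eventually.of_forall fun y => le_max_right _ _)
      (hIntg P le_rfl)
  have hg'nonneg : 0 ≤ ∫ y, g' y ∂Q := integral_nonneg fun y => le_max_right _ _
  have heqQ := hkey Q hQ hQm
  have heqQv := hkey Qv hQv hQvm
  constructor
  · rw [heqQ, heqQv, hg'Qv]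
    linarith
  · intro heq
    rw [heqQ, heqQv, hg'Qv] at heq
    have hgeq : ∫ y, g y ∂Q = ∫ y, g y ∂P := by linarith
    have hg'eq : ∫ y, g' y ∂Q = 0 := by linarith
    haveI : IsFiniteMeasure Q := ⟨by rw [hQm]; exact ENNReal.ofReal_lt_top⟩
    set R : Measure (Ed d) := P - Q with hR
    have hRle : R ≤ P := Measure.sub_le
    have hPRQ : R + Q = P := Measure.sub_add_cancel_of_le hQ
    have hsplit : ∫ y, g y ∂P = ∫ y, g y ∂ R + ∫ y, g y ∂Q := by
      conv_lhs => rw [← hPRQ]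
      exact integral_add_measure (hIntg R hRle) (hIntg Q hQ)
    have hgR : ∫ y, g y ∂ R = 0 := by linarith
    have hRae : ∀ᵐ y ∂ R, g y = 0 :=
      (integral_eq_zero_iff_of_nonneg (fun y => le_max_right _ _) (hIntg R hRle)).mp hgR
    have hRAp : R Ap = 0 := by
      apply measure_mono_null ?_ (ae_iff.mp hRae)
      intro y hy
      simp only [hAp, Set.mem_setOf_eq] at hy ⊢
      have h1 : 0 < f y - c := sub_pos.mpr hy
      intro h2
      have h3 : g y = f y - c := max_eq_left h1.le
      rw [h3] at h2
      linarith
    constructor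
    · intro A hA
      have h1 : P A = R A + Q A := by
        conv_lhs => rw [← hPRQ]
        rfl
      have h2 : R A = 0 := measure_mono_null hA hRAp
      rw [h1, h2, zero_add]
    · have hQae : ∀ᵐ y ∂Q, g' y = 0 :=
        (integral_eq_zero_iff_of_nonneg (fun y => le_max_right _ _) (hIntg' Q hQ)).mp hg'eq
      apply measure_mono_null ?_ (ae_iff.mp hQae)
      intro y hy
      simp only [Set.mem_setOf_eq] at hy ⊢
      have h1 : 0 < c - f y := sub_pos.mpr hy
      intro h2
      have h3 : g' y = c - f y := max_eq_left h1.le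
      rw [h3] at h2
      linarith

/-- Separation of a point from a convex set in finite dimensions (weak form). -/
lemma sep_point_convex {C : Set (Ed d)} (hC : Convex ℝ C) (hne : C.Nonempty) {x : Ed d}
    (hx : x ∉ C) :
    ∃ v : Ed d, v ≠ 0 ∧ ∀ y ∈ C, (inner ℝ y v : ℝ) ≤ (inner ℝ x v : ℝ) := by
  by_cases hint : (interior C).Nonempty
  · obtain ⟨a₀, ha₀⟩ := hint
    have hxint : x ∉ interior C := fun hxi => hx (interior_subset hxi)
    obtain ⟨f, hfsep⟩ := geometric_hahn_banach_open_point hC.interior isOpen_interior hxint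
    set v : Ed d := (InnerProductSpace.toDual ℝ (Ed d)).symm f with hv
    have hfv : ∀ z : Ed d, (inner ℝ v z : ℝ) = f z := fun z =>
      InnerProductSpace.toDual_symm_apply
    have hv0 : v ≠ 0 := by
      intro h0
      have h1 := hfsep a₀ ha₀
      rw [← hfv a₀, ← hfv x, h0] at h1
      simp at h1
    refine ⟨v, hv0, fun y hy => ?_⟩
    have hyx : ∀ z : Ed d, (inner ℝ z v : ℝ) = f z := fun z =>
      (real_inner_comm v z).trans (hfv z)
    rw [hyx y, hyx x]
    have key : ∀ t : ℝ, 0 < t → t ≤ 1 → t * f a₀ + (1 - t) * f y < f x := by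
      intro t ht0 ht1
      have hz : t • a₀ + (1 - t) • y ∈ interior C :=
        hC.combo_interior_closure_mem_interior ha₀ (subset_closure hy) ht0 (by linarith)
          (by ring)
      have h1 := hfsep _ hz
      simpa [map_add, _root_.map_smul, smul_eq_mul] using h1
    by_contra hlt
    push_neg at hlt
    rcases le_or_gt (f y) (f a₀) with hcase | hcase
    · have h1 := key 1 one_pos le_rfl
      simp only [one_mul, sub_self, zero_mul, add_zero] at h1
      linarith
    · set tt : ℝ := (f y - f x) / (2 * (f y - f a₀)) with htt
      have ht0 : 0 < tt := div_pos (by linarith) (by linarith)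
      have htle : tt * (2 * (f y - f a₀)) = f y - f x :=
        div_mul_cancel₀ _ (ne_of_gt (by linarith : (0 : ℝ) < 2 * (f y - f a₀)))
      have h1 := key (min tt 1) (lt_min ht0 one_pos) (min_le_right _ _)
      have h2 : min tt 1 ≤ tt := min_le_left _ _
      nlinarith [mul_nonneg (sub_nonneg.mpr h2) (sub_pos.mpr hcase).le, h1, htle, hlt]
  · have hspan : affineSpan ℝ C ≠ ⊤ := by
      intro htop
      exact hint (hC.interior_nonempty_iff_affineSpan_eq_top.mpr htop)
    obtain ⟨a, ha⟩ := hne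
    have hdirne : (affineSpan ℝ C).direction ≠ ⊤ := by
      intro htop
      apply hspan
      rw [eq_top_iff]
      intro z _
      have hz : (z - a) +ᵥ a ∈ affineSpan ℝ C :=
        AffineSubspace.vadd_mem_of_mem_direction (htop ▸ Submodule.mem_top)
          (subset_affineSpan ℝ C ha)
      simpa using hz
    obtain ⟨v, hvmem, hv0⟩ := Submodule.exists_mem_ne_zero_of_ne_bot
      (p := ((affineSpan ℝ C).direction)ᗮ)
      (by rwa [Ne, Submodule.orthogonal_eq_bot_iff])
    have hconst : ∀ y ∈ C, (inner ℝ y v : ℝ) = (inner ℝ a v : ℝ) := by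
      intro y hy
      have hyv : y -ᵥ a ∈ (affineSpan ℝ C).direction :=
        AffineSubspace.vsub_mem_direction (subset_affineSpan ℝ C hy) (subset_affineSpan ℝ C ha)
      have h0 : (inner ℝ (y - a) v : ℝ) = 0 :=
        (Submodule.mem_orthogonal _ v).mp hvmem _ (by simpa using hyv)
      rw [inner_sub_left] at h0
      linarith
    rcases le_or_gt (inner ℝ a v : ℝ) (inner ℝ x v : ℝ) with hcase | hcase
    · exact ⟨v, hv0, fun y hy => by rw [hconst y hy]; exact hcase⟩
    · refine ⟨-v, neg_ne_zero.mpr hv0, fun y hy => ?_⟩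
      rw [inner_neg_right, inner_neg_right, hconst y hy]
      linarith

/-- The mean of any normalized sub-measure of mass `h` is in the convex hull of `Mset P h`. -/
lemma mean_mem_convexHull (P : Measure (Ed d)) [IsProbabilityMeasure P]
    (hP2 : ∫⁻ u, ENNReal.ofReal (‖u‖ ^ 2) ∂P < ⊤) {h : ℝ} (hh : 0 < h) (hh1 : h < 1)
    (Q : Measure (Ed d)) (hQ : Q ≤ P) (hQm : Q Set.univ = ENNReal.ofReal h) :
    mMean ((ENNReal.ofReal h)⁻¹ • Q) ∈ convexHull ℝ (Mset P h) := by
  rcases subsingleton_or_nontrivial (Ed d) with hsub | hnt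
  · apply subset_convexHull ℝ (Mset P h)
    have hrad : dtmRadius P h (0 : Ed d) = 0 := by
      unfold dtmRadius
      have he : {r : ℝ | 0 < r ∧ ENNReal.ofReal h < P (closedBall (0 : Ed d) r)} =
          Set.Ioi (0 : ℝ) := by
        ext r
        simp only [Set.mem_setOf_eq, Set.mem_Ioi]
        constructor
        · exact fun hr => hr.1
        · intro hr
          refine ⟨hr, ?_⟩
          have hcb : closedBall (0 : Ed d) r = Set.univ :=
            Set.eq_univ_iff_forall.mpr fun z => by
              rw [Subsingleton.elim z (0 : Ed d)]
              exact mem_closedBall_self hr.le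
          rw [hcb, measure_univ]
          exact ENNReal.ofReal_lt_one.mpr hh1
      rw [he, csInf_Ioi]
    have hmem : mMean ((ENNReal.ofReal h)⁻¹ • Q) ∈ Mset P h := by
      refine Or.inl ⟨0, (ENNReal.ofReal h)⁻¹ • Q, ⟨Q, rfl, hQ, hQm, ?_, ?_⟩, rfl⟩
      · intro A hA
        rw [hrad, Metric.ball_zero, Set.subset_empty_iff] at hA
        rw [hA]
        simp
      · rw [hrad, Metric.closedBall_zero]
        have hcompl : ({(0 : Ed d)} : Set (Ed d))ᶜ = (∅ : Set (Ed d)) := by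
          ext z
          simp [Subsingleton.elim z (0 : Ed d)]
        rw [hcompl]
        simp
    exact hmem
  · by_contra hm
    have hMne : (Mset P h).Nonempty := by
      obtain ⟨u₀, hu₀⟩ := exists_norm_eq (Ed d) (zero_le_one (α := ℝ))
      obtain ⟨Qv, hQv1, hQv2, hQv3, hQv4⟩ := exists_halfspace_measure P hh hh1 u₀
      exact ⟨mMean ((ENNReal.ofReal h)⁻¹ • Qv),
        Or.inr ⟨u₀, hu₀, (ENNReal.ofReal h)⁻¹ • Qv, ⟨Qv, rfl, hQv1, hQv2, hQv3, hQv4⟩, rfl⟩⟩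
    have hCconv : Convex ℝ (convexHull ℝ (Mset P h)) := convex_convexHull ℝ _
    have hCne : (convexHull ℝ (Mset P h)).Nonempty := hMne.mono (subset_convexHull ℝ _)
    obtain ⟨v, hv0, hsep⟩ := sep_point_convex hCconv hCne hm
    have hvnorm : ‖v‖ ≠ 0 := norm_ne_zero_iff.mpr hv0
    set u : Ed d := ‖v‖⁻¹ • v with hu
    have hunorm : ‖u‖ = 1 := by
      rw [hu, norm_smul, norm_inv, norm_norm, inv_mul_cancel₀ hvnorm]
    obtain ⟨Qv, hQv1, hQv2, hQv3, hQv4⟩ := exists_halfspace_measure P hh hh1 u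
    have hνMset : mMean ((ENNReal.ofReal h)⁻¹ • Qv) ∈ Mset P h :=
      Or.inr ⟨u, hunorm, (ENNReal.ofReal h)⁻¹ • Qv, ⟨Qv, rfl, hQv1, hQv2, hQv3, hQv4⟩, rfl⟩
    have hIntIdP : Integrable (fun y : Ed d => y) P := integrable_id_aux P hP2
    have hmean : ∀ ρ : Measure (Ed d), ρ ≤ P →
        (inner ℝ (mMean ((ENNReal.ofReal h)⁻¹ • ρ)) u : ℝ) =
          h⁻¹ * ∫ y, (inner ℝ y u : ℝ) ∂ρ := by
      intro ρ hρ
      have hIntρ : Integrable (fun y : Ed d => y) ρ := hIntIdP.mono_measure hρ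
      have h1 : mMean ((ENNReal.ofReal h)⁻¹ • ρ) =
          ((ENNReal.ofReal h)⁻¹).toReal • ∫ y, y ∂ρ := by
        unfold mMean
        exact integral_smul_measure _ _
      rw [h1, real_inner_smul_left]
      congr 1
      · rw [ENNReal.toReal_inv, ENNReal.toReal_ofReal hh.le]
      · have h2 := integral_inner (𝕜 := ℝ) hIntρ u
        calc (inner ℝ (∫ y, y ∂ρ) u : ℝ) = (inner ℝ u (∫ y, y ∂ρ) : ℝ) :=
              real_inner_comm u (∫ y, y ∂ρ)
          _ = ∫ y, (inner ℝ u y : ℝ) ∂ρ := h2.symm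
          _ = ∫ y, (inner ℝ y u : ℝ) ∂ρ :=
              integral_congr_ae (Filter.Eventually.of_forall fun y => (real_inner_comm u y).symm)
    have hineq := integral_inner_le_halfspace P hP2 hh u Q Qv hQ hQm hQv1 hQv2 hQv3 hQv4
    have hsep' : (inner ℝ (mMean ((ENNReal.ofReal h)⁻¹ • Qv)) v : ℝ) ≤
        (inner ℝ (mMean ((ENNReal.ofReal h)⁻¹ • Q)) v : ℝ) :=
      hsep _ (subset_convexHull ℝ _ hνMset)
    have hsepu : (inner ℝ (mMean ((ENNReal.ofReal h)⁻¹ • Qv)) u : ℝ) ≤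
        (inner ℝ (mMean ((ENNReal.ofReal h)⁻¹ • Q)) u : ℝ) := by
      rw [hu, real_inner_smul_right, real_inner_smul_right]
      exact mul_le_mul_of_nonneg_left hsep' (inv_nonneg.mpr (norm_nonneg v))
    rw [hmean Q hQ, hmean Qv hQv1] at hsepu
    have heq : ∫ y, (inner ℝ y u : ℝ) ∂Q = ∫ y, (inner ℝ y u : ℝ) ∂Qv := by
      have hinv : (0 : ℝ) < h⁻¹ := inv_pos.mpr hh
      exact le_antisymm hineq.1 (le_of_mul_le_mul_left hsepu hinv)
    obtain ⟨hc4, hc5⟩ := hineq.2 heq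
    exact hm (subset_convexHull ℝ _
      (Or.inr ⟨u, hunorm, (ENNReal.ofReal h)⁻¹ • Q, ⟨Q, rfl, hQ, hQm, hc4, hc5⟩, rfl⟩))

end Aux

/-- monotonicity of the convex hulls of the local means sets. -/
theorem stmt_3 {d : ℕ} (P : Measure (Ed d)) [IsProbabilityMeasure P]
    (hP2 : ∫⁻ u, ENNReal.ofReal (‖u‖ ^ 2) ∂P < ⊤)
    (h h' : ℝ) (hh : 0 < h) (hhh' : h < h') (hh'1 : h' ≤ 1) :
    convexHull ℝ (Mset P h') ⊆ convexHull ℝ (Mset P h) := by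
  have hh1 : h < 1 := lt_of_lt_of_le hhh' hh'1
  have hh'0 : 0 < h' := hh.trans hhh'
  refine convexHull_min ?_ (convex_convexHull ℝ _)
  intro m hm
  obtain ⟨Q', hQ'le, hQ'm, hmeq⟩ : ∃ Q' : Measure (Ed d), Q' ≤ P ∧
      Q' Set.univ = ENNReal.ofReal h' ∧ m = mMean ((ENNReal.ofReal h')⁻¹ • Q') := by
    rcases hm with ⟨x, μ, ⟨Q', hQeq, hle, hm', _, _⟩, rfl⟩ |
      ⟨v, _, μ, ⟨Q', hQeq, hle, hm', _, _⟩, rfl⟩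
    · exact ⟨Q', hle, hm', by rw [hQeq]⟩
    · exact ⟨Q', hle, hm', by rw [hQeq]⟩
  have hfrac1 : ENNReal.ofReal (h / h') ≤ 1 := by
    rw [ENNReal.ofReal_le_one]
    exact (div_le_one hh'0).mpr hhh'.le
  set Q : Measure (Ed d) := ENNReal.ofReal (h / h') • Q' with hQdef
  have hQle : Q ≤ P := by
    refine le_trans ?_ hQ'le
    rw [Measure.le_iff]
    intro s hs
    rw [hQdef, Measure.smul_apply, smul_eq_mul]
    calc ENNReal.ofReal (h / h') * Q' s ≤ 1 * Q' s := by gcongr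
      _ = Q' s := one_mul _
  have hQm : Q Set.univ = ENNReal.ofReal h := by
    rw [hQdef, Measure.smul_apply, smul_eq_mul, hQ'm,
      ← ENNReal.ofReal_mul (by positivity), div_mul_cancel₀ h (ne_of_gt hh'0)]
  have hμeq : (ENNReal.ofReal h)⁻¹ • Q = (ENNReal.ofReal h')⁻¹ • Q' := by
    rw [hQdef, smul_smul]
    congr 1
    rw [ENNReal.ofReal_div_of_pos hh'0, div_eq_mul_inv, ← mul_assoc,
      ENNReal.inv_mul_cancel (ne_of_gt (ENNReal.ofReal_pos.mpr hh)) ENNReal.ofReal_ne_top,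
      one_mul]
  have hmem := mean_mem_convexHull P hP2 hh hh1 Q hQle hQm
  rwa [hμeq, ← hmeq] at hmem
end

section
/- Let x₁,…,x_n be n points of ℝ^d in general position, meaning that every subset of them of cardinality at most d+1 is affinely independent. Let P_n := (1/n)∑_{i=1}^n δ_{x_i} be the uniform measure on these points, let q ∈ {1,…,n} and h := q/n. Then the set M_h(P_n) is a convex subset of ℝ^d. -/
open MeasureTheory ENNReal Set Metric

section Farkas
set_option linter.unusedSectionVars false

variable {F : Type*} [NormedAddCommGroup F] [NormedSpace ℝ F] [FiniteDimensional ℝ F]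
variable {ι : Type*} [Fintype ι]

def coneSet (v : ι → F) (s : Finset ι) : Set F :=
  {y | ∃ l : ι → ℝ, (∀ k, 0 ≤ l k) ∧ (∀ k ∉ s, l k = 0) ∧ y = ∑ k, l k • v k}

theorem caratheodory_cone (v : ι → F) (s : Finset ι) :
    ∀ y ∈ coneSet v s,
      ∃ t : Finset ι, LinearIndependent ℝ (fun k : t => v (k : ι)) ∧ y ∈ coneSet v t := by
  classical
  induction s using Finset.strongInductionOn with
  | _ s ih =>
    intro y hy
    by_cases hli : LinearIndependent ℝ (fun k : s => v (k : ι))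
    · exact ⟨s, hli, hy⟩
    · obtain ⟨l, hl0, hls, hly⟩ := hy
      obtain ⟨g, hg0, i, hgi⟩ := Fintype.not_linearIndependent_iff.mp hli
      set μ0 : ι → ℝ := fun k => if hk : k ∈ s then g ⟨k, hk⟩ else 0 with hμ0
      have hμ0supp : ∀ k ∉ s, μ0 k = 0 := fun k hk => dif_neg hk
      have hμ0sum : ∑ k, μ0 k • v k = 0 := by
        rw [← Finset.sum_subset s.subset_univ (fun k _ hk => by
          rw [hμ0supp k hk, zero_smul])]
        rw [← Finset.sum_attach s (fun k => μ0 k • v k)]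
        simpa [hμ0] using hg0
      have hμ0i : μ0 (i : ι) ≠ 0 := by simpa [hμ0] using hgi
      -- get a relation with a positive coefficient
      obtain ⟨μ, hμsum, hμsupp, kpos, hkpos⟩ :
          ∃ μ : ι → ℝ, (∑ k, μ k • v k = 0) ∧ (∀ k ∉ s, μ k = 0) ∧ ∃ k, 0 < μ k := by
        rcases lt_or_gt_of_ne hμ0i with hneg | hpos
        · exact ⟨-μ0, by simpa using congrArg Neg.neg hμ0sum,
            fun k hk => by simp [hμ0supp k hk], ⟨i, by simpa using hneg⟩⟩
        · exact ⟨μ0, hμ0sum, hμ0supp, ⟨i, hpos⟩⟩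
      set T : Finset ι := Finset.univ.filter (fun k => 0 < μ k) with hT
      have hTne : T.Nonempty := ⟨kpos, by simp [hT, hkpos]⟩
      have hTs : ∀ k ∈ T, k ∈ s := by
        intro k hk
        by_contra hks
        simp only [hT, Finset.mem_filter] at hk
        exact absurd (hμsupp k hks) (by linarith [hk.2])
      obtain ⟨i0, hi0T, hmin⟩ := T.exists_min_image (fun k => l k / μ k) hTne
      have hμi0 : 0 < μ i0 := by simpa [hT] using (Finset.mem_filter.mp hi0T).2
      set τ : ℝ := l i0 / μ i0 with hτ
      have hτ0 : 0 ≤ τ := div_nonneg (hl0 i0) hμi0.le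
      set l' : ι → ℝ := fun k => l k - τ * μ k with hl'
      have hl'0 : ∀ k, 0 ≤ l' k := by
        intro k
        by_cases hk : 0 < μ k
        · have hkT : k ∈ T := by simp [hT, hk]
          have := hmin k hkT
          have : τ * μ k ≤ l k := by
            rw [hτ]
            calc l i0 / μ i0 * μ k ≤ l k / μ k * μ k := by
                  apply mul_le_mul_of_nonneg_right (this) hk.le
            _ = l k := by field_simp
          simpa [hl'] using this
        · push_neg at hk
          have : τ * μ k ≤ 0 := mul_nonpos_of_nonneg_of_nonpos hτ0 hk
          have := hl0 k
          simp only [hl']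
          linarith
      have hl'i0 : l' i0 = 0 := by
        simp only [hl', hτ]
        field_simp
        ring
      have hl'supp : ∀ k ∉ s.erase i0, l' k = 0 := by
        intro k hk
        by_cases hki : k = i0
        · rw [hki]; exact hl'i0
        · have hks : k ∉ s := by
            intro hks
            exact hk (Finset.mem_erase.mpr ⟨hki, hks⟩)
          simp only [hl', hls k hks, hμsupp k hks, mul_zero, sub_zero]
      have hl'sum : y = ∑ k, l' k • v k := by
        simp only [hl', sub_smul, mul_smul, Finset.sum_sub_distrib]
        rw [← Finset.smul_sum, hμsum, smul_zero, sub_zero, hly]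
      exact ih (s.erase i0) (Finset.erase_ssubset (hTs i0 hi0T)) y ⟨l', hl'0, hl'supp, hl'sum⟩

theorem coneSet_closed (v : ι → F) (t : Finset ι)
    (hli : LinearIndependent ℝ (fun k : t => v (k : ι))) : IsClosed (coneSet v t) := by
  classical
  let L : (t → ℝ) →ₗ[ℝ] F :=
    { toFun := fun c => ∑ k, c k • v (k : ι)
      map_add' := by intro a b; simp [add_smul, Finset.sum_add_distrib]
      map_smul' := by intro r a; simp [mul_smul, Finset.smul_sum] }
  have hker : LinearMap.ker L = ⊥ := by
    rw [LinearMap.ker_eq_bot']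
    intro c hc
    have hc' : ∑ k, c k • v (k : ι) = 0 := hc
    funext k
    exact Fintype.linearIndependent_iff.mp hli c hc' k
  have hemb := LinearMap.isClosedEmbedding_of_injective (𝕜 := ℝ) (f := L) hker
  have hclosed : IsClosed {c : t → ℝ | ∀ k, 0 ≤ c k} := by
    have : {c : t → ℝ | ∀ k, 0 ≤ c k} = ⋂ k, {c | 0 ≤ c k} := by
      ext c; simp [Set.mem_iInter]
    rw [this]
    exact isClosed_iInter fun k => isClosed_le continuous_const (continuous_apply k)
  have himg : coneSet v t = L '' {c : t → ℝ | ∀ k, 0 ≤ c k} := by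
    ext y
    constructor
    · rintro ⟨l, hl0, hls, rfl⟩
      refine ⟨fun k => l (k : ι), fun k => hl0 _, ?_⟩
      show ∑ k : t, l (k : ι) • v (k : ι) = ∑ k : ι, l k • v k
      rw [← Finset.sum_subset t.subset_univ (fun k _ hk => by rw [hls k hk, zero_smul]),
        ← Finset.sum_attach t (fun k => l k • v k), Finset.univ_eq_attach]
    · rintro ⟨c, hc0, rfl⟩
      refine ⟨fun k => if hk : k ∈ t then c ⟨k, hk⟩ else 0, fun k => by
        by_cases hk : k ∈ t
        · simpa [hk] using hc0 ⟨k, hk⟩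
        · simp [hk], fun k hk => dif_neg hk, ?_⟩
      show _ = ∑ k : ι, (if hk : k ∈ t then c ⟨k, hk⟩ else 0) • v k
      rw [← Finset.sum_subset t.subset_univ (fun k _ hk => by rw [dif_neg hk, zero_smul]),
        ← Finset.sum_attach t (fun k => (if hk : k ∈ t then c ⟨k, hk⟩ else 0) • v k)]
      show ∑ k : t, c k • v (k : ι) = _
      exact Finset.sum_congr rfl fun k _ => by rw [dif_pos k.2]
  rw [himg]
  exact (hemb.isClosedMap) _ hclosed

theorem isClosed_cone (v : ι → F) :
    IsClosed {y : F | ∃ l : ι → ℝ, (∀ k, 0 ≤ l k) ∧ y = ∑ k, l k • v k} := by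
  classical
  have heq : {y : F | ∃ l : ι → ℝ, (∀ k, 0 ≤ l k) ∧ y = ∑ k, l k • v k} =
      ⋃ t : {t : Finset ι // LinearIndependent ℝ (fun k : t => v (k : ι))},
        coneSet v t.1 := by
    ext y
    constructor
    · rintro ⟨l, hl0, rfl⟩
      obtain ⟨t, hli, hyt⟩ := caratheodory_cone v Finset.univ _
        ⟨l, hl0, fun k hk => absurd (Finset.mem_univ k) hk, rfl⟩
      exact Set.mem_iUnion.mpr ⟨⟨t, hli⟩, hyt⟩
    · intro hy
      obtain ⟨t, l, hl0, _, rfl⟩ := Set.mem_iUnion.mp hy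
      exact ⟨l, hl0, rfl⟩
  rw [heq]
  exact isClosed_iUnion_of_finite fun t => coneSet_closed v t.1 t.2

theorem farkas {d : ℕ} (u : ι → EuclideanSpace ℝ (Fin d)) (z : ι → ℝ)
    (H : ∀ l : ι → ℝ, (∀ k, 0 ≤ l k) → ∑ k, l k • u k = 0 → 0 ≤ ∑ k, l k * z k) :
    ∃ a : EuclideanSpace ℝ (Fin d), ∀ k, (inner ℝ a (u k) : ℝ) ≤ z k := by
  classical
  set g : Option ι → (EuclideanSpace ℝ (Fin d) × ℝ) := fun o => o.elim ((0 : EuclideanSpace ℝ (Fin d)), (1 : ℝ))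
    (fun k => (u k, z k)) with hg
  set C : Set (EuclideanSpace ℝ (Fin d) × ℝ) := {y | ∃ l : Option ι → ℝ, (∀ k, 0 ≤ l k) ∧ y = ∑ k, l k • g k} with hC
  have hCclosed : IsClosed C := isClosed_cone g
  have hCconv : Convex ℝ C := by
    rintro y1 ⟨l1, h1, rfl⟩ y2 ⟨l2, h2, rfl⟩ a b ha hb hab
    refine ⟨fun k => a * l1 k + b * l2 k,
      fun k => add_nonneg (mul_nonneg ha (h1 k)) (mul_nonneg hb (h2 k)), ?_⟩
    simp [add_smul, mul_smul, Finset.sum_add_distrib, Finset.smul_sum]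
  have hCscale : ∀ c : ℝ, 0 ≤ c → ∀ y ∈ C, c • y ∈ C := by
    rintro c hc y ⟨l, hl0, rfl⟩
    refine ⟨fun k => c * l k, fun k => mul_nonneg hc (hl0 k), ?_⟩
    simp [mul_smul, Finset.smul_sum]
  have hgen : ∀ o : Option ι, g o ∈ C := by
    intro o
    refine ⟨fun k => if k = o then 1 else 0, fun k => by by_cases hko : k = o <;> simp [hko], ?_⟩
    simp
  have hzero : (0 : EuclideanSpace ℝ (Fin d) × ℝ) ∈ C := ⟨0, fun k => le_rfl, by simp⟩
  have hnotmem : ((0 : EuclideanSpace ℝ (Fin d)), (-1 : ℝ)) ∉ C := by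
    rintro ⟨l, hl0, hl⟩
    have h1 := congrArg Prod.fst hl
    have h2 := congrArg Prod.snd hl
    simp only [Prod.fst_sum, Prod.snd_sum, Fintype.sum_option, hg, Option.elim,
      Prod.smul_mk, smul_zero, smul_eq_mul, mul_one, zero_add, Prod.fst_add, Prod.snd_add,
      Prod.fst, Prod.snd] at h1 h2
    have hH := H (fun k => l (some k)) (fun k => hl0 _) h1.symm
    nlinarith [hl0 none]
  obtain ⟨f, t, hft, htx⟩ := geometric_hahn_banach_closed_point hCconv hCclosed hnotmem
  have ht0 : 0 < t := by simpa using hft 0 hzero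
  have hfC : ∀ y ∈ C, f y ≤ 0 := by
    intro y hy
    by_contra hpos
    push_neg at hpos
    have hsc := hft _ (hCscale ((t + 1) / f y) (div_nonneg (by linarith) hpos.le) y hy)
    rw [_root_.map_smul, smul_eq_mul, div_mul_cancel₀ _ (ne_of_gt hpos)] at hsc
    linarith
  have hf01 : f ((0 : EuclideanSpace ℝ (Fin d)), (1 : ℝ)) < -t := by
    have : ((0 : EuclideanSpace ℝ (Fin d)), (-1 : ℝ)) =
        -(((0 : EuclideanSpace ℝ (Fin d)), (1 : ℝ)) : EuclideanSpace ℝ (Fin d) × ℝ) := by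
      simp [Prod.ext_iff]
    rw [this, _root_.map_neg] at htx
    linarith
  set β : ℝ := -f ((0 : EuclideanSpace ℝ (Fin d)), (1 : ℝ)) with hβ
  have hβpos : 0 < β := by simp only [hβ]; linarith
  have hkey : ∀ k, f ((u k, (0:ℝ)) : EuclideanSpace ℝ (Fin d) × ℝ) ≤ z k * β := by
    intro k
    have h1 : f ((u k, z k) : EuclideanSpace ℝ (Fin d) × ℝ) ≤ 0 := hfC _ (hgen (some k))
    have hdec : ((u k, z k) : EuclideanSpace ℝ (Fin d) × ℝ) = ((u k, (0:ℝ)) : EuclideanSpace ℝ (Fin d) × ℝ) + z k • (((0 : EuclideanSpace ℝ (Fin d)), (1:ℝ)) : EuclideanSpace ℝ (Fin d) × ℝ) := by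
      simp [Prod.ext_iff]
    rw [hdec, map_add, _root_.map_smul, smul_eq_mul] at h1
    have : z k * f ((0 : EuclideanSpace ℝ (Fin d)), (1:ℝ)) = -(z k * β) := by
      rw [hβ]; ring
    nlinarith [h1]
  set φ : EuclideanSpace ℝ (Fin d) →L[ℝ] ℝ :=
    β⁻¹ • (f.comp (ContinuousLinearMap.inl ℝ (EuclideanSpace ℝ (Fin d)) ℝ)) with hφ
  refine ⟨(InnerProductSpace.toDual ℝ (EuclideanSpace ℝ (Fin d))).symm φ, fun k => ?_⟩
  have : (inner ℝ ((InnerProductSpace.toDual ℝ (EuclideanSpace ℝ (Fin d))).symm φ) (u k) : ℝ)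
      = φ (u k) := by
    rw [← InnerProductSpace.toDual_apply_apply]
    simp
  rw [this]
  have : φ (u k) = β⁻¹ * f ((u k, (0:ℝ)) : EuclideanSpace ℝ (Fin d) × ℝ) := by
    rw [hφ, ContinuousLinearMap.smul_apply, ContinuousLinearMap.comp_apply,
      ContinuousLinearMap.inl_apply, smul_eq_mul]
  rw [this]
  calc β⁻¹ * f ((u k, (0:ℝ)) : EuclideanSpace ℝ (Fin d) × ℝ) ≤ β⁻¹ * (z k * β) := by
        apply mul_le_mul_of_nonneg_left (hkey k) (by positivity)
  _ = z k := by field_simp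

end Farkas
section MeasAux
open MeasureTheory ENNReal Set Metric

variable {d n : ℕ}

theorem uP_apply (x : Fin n → Ed d) (A : Set (Ed d)) [DecidablePred fun i => x i ∈ A] :
    ((n : ℝ≥0∞)⁻¹ • ∑ i, Measure.dirac (x i)) A
      = ((Finset.univ.filter fun i => x i ∈ A).card : ℝ≥0∞) * (n : ℝ≥0∞)⁻¹ := by
  rw [Measure.smul_apply, Measure.finset_sum_apply, smul_eq_mul, mul_comm]
  congr 1
  rw [Finset.card_filter]
  push_cast
  refine Finset.sum_congr rfl fun i _ => ?_
  rw [Measure.dirac_apply, Set.indicator_apply]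
  split <;> simp

theorem ofReal_div_nat (hn : 0 < n) (q : ℕ) :
    ENNReal.ofReal ((q : ℝ) / n) = (q : ℝ≥0∞) * (n : ℝ≥0∞)⁻¹ := by
  rw [ENNReal.ofReal_div_of_pos (by exact_mod_cast hn), ENNReal.ofReal_natCast,
    ENNReal.ofReal_natCast, div_eq_mul_inv]

theorem uP_lt_iff (hn : 0 < n) (x : Fin n → Ed d) (q : ℕ) (A : Set (Ed d))
    [DecidablePred fun i => x i ∈ A] :
    ENNReal.ofReal ((q : ℝ) / n) < ((n : ℝ≥0∞)⁻¹ • ∑ i, Measure.dirac (x i)) A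
      ↔ q < (Finset.univ.filter fun i => x i ∈ A).card := by
  rw [uP_apply, ofReal_div_nat hn q,
    ENNReal.mul_lt_mul_iff_left (ENNReal.inv_ne_zero.mpr (ENNReal.natCast_ne_top n))
      (ENNReal.inv_ne_top.mpr (by exact_mod_cast hn.ne'))]
  exact_mod_cast Iff.rfl

end MeasAux
section MeasAux2
open MeasureTheory ENNReal Set Metric

variable {d n : ℕ}

theorem dtmRadius_nonneg (P : Measure (Ed d)) (l : ℝ) (p : Ed d) :
    0 ≤ dtmRadius P l p :=
  Real.sInf_nonneg fun _ hr => hr.1.le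

/-- Below the radius, at most `q` points in the closed ball. -/
theorem count_le_of_lt_dtmRadius (hn : 0 < n) {x : Fin n → Ed d}
    (hinj : Function.Injective x) {q : ℕ} (hq1 : 1 ≤ q) (p : Ed d) {r : ℝ}
    (hr : r < dtmRadius ((n : ℝ≥0∞)⁻¹ • ∑ i, Measure.dirac (x i)) ((q : ℝ) / n) p)
    [DecidablePred fun i => x i ∈ closedBall p r] :
    (Finset.univ.filter fun i => x i ∈ closedBall p r).card ≤ q := by
  by_contra hcard
  push_neg at hcard
  have hr0 : 0 < r := by
    rcases lt_trichotomy r 0 with h | h | h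
    · have hz : (Finset.univ.filter fun i => x i ∈ closedBall p r).card = 0 := by
        rw [Finset.card_eq_zero, Finset.filter_eq_empty_iff]
        intro i _
        simp only [mem_closedBall]
        intro hc
        have : (0:ℝ) ≤ dist (x i) p := dist_nonneg
        linarith
      omega
    · subst h
      have hle : (Finset.univ.filter fun i => x i ∈ closedBall p 0).card ≤ 1 := by
        refine Finset.card_le_one.mpr fun i hi j hj => ?_
        simp only [Finset.mem_filter, mem_closedBall, dist_le_zero] at hi hj
        exact hinj (hi.2.trans hj.2.symm)
      omega
    · exact h
  have hmem : r ∈ {r : ℝ | 0 < r ∧ ENNReal.ofReal ((q : ℝ) / n)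
      < ((n : ℝ≥0∞)⁻¹ • ∑ i, Measure.dirac (x i)) (closedBall p r)} :=
    ⟨hr0, (uP_lt_iff hn x q _).mpr hcard⟩
  have := csInf_le ⟨0, fun y hy => hy.1.le⟩ hmem
  rw [dtmRadius] at hr
  linarith

/-- Above the radius (when `q < n`), more than `q` points in the closed ball. -/
theorem count_gt_of_dtmRadius_lt (hn : 0 < n) {x : Fin n → Ed d}
    {q : ℕ} (hqn : q < n) (p : Ed d) {r : ℝ}
    (hr : dtmRadius ((n : ℝ≥0∞)⁻¹ • ∑ i, Measure.dirac (x i)) ((q : ℝ) / n) p < r)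
    [DecidablePred fun i => x i ∈ closedBall p r] :
    q < (Finset.univ.filter fun i => x i ∈ closedBall p r).card := by
  classical
  set S := {r : ℝ | 0 < r ∧ ENNReal.ofReal ((q : ℝ) / n)
      < ((n : ℝ≥0∞)⁻¹ • ∑ i, Measure.dirac (x i)) (closedBall p r)} with hS
  have hSne : S.Nonempty := by
    refine ⟨1 + ∑ i, dist (x i) p, by positivity, ?_⟩
    rw [uP_lt_iff hn x q _]
    have : (Finset.univ.filter fun i => x i ∈ closedBall p (1 + ∑ i, dist (x i) p))
        = Finset.univ := by
      refine Finset.filter_true_of_mem fun i _ => ?_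
      rw [mem_closedBall]
      have h1 : dist (x i) p ≤ ∑ j, dist (x j) p :=
        Finset.single_le_sum (fun j _ => dist_nonneg) (Finset.mem_univ i)
      linarith
    rw [this, Finset.card_univ, Fintype.card_fin]
    exact hqn
  rw [dtmRadius] at hr
  obtain ⟨s, hsS, hsr⟩ := exists_lt_of_csInf_lt hSne hr
  have hcount : q < (Finset.univ.filter fun i => x i ∈ closedBall p s).card :=
    (uP_lt_iff hn x q _).mp hsS.2
  refine lt_of_lt_of_le hcount (Finset.card_le_card ?_)
  refine Finset.monotone_filter_right _ fun i _ hi => ?_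
  exact closedBall_subset_closedBall hsr.le hi

theorem integral_dirac_sum (x : Fin n → Ed d) (c : Fin n → ℝ≥0∞) (hc : ∀ i, c i ≠ ∞) :
    ∫ u, u ∂(∑ i, c i • Measure.dirac (x i)) = ∑ i, (c i).toReal • x i := by
  have hintg : ∀ i : Fin n, Integrable (fun u : Ed d => u) (c i • Measure.dirac (x i)) := by
    intro i
    refine Integrable.smul_measure ?_ (hc i)
    exact (integrable_const (x i)).congr (ae_eq_dirac (fun u : Ed d => u)).symm
  rw [MeasureTheory.integral_finset_sum_measure (fun i _ => hintg i)]
  refine Finset.sum_congr rfl fun i _ => ?_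
  rw [integral_smul_measure, integral_dirac]

end MeasAux2
section MeasAux3
open MeasureTheory ENNReal Set Metric

variable {d n : ℕ}

theorem ofReal_one_div_nat (hn : 0 < n) :
    ENNReal.ofReal ((1:ℝ) / n) = (n : ℝ≥0∞)⁻¹ := by
  rw [one_div, ENNReal.ofReal_inv_of_pos (by exact_mod_cast hn), ENNReal.ofReal_natCast]

theorem realize_mem_Mset (hn : 0 < n) (x : Fin n → Ed d) (q : ℕ) (hq1 : 1 ≤ q)
    (p : Ed d) (w : Fin n → ℝ) (hw0 : ∀ i, 0 ≤ w i) (hw1 : ∀ i, w i ≤ 1)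
    (hsum : ∑ i, w i = q)
    (hin : ∀ i, dist (x i) p
      < dtmRadius ((n : ℝ≥0∞)⁻¹ • ∑ i, Measure.dirac (x i)) ((q:ℝ)/n) p → w i = 1)
    (hout : ∀ i, 0 < w i → dist (x i) p
      ≤ dtmRadius ((n : ℝ≥0∞)⁻¹ • ∑ i, Measure.dirac (x i)) ((q:ℝ)/n) p) :
    (q:ℝ)⁻¹ • ∑ i, w i • x i
      ∈ Mset ((n : ℝ≥0∞)⁻¹ • ∑ i, Measure.dirac (x i)) ((q:ℝ)/n) := by
  classical
  set P : Measure (Ed d) := (n : ℝ≥0∞)⁻¹ • ∑ i, Measure.dirac (x i) with hP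
  set δ := dtmRadius P ((q:ℝ)/n) p with hδ
  set Q : Measure (Ed d) := ∑ i, (ENNReal.ofReal (w i / n)) • Measure.dirac (x i) with hQ
  have hQapp : ∀ A : Set (Ed d), Q A = ∑ i, ENNReal.ofReal (w i / n) * A.indicator 1 (x i) := by
    intro A
    rw [hQ, Measure.finset_sum_apply]
    exact Finset.sum_congr rfl fun i _ =>
      by rw [Measure.smul_apply, smul_eq_mul, Measure.dirac_apply]
  have hPapp : ∀ A : Set (Ed d), P A = ∑ i, (n : ℝ≥0∞)⁻¹ * A.indicator 1 (x i) := by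
    intro A
    rw [hP, Measure.smul_apply, Measure.finset_sum_apply, smul_eq_mul, Finset.mul_sum]
    exact Finset.sum_congr rfl fun i _ => by rw [Measure.dirac_apply]
  have hterm : ∀ i, ENNReal.ofReal (w i / n) ≤ (n : ℝ≥0∞)⁻¹ := by
    intro i
    rw [← ofReal_one_div_nat hn]
    refine ENNReal.ofReal_le_ofReal ?_
    gcongr
    exact hw1 i
  have hQle : Q ≤ P := by
    refine Measure.le_iff.mpr fun A hA => ?_
    rw [hQapp, hPapp]
    exact Finset.sum_le_sum fun i _ => mul_le_mul_left (hterm i) _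
  have hQuniv : Q Set.univ = ENNReal.ofReal ((q:ℝ)/n) := by
    rw [hQapp]
    simp only [Set.indicator_univ, Pi.one_apply, mul_one]
    rw [← ENNReal.ofReal_sum_of_nonneg (fun i _ => div_nonneg (hw0 i) (by positivity)),
      ← Finset.sum_div, hsum]
  have hball : ∀ A : Set (Ed d), A ⊆ ball p δ → Q A = P A := by
    intro A hA
    rw [hQapp, hPapp]
    refine Finset.sum_congr rfl fun i _ => ?_
    by_cases hi : x i ∈ A
    · have h1 : w i = 1 := hin i (by
        have := hA hi
        rw [mem_ball] at this
        exact this)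
      rw [h1, ofReal_one_div_nat hn]
    · rw [Set.indicator_of_notMem hi, mul_zero, mul_zero]
  have hcompl : Q ((closedBall p δ)ᶜ) = 0 := by
    rw [hQapp]
    refine Finset.sum_eq_zero fun i _ => ?_
    by_cases hi : x i ∈ (closedBall p δ)ᶜ
    · have hwi : w i = 0 := by
        by_contra hne
        have := hout i (lt_of_le_of_ne (hw0 i) (Ne.symm hne))
        exact hi (by simpa [mem_closedBall] using this)
      rw [hwi]
      simp
    · rw [Set.indicator_of_notMem hi, mul_zero]
  have hq0 : (0:ℝ) < q := by exact_mod_cast hq1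
  have hn0 : (0:ℝ) < n := by exact_mod_cast hn
  have hint : ∫ u, u ∂Q = ∑ i, (w i / n) • x i := by
    rw [hQ, integral_dirac_sum x _ (fun i => ENNReal.ofReal_ne_top)]
    exact Finset.sum_congr rfl fun i _ => by
      rw [ENNReal.toReal_ofReal (div_nonneg (hw0 i) (by positivity))]
  have hmean : mMean ((ENNReal.ofReal ((q:ℝ)/n))⁻¹ • Q) = (q:ℝ)⁻¹ • ∑ i, w i • x i := by
    show (∫ u, u ∂((ENNReal.ofReal ((q:ℝ)/n))⁻¹ • Q)) = _
    rw [integral_smul_measure, hint, ENNReal.toReal_inv,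
      ENNReal.toReal_ofReal (by positivity), Finset.smul_sum, Finset.smul_sum]
    refine Finset.sum_congr rfl fun i _ => ?_
    rw [smul_smul, smul_smul]
    congr 1
    field_simp
  exact Or.inl ⟨p, (ENNReal.ofReal ((q:ℝ)/n))⁻¹ • Q,
    ⟨Q, rfl, hQle, hQuniv, hball, hcompl⟩, hmean.symm⟩

theorem extract_weights (hn : 0 < n) (x : Fin n → Ed d) (hinj : Function.Injective x)
    (q : ℕ) (hq1 : 1 ≤ q) (Q : Measure (Ed d))
    (hQle : Q ≤ ((n : ℝ≥0∞)⁻¹ • ∑ i, Measure.dirac (x i)))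
    (hQuniv : Q Set.univ = ENNReal.ofReal ((q:ℝ)/n)) :
    ∃ w : Fin n → ℝ, (∀ i, 0 ≤ w i ∧ w i ≤ 1) ∧ ∑ i, w i = q ∧
      mMean ((ENNReal.ofReal ((q:ℝ)/n))⁻¹ • Q) = (q:ℝ)⁻¹ • ∑ i, w i • x i := by
  classical
  have hn0 : (0:ℝ) < n := by exact_mod_cast hn
  have hq0 : (0:ℝ) < q := by exact_mod_cast hq1
  have hQi : ∀ i, Q {x i} ≤ (n : ℝ≥0∞)⁻¹ := by
    intro i
    have h1 := Measure.le_iff.mp hQle {x i} (measurableSet_singleton _)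
    have h2 : ((n : ℝ≥0∞)⁻¹ • ∑ j, Measure.dirac (x j)) ({x i} : Set (Ed d))
        = (n : ℝ≥0∞)⁻¹ := by
      rw [uP_apply]
      have : (Finset.univ.filter fun j => x j ∈ ({x i} : Set (Ed d))) = {i} := by
        ext j
        simp only [Finset.mem_filter, Finset.mem_univ, true_and, Finset.mem_singleton,
          Set.mem_singleton_iff]
        exact ⟨fun hj => hinj hj, fun hj => by rw [hj]⟩
      rw [this]
      simp
    rw [h2] at h1
    exact h1
  have hQfin : ∀ i, Q {x i} ≠ ∞ := fun i =>
    ne_top_of_le_ne_top (ENNReal.inv_ne_top.mpr (by exact_mod_cast hn.ne')) (hQi i)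
  have hQrep : Q = ∑ i, Q {x i} • Measure.dirac (x i) := by
    refine Measure.ext fun s hs => ?_
    have hrange : MeasurableSet (Set.range x) := (Set.finite_range x).measurableSet
    have hsplit := measure_inter_add_diff (μ := Q) s hrange
    have hdiff : Q (s \ Set.range x) = 0 := by
      have h1 := Measure.le_iff.mp hQle (s \ Set.range x) (hs.diff hrange)
      have h2 : ((n : ℝ≥0∞)⁻¹ • ∑ j, Measure.dirac (x j)) (s \ Set.range x) = 0 := by
        rw [uP_apply]
        have : (Finset.univ.filter fun j => x j ∈ s \ Set.range x) = ∅ := by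
          rw [Finset.filter_eq_empty_iff]
          intro j _ hj
          exact hj.2 (Set.mem_range_self j)
        rw [this]
        simp
      rw [h2] at h1
      exact le_antisymm h1 zero_le
    have hinter : Q (s ∩ Set.range x) = ∑ i ∈ Finset.univ.filter (fun i => x i ∈ s),
        Q {x i} := by
      have hU : s ∩ Set.range x = ⋃ i ∈ Finset.univ.filter (fun i => x i ∈ s), {x i} := by
        ext y
        simp only [Set.mem_inter_iff, Set.mem_range, Set.mem_iUnion, Finset.mem_filter,
          Finset.mem_univ, true_and, Set.mem_singleton_iff]
        constructor
        · rintro ⟨hys, i, rfl⟩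
          exact ⟨i, hys, rfl⟩
        · rintro ⟨i, his, rfl⟩
          exact ⟨his, i, rfl⟩
      rw [hU, measure_biUnion_finset ?_ (fun i _ => measurableSet_singleton _)]
      intro i _ j _ hij
      simp only [Function.onFun, Set.disjoint_singleton_left, Set.mem_singleton_iff]
      exact fun hxy => hij (hinj hxy)
    have hRHS : (∑ i, Q {x i} • Measure.dirac (x i)) s
        = ∑ i ∈ Finset.univ.filter (fun i => x i ∈ s), Q {x i} := by
      rw [Measure.finset_sum_apply, Finset.sum_filter]
      refine Finset.sum_congr rfl fun i _ => ?_
      rw [Measure.smul_apply, smul_eq_mul, Measure.dirac_apply, Set.indicator_apply]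
      split <;> simp
    rw [hRHS, ← hsplit, hdiff, add_zero, hinter]
  have hsumQ : ∑ i, Q {x i} = ENNReal.ofReal ((q:ℝ)/n) := by
    rw [← hQuniv]
    conv_rhs => rw [hQrep]
    rw [Measure.finset_sum_apply]
    refine Finset.sum_congr rfl fun i _ => ?_
    rw [Measure.smul_apply, smul_eq_mul, Measure.dirac_apply]
    simp
  refine ⟨fun i => n * (Q {x i}).toReal, fun i => ⟨by positivity, ?_⟩, ?_, ?_⟩
  · have h1 : (Q {x i}).toReal ≤ ((n : ℝ≥0∞)⁻¹).toReal :=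
      ENNReal.toReal_mono (by simp [ENNReal.inv_ne_top]; exact_mod_cast hn.ne') (hQi i)
    rw [ENNReal.toReal_inv, ENNReal.toReal_natCast] at h1
    calc (n:ℝ) * (Q {x i}).toReal ≤ (n:ℝ) * ((n:ℝ))⁻¹ := by
          exact mul_le_mul_of_nonneg_left h1 hn0.le
    _ = 1 := by field_simp
  · rw [← Finset.mul_sum, ← ENNReal.toReal_sum (fun i _ => hQfin i), hsumQ,
      ENNReal.toReal_ofReal (by positivity)]
    field_simp
  · show (∫ u, u ∂((ENNReal.ofReal ((q:ℝ)/n))⁻¹ • Q)) = _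
    rw [integral_smul_measure]
    conv_lhs => rw [hQrep]
    rw [integral_dirac_sum x _ hQfin, ENNReal.toReal_inv,
      ENNReal.toReal_ofReal (by positivity), Finset.smul_sum, Finset.smul_sum]
    refine Finset.sum_congr rfl fun i _ => ?_
    rw [smul_smul, smul_smul]
    congr 1
    field_simp
end MeasAux3
section LP
open MeasureTheory ENNReal Set Metric

theorem K_subset_Mset {d n : ℕ} (hn : 0 < n) (x : Fin n → Ed d)
    (hinj : Function.Injective x) (q : ℕ) (hq1 : 1 ≤ q) (hqn : q < n)
    (m : Ed d) (w0 : Fin n → ℝ) (hw001 : ∀ i, 0 ≤ w0 i ∧ w0 i ≤ 1)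
    (hw0sum : ∑ i, w0 i = q) (hw0m : ∑ i, w0 i • x i = (q:ℝ) • m) :
    m ∈ Mset ((n : ℝ≥0∞)⁻¹ • ∑ i, Measure.dirac (x i)) ((q:ℝ)/n) := by
  classical
  have hq0 : (0:ℝ) < q := by exact_mod_cast hq1
  haveI hnefin : Nonempty (Fin n) := ⟨⟨0, hn⟩⟩
  set b : Fin n → ℝ := fun i => ‖x i‖^2 with hb
  set W : Set (Fin n → ℝ) := {w | (∀ i, 0 ≤ w i ∧ w i ≤ 1) ∧ ∑ i, w i = (q:ℝ) ∧
    ∑ i, w i • x i = (q:ℝ) • m} with hW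
  have hWne : W.Nonempty := ⟨w0, hw001, hw0sum, hw0m⟩
  have hWclosed : IsClosed W := by
    have h1 : IsClosed {w : Fin n → ℝ | ∀ i, 0 ≤ w i ∧ w i ≤ 1} := by
      have he : {w : Fin n → ℝ | ∀ i, 0 ≤ w i ∧ w i ≤ 1}
          = ⋂ i, ({w : Fin n → ℝ | 0 ≤ w i} ∩ {w : Fin n → ℝ | w i ≤ 1}) := by
        ext w
        simp [Set.mem_iInter, forall_and]
      rw [he]
      exact isClosed_iInter fun i => ((isClosed_le continuous_const (continuous_apply i)).inter
        (isClosed_le (continuous_apply i) continuous_const))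
    have h2 : IsClosed {w : Fin n → ℝ | ∑ i, w i = (q:ℝ)} :=
      isClosed_eq (continuous_finset_sum _ fun i _ => continuous_apply i) continuous_const
    have h3 : IsClosed {w : Fin n → ℝ | ∑ i, w i • x i = (q:ℝ) • m} :=
      isClosed_eq (continuous_finset_sum _ fun i _ =>
        (continuous_apply i).smul continuous_const) continuous_const
    have hWeq : W = {w : Fin n → ℝ | ∀ i, 0 ≤ w i ∧ w i ≤ 1}
        ∩ ({w : Fin n → ℝ | ∑ i, w i = (q:ℝ)}
          ∩ {w : Fin n → ℝ | ∑ i, w i • x i = (q:ℝ) • m}) := by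
      ext w
      exact Iff.rfl
    rw [hWeq]
    exact h1.inter (h2.inter h3)
  have hWcompact : IsCompact W := by
    refine IsCompact.of_isClosed_subset
      (isCompact_univ_pi fun _ : Fin n => isCompact_Icc (a := (0:ℝ)) (b := 1)) hWclosed ?_
    intro w hw
    rw [Set.mem_univ_pi]
    exact fun i => ⟨(hw.1 i).1, (hw.1 i).2⟩
  have hcont : Continuous (fun w : Fin n → ℝ => ∑ i, w i * b i) :=
    continuous_finset_sum _ fun i _ => (continuous_apply i).mul continuous_const
  obtain ⟨w, hwW, hwmin⟩ := hWcompact.exists_isMinOn hWne hcont.continuousOn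
  obtain ⟨hw01, hwsum, hwm⟩ := hwW
  have hw0' : ∀ i, 0 ≤ w i := fun i => (hw01 i).1
  have hw1' : ∀ i, w i ≤ 1 := fun i => (hw01 i).2
  -- Farkas step
  set adm : Fin n × Fin n → Prop := fun pr => 0 < w pr.1 ∧ w pr.2 < 1 with hadm
  set u : Fin n × Fin n → Ed d := fun pr => if adm pr then x pr.2 - x pr.1 else 0 with hu
  set z : Fin n × Fin n → ℝ := fun pr => if adm pr then b pr.2 - b pr.1 else 0 with hz
  have hfark : ∃ a : Ed d, ∀ pr, (inner ℝ a (u pr) : ℝ) ≤ z pr := by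
    apply farkas
    intro l hl0 hlu
    set l' : Fin n × Fin n → ℝ := fun pr => if adm pr then l pr else 0 with hl'
    have hl'0 : ∀ pr, 0 ≤ l' pr := by
      intro pr
      simp only [hl']
      split
      · exact hl0 pr
      · exact le_refl 0
    set η : Fin n → ℝ := fun k => (∑ i, l' (i, k)) - (∑ j, l' (k, j)) with hη
    have hηsum : ∑ k, η k = 0 := by
      simp only [hη, Finset.sum_sub_distrib]
      rw [Finset.sum_comm]
      exact sub_self _
    have hsplit1 : ∑ k, (∑ i, l' (i, k)) • x k = ∑ pr : Fin n × Fin n, l' pr • x pr.2 := by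
      calc ∑ k, (∑ i, l' (i, k)) • x k = ∑ k, ∑ i, l' (i, k) • x k :=
            Finset.sum_congr rfl fun k _ => Finset.sum_smul
      _ = ∑ i, ∑ k, l' (i, k) • x k := Finset.sum_comm
      _ = ∑ pr : Fin n × Fin n, l' pr • x pr.2 := by rw [Fintype.sum_prod_type]
    have hsplit2 : ∑ k, (∑ j, l' (k, j)) • x k = ∑ pr : Fin n × Fin n, l' pr • x pr.1 := by
      calc ∑ k, (∑ j, l' (k, j)) • x k = ∑ k, ∑ j, l' (k, j) • x k :=
            Finset.sum_congr rfl fun k _ => Finset.sum_smul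
      _ = ∑ pr : Fin n × Fin n, l' pr • x pr.1 := by rw [Fintype.sum_prod_type]
    have hηx : ∑ k, η k • x k = 0 := by
      have hstep : ∑ k, η k • x k = ∑ pr : Fin n × Fin n, l' pr • (x pr.2 - x pr.1) := by
        simp only [hη, sub_smul, Finset.sum_sub_distrib, smul_sub]
        rw [hsplit1, hsplit2]
      rw [hstep, ← hlu]
      refine Finset.sum_congr rfl fun pr _ => ?_
      simp only [hl', hu]
      split
      · rfl
      · simp
    have hsplit1' : ∑ k, (∑ i, l' (i, k)) * b k = ∑ pr : Fin n × Fin n, l' pr * b pr.2 := by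
      calc ∑ k, (∑ i, l' (i, k)) * b k = ∑ k, ∑ i, l' (i, k) * b k :=
            Finset.sum_congr rfl fun k _ => by rw [Finset.sum_mul]
      _ = ∑ i, ∑ k, l' (i, k) * b k := Finset.sum_comm
      _ = ∑ pr : Fin n × Fin n, l' pr * b pr.2 := by rw [Fintype.sum_prod_type]
    have hsplit2' : ∑ k, (∑ j, l' (k, j)) * b k = ∑ pr : Fin n × Fin n, l' pr * b pr.1 := by
      calc ∑ k, (∑ j, l' (k, j)) * b k = ∑ k, ∑ j, l' (k, j) * b k :=
            Finset.sum_congr rfl fun k _ => by rw [Finset.sum_mul]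
      _ = ∑ pr : Fin n × Fin n, l' pr * b pr.1 := by rw [Fintype.sum_prod_type]
    have hηb : ∑ k, η k * b k = ∑ pr, l pr * z pr := by
      have hstep : ∑ k, η k * b k = ∑ pr : Fin n × Fin n, l' pr * (b pr.2 - b pr.1) := by
        simp only [hη, sub_mul, Finset.sum_sub_distrib, mul_sub]
        rw [hsplit1', hsplit2']
      rw [hstep]
      refine Finset.sum_congr rfl fun pr _ => ?_
      simp only [hl', hz]
      split
      · rfl
      · simp
    -- sign conditions
    have hexpos : ∀ k, 0 < η k → w k < 1 := by
      intro k hk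
      have h1 : 0 < ∑ i, l' (i, k) := by
        have h2 : 0 ≤ ∑ j, l' (k, j) := Finset.sum_nonneg fun j _ => hl'0 _
        simp only [hη] at hk
        linarith
      have h3 : ∃ i, 0 < l' (i, k) := by
        by_contra hno
        push_neg at hno
        have : ∑ i, l' (i, k) ≤ 0 := Finset.sum_nonpos fun i _ => hno i
        linarith
      obtain ⟨i, hi⟩ := h3
      have : adm (i, k) := by
        by_contra hnadm
        simp only [hl', if_neg hnadm] at hi
        linarith
      exact this.2
    have hexneg : ∀ k, η k < 0 → 0 < w k := by
      intro k hk
      have h1 : 0 < ∑ j, l' (k, j) := by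
        have h2 : 0 ≤ ∑ i, l' (i, k) := Finset.sum_nonneg fun i _ => hl'0 _
        simp only [hη] at hk
        linarith
      have h3 : ∃ j, 0 < l' (k, j) := by
        by_contra hno
        push_neg at hno
        have : ∑ j, l' (k, j) ≤ 0 := Finset.sum_nonpos fun j _ => hno j
        linarith
      obtain ⟨j, hj⟩ := h3
      have : adm (k, j) := by
        by_contra hnadm
        simp only [hl', if_neg hnadm] at hj
        linarith
      exact this.1
    -- step size
    set dd : Fin n → ℝ := fun k => if 0 < η k then (1 - w k)/η k
      else if η k < 0 then w k/(-η k) else 1 with hdd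
    have hddpos : ∀ k, 0 < dd k := by
      intro k
      simp only [hdd]
      split
      · rename_i hk
        have := hexpos k hk
        apply div_pos
        · linarith
        · exact hk
      · split
        · rename_i hk1 hk2
          have := hexneg k hk2
          apply div_pos this
          linarith
        · norm_num
    set ε : ℝ := Finset.univ.inf' (Finset.univ_nonempty) dd with hε
    have hεpos : 0 < ε := by
      rw [hε, Finset.lt_inf'_iff]
      exact fun k _ => hddpos k
    have hεle : ∀ k, ε ≤ dd k := fun k => Finset.inf'_le dd (Finset.mem_univ k)
    have hfeas : ∀ k, 0 ≤ w k + ε * η k ∧ w k + ε * η k ≤ 1 := by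
      intro k
      rcases lt_trichotomy (η k) 0 with hk | hk | hk
      · have hdk : dd k = w k / (-η k) := by
          simp only [hdd, if_neg (by linarith : ¬ (0 < η k)), if_pos hk]
        have hεle' : ε ≤ w k / (-η k) := by rw [← hdk]; exact hεle k
        have h2 : ε * (-η k) ≤ w k := by
          calc ε * (-η k) ≤ (w k / (-η k)) * (-η k) :=
                mul_le_mul_of_nonneg_right hεle' (by linarith)
          _ = w k := div_mul_cancel₀ _ (by linarith)
        have h3 : ε * η k = -(ε * (-η k)) := by ring
        have h4 : 0 ≤ ε * (-η k) := mul_nonneg hεpos.le (by linarith)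
        constructor
        · linarith
        · have := hw1' k
          linarith
      · rw [hk]
        simp only [mul_zero, add_zero]
        exact ⟨hw0' k, hw1' k⟩
      · have hdk : dd k = (1 - w k) / η k := by
          simp only [hdd, if_pos hk]
        have hεle' : ε ≤ (1 - w k) / η k := by rw [← hdk]; exact hεle k
        have h2 : ε * η k ≤ 1 - w k := by
          calc ε * η k ≤ ((1 - w k) / η k) * η k :=
                mul_le_mul_of_nonneg_right hεle' hk.le
          _ = 1 - w k := div_mul_cancel₀ _ (ne_of_gt hk)
        have h5 : 0 ≤ ε * η k := mul_nonneg hεpos.le hk.le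
        constructor
        · have := hw0' k
          linarith
        · linarith
    have hw'W : (fun k => w k + ε * η k) ∈ W := by
      refine ⟨hfeas, ?_, ?_⟩
      · rw [Finset.sum_add_distrib, hwsum, ← Finset.mul_sum, hηsum, mul_zero, add_zero]
      · have : ∑ k, (w k + ε * η k) • x k
            = (∑ k, w k • x k) + ε • ∑ k, η k • x k := by
          rw [Finset.smul_sum, ← Finset.sum_add_distrib]
          refine Finset.sum_congr rfl fun k _ => ?_
          rw [add_smul, mul_smul]
        rw [this, hηx, smul_zero, add_zero, hwm]
    have hmin := hwmin hw'W
    have hcomp : ∑ i, (w i + ε * η i) * b i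
        = (∑ i, w i * b i) + ε * ∑ i, η i * b i := by
      rw [Finset.mul_sum, ← Finset.sum_add_distrib]
      refine Finset.sum_congr rfl fun i _ => ?_
      ring
    have h0le : 0 ≤ ε * ∑ i, η i * b i := by
      have : (∑ i, w i * b i) ≤ (∑ i, w i * b i) + ε * ∑ i, η i * b i := by
        rw [← hcomp]
        exact hmin
      linarith
    have : 0 ≤ ∑ i, η i * b i := nonneg_of_mul_nonneg_right h0le hεpos
    rwa [hηb] at this
  obtain ⟨a, ha⟩ := hfark
  set r : Fin n → ℝ := fun k => b k - inner ℝ a (x k) with hr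
  have hpair : ∀ i j, 0 < w i → w j < 1 → r i ≤ r j := by
    intro i j hi hj
    have hadm' : adm (i, j) := ⟨hi, hj⟩
    have h1 := ha (i, j)
    simp only [hu, hz, if_pos hadm'] at h1
    rw [inner_sub_right] at h1
    simp only [hr]
    linarith
  have hex : ∃ i, 0 < w i := by
    by_contra hno
    push_neg at hno
    have : ∑ i, w i ≤ 0 := Finset.sum_nonpos fun i _ => hno i
    rw [hwsum] at this
    linarith
  obtain ⟨iex, hiex⟩ := hex
  set Tpos : Finset (Fin n) := Finset.univ.filter (fun i => 0 < w i) with hTpos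
  have hTposne : Tpos.Nonempty := ⟨iex, by simp [hTpos, hiex]⟩
  obtain ⟨i0, hi0, hmax⟩ := Tpos.exists_max_image r hTposne
  have hi0pos : 0 < w i0 := by simpa [hTpos] using hi0
  set c : ℝ := r i0 with hc
  have hrle : ∀ i, 0 < w i → r i ≤ c := fun i hi => hmax i (by simp [hTpos, hi])
  have hrge : ∀ j, w j < 1 → c ≤ r j := fun j hj => hpair i0 j hi0pos hj
  -- geometry
  set p : Ed d := (2:ℝ)⁻¹ • a with hp
  have hdistsq : ∀ k, dist (x k) p ^ 2 = r k + ‖p‖^2 := by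
    intro k
    rw [dist_eq_norm, norm_sub_sq_real]
    simp only [hr, hb, hp]
    rw [real_inner_smul_right, real_inner_comm (x k) a]
    ring
  have hρ2nn : 0 ≤ c + ‖p‖^2 := by
    have h1 := hdistsq i0
    rw [← hc] at h1
    nlinarith [sq_nonneg (dist (x i0) p)]
  set ρ : ℝ := Real.sqrt (c + ‖p‖^2) with hρ
  have hρnn : 0 ≤ ρ := Real.sqrt_nonneg _
  have hρsq : ρ^2 = c + ‖p‖^2 := Real.sq_sqrt hρ2nn
  have hle_iff : ∀ k, dist (x k) p ≤ ρ ↔ r k ≤ c := by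
    intro k
    rw [hρ, Real.le_sqrt dist_nonneg hρ2nn, hdistsq k]
    constructor <;> intro <;> linarith
  have hlt_iff : ∀ k, dist (x k) p < ρ ↔ r k < c := by
    intro k
    rw [hρ, Real.lt_sqrt dist_nonneg, hdistsq k]
    constructor <;> intro <;> linarith
  have hw1in : ∀ k, dist (x k) p < ρ → w k = 1 := by
    intro k hk
    by_contra hne
    have hklt : w k < 1 := lt_of_le_of_ne (hw1' k) hne
    have h1 := hrge k hklt
    rw [hlt_iff] at hk
    linarith
  have hwout : ∀ k, 0 < w k → dist (x k) p ≤ ρ := fun k hk => (hle_iff k).mpr (hrle k hk)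
  set P : Measure (Ed d) := (n : ℝ≥0∞)⁻¹ • ∑ i, Measure.dirac (x i) with hP
  set δ : ℝ := dtmRadius P ((q:ℝ)/n) p with hδ
  set CB : Finset (Fin n) := Finset.univ.filter (fun k => x k ∈ closedBall p ρ) with hCB
  have hmemCB : ∀ k, k ∈ CB ↔ dist (x k) p ≤ ρ := by
    intro k
    simp [hCB, mem_closedBall]
  -- final: build hin/hout for realize
  have hfinish : (∀ i, dist (x i) p < δ → w i = 1) → (∀ i, 0 < w i → dist (x i) p ≤ δ) →
      m ∈ Mset P ((q:ℝ)/n) := by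
    intro hin hout
    have hreal := realize_mem_Mset hn x q hq1 p w hw0' hw1' hwsum hin hout
    have heq : (q:ℝ)⁻¹ • ∑ i, w i • x i = m := by
      rw [hwm, smul_smul, inv_mul_cancel₀ (ne_of_gt hq0), one_smul]
    rwa [heq] at hreal
  by_cases hcase : q + 1 ≤ CB.card
  · -- δ = ρ
    have hρpos : 0 < ρ := by
      rcases eq_or_lt_of_le hρnn with h | h
      · exfalso
        have hle1 : CB.card ≤ 1 := by
          refine Finset.card_le_one.mpr fun i hi j hj => ?_
          rw [hmemCB] at hi hj
          rw [← h] at hi hj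
          have hi' : x i = p := eq_of_dist_eq_zero (le_antisymm hi dist_nonneg)
          have hj' : x j = p := eq_of_dist_eq_zero (le_antisymm hj dist_nonneg)
          exact hinj (hi'.trans hj'.symm)
        omega
      · exact h
    have hδle : δ ≤ ρ := by
      rw [hδ, dtmRadius]
      refine csInf_le ⟨0, fun y hy => hy.1.le⟩ ⟨hρpos, ?_⟩
      rw [hP, uP_lt_iff hn x q]
      have : (Finset.univ.filter fun i => x i ∈ closedBall p ρ).card = CB.card := by
        rw [hCB]
      omega
    have hρle : ρ ≤ δ := by
      by_contra hlt
      push_neg at hlt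
      set r' : ℝ := (δ + ρ)/2 with hr'
      have hδr' : δ < r' := by
        simp only [hr']
        linarith
      have hr'ρ : r' < ρ := by
        simp only [hr']
        linarith
      have hcount := count_gt_of_dtmRadius_lt hn hqn p (hδ ▸ hδr')
      set T : Finset (Fin n) := Finset.univ.filter (fun i => x i ∈ closedBall p r') with hT
      have hT1 : ∀ i ∈ T, w i = 1 := by
        intro i hi
        simp only [hT, Finset.mem_filter, mem_closedBall] at hi
        exact hw1in i (lt_of_le_of_lt hi.2 hr'ρ)
      have h2 : (T.card : ℝ) = ∑ i ∈ T, w i := by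
        rw [Finset.sum_congr rfl hT1]
        simp
      have h3 : ∑ i ∈ T, w i ≤ ∑ i, w i :=
        Finset.sum_le_sum_of_subset_of_nonneg (Finset.subset_univ T) (fun i _ _ => hw0' i)
      have h4 : (q:ℝ) < T.card := by exact_mod_cast hcount
      rw [hwsum] at h3
      linarith
    have hδρ : δ = ρ := le_antisymm hδle hρle
    refine hfinish (fun i hi => hw1in i (hδρ ▸ hi)) (fun i hi => hδρ ▸ hwout i hi)
  · -- CB.card ≤ q
    push_neg at hcase
    have hsubpos : Tpos ⊆ CB := by
      intro k hk
      rw [hmemCB]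
      exact hwout k (by simpa [hTpos] using hk)
    have hzero_off : ∀ i ∈ Finset.univ, i ∉ Tpos → w i = 0 := by
      intro i _ hi
      simp only [hTpos, Finset.mem_filter, Finset.mem_univ, true_and, not_lt] at hi
      exact le_antisymm hi (hw0' i)
    have hsumT : ∑ i ∈ Tpos, w i = (q:ℝ) := by
      rw [Finset.sum_subset (Finset.subset_univ Tpos) hzero_off, hwsum]
    have hcardpos : q ≤ Tpos.card := by
      have h1 : (q:ℝ) ≤ Tpos.card := by
        rw [← hsumT]
        calc ∑ i ∈ Tpos, w i ≤ ∑ i ∈ Tpos, (1:ℝ) :=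
              Finset.sum_le_sum fun i _ => hw1' i
        _ = Tpos.card := by simp
      exact_mod_cast h1
    have hTCB : Tpos = CB := by
      apply Finset.eq_of_subset_of_card_le hsubpos
      have := Finset.card_le_card hsubpos
      omega
    have hcc : Tpos.card ≤ CB.card := Finset.card_le_card hsubpos
    have hcardCB : CB.card = q := by omega
    have hallone : ∀ k ∈ CB, w k = 1 := by
      intro k hk
      by_contra hne
      have hklt : w k < 1 := lt_of_le_of_ne (hw1' k) hne
      have hlt : ∑ i ∈ CB, w i < ∑ i ∈ CB, (1:ℝ) :=
        Finset.sum_lt_sum (fun i _ => hw1' i) ⟨k, hk, hklt⟩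
      rw [← hTCB, hsumT] at hlt
      simp only [Finset.sum_const, nsmul_eq_mul, mul_one] at hlt
      have hq' : (Tpos.card : ℝ) = (q:ℝ) := by
        rw [hTCB]
        exact_mod_cast hcardCB
      linarith
    have hin : ∀ k, dist (x k) p < δ → w k = 1 := by
      intro k hk
      by_contra hne
      have hkCB : k ∉ CB := fun hmem => hne (hallone k hmem)
      have hρk : ρ < dist (x k) p := by
        by_contra hle
        push_neg at hle
        exact hkCB ((hmemCB k).mpr hle)
      have hcount := count_le_of_lt_dtmRadius hn hinj hq1 p (hδ ▸ hk)
      have hsub : insert k CB ⊆ Finset.univ.filter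
          (fun i => x i ∈ closedBall p (dist (x k) p)) := by
        intro j hj
        rcases Finset.mem_insert.mp hj with h | h
        · subst h
          simp [mem_closedBall]
        · rw [hmemCB] at h
          simp only [Finset.mem_filter, Finset.mem_univ, true_and, mem_closedBall]
          linarith
      have hcard2 := Finset.card_le_card hsub
      rw [Finset.card_insert_of_notMem hkCB] at hcard2
      omega
    have hout : ∀ k, 0 < w k → dist (x k) p ≤ δ := by
      intro k hk
      by_contra hgt
      push_neg at hgt
      have hkCB : k ∈ CB := hsubpos (by simp [hTpos, hk])
      have hkρ : dist (x k) p ≤ ρ := (hmemCB k).mp hkCB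
      set r' : ℝ := (δ + dist (x k) p)/2 with hr'
      have hδr' : δ < r' := by simp only [hr']; linarith
      have hr'k : r' < dist (x k) p := by simp only [hr']; linarith
      have hcount := count_gt_of_dtmRadius_lt hn hqn p (hδ ▸ hδr')
      have hsub : Finset.univ.filter (fun i => x i ∈ closedBall p r') ⊆ CB.erase k := by
        intro j hj
        simp only [Finset.mem_filter, Finset.mem_univ, true_and, mem_closedBall] at hj
        refine Finset.mem_erase.mpr ⟨?_, (hmemCB j).mpr (by linarith)⟩
        intro hjk
        subst hjk
        linarith
      have hcard2 := Finset.card_le_card hsub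
      have hcard3 : (CB.erase k).card = CB.card - 1 := Finset.card_erase_of_mem hkCB
      omega
    exact hfinish hin hout

end LP
/-- for a uniform measure on `n` points in general position and `h = q/n`,
the set `M_h(P_n)` is convex. -/
theorem stmt_4 {d : ℕ} (n : ℕ) (hn : 0 < n) (x : Fin n → Ed d)
    (hgp : ∀ s : Finset (Fin n), s.card ≤ d + 1 →
      AffineIndependent ℝ (fun i : s => x i))
    (q : ℕ) (hq : 1 ≤ q) (hqn : q ≤ n) :
    Convex ℝ (Mset ((n : ℝ≥0∞)⁻¹ • ∑ i, Measure.dirac (x i)) ((q : ℝ) / n)) := by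
  classical
  by_cases hd : d = 0
  · subst hd
    haveI hsub : Subsingleton (Ed 0) := by
      constructor
      intro a b
      ext i
      exact absurd i.2 (Nat.not_lt_zero _)
    exact Set.subsingleton_of_subsingleton.convex
  · have hd1 : 1 ≤ d := Nat.one_le_iff_ne_zero.mpr hd
    have hinj : Function.Injective x := by
      intro i j hij
      by_contra hne
      have hmemi : i ∈ ({i, j} : Finset (Fin n)) := by simp
      have hmemj : j ∈ ({i, j} : Finset (Fin n)) := by simp
      have hcard : ({i, j} : Finset (Fin n)).card = 2 := by
        rw [Finset.card_insert_of_notMem (by simp [hne]), Finset.card_singleton]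
      have haff := hgp {i, j} (by omega)
      have h2 := haff.injective (a₁ := ⟨i, hmemi⟩) (a₂ := ⟨j, hmemj⟩) hij
      exact hne (by simpa using h2)
    have hMK : ∀ m ∈ Mset ((n : ℝ≥0∞)⁻¹ • ∑ i, Measure.dirac (x i)) ((q : ℝ) / n),
        ∃ w : Fin n → ℝ, (∀ i, 0 ≤ w i ∧ w i ≤ 1) ∧
          ∑ i, w i = (q:ℝ) ∧ m = (q:ℝ)⁻¹ • ∑ i, w i • x i := by
      rintro m (⟨p, μ, ⟨Q, rfl, hQle, hQu, -, -⟩, hm⟩ | ⟨v, hv, μ, ⟨Q, rfl, hQle, hQu, -, -⟩, hm⟩) <;>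
      · obtain ⟨w, hw01, hwsum, hmean⟩ := extract_weights hn x hinj q hq Q hQle hQu
        exact ⟨w, hw01, hwsum, hm.trans hmean⟩
    by_cases hqn' : q = n
    · subst hqn'
      apply Set.Subsingleton.convex
      intro m1 h1 m2 h2
      obtain ⟨w1, hw1a, hw1b, hw1c⟩ := hMK m1 h1
      obtain ⟨w2, hw2a, hw2b, hw2c⟩ := hMK m2 h2
      have hall : ∀ (w : Fin q → ℝ), (∀ i, 0 ≤ w i ∧ w i ≤ 1) → ∑ i, w i = (q:ℝ) →
          ∀ i, w i = 1 := by
        intro w hw hsum i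
        by_contra hne
        have hlt : ∑ j, w j < ∑ _j : Fin q, (1:ℝ) :=
          Finset.sum_lt_sum (fun j _ => (hw j).2)
            ⟨i, Finset.mem_univ i, lt_of_le_of_ne (hw i).2 hne⟩
        rw [hsum] at hlt
        simp only [Finset.sum_const, Finset.card_univ, Fintype.card_fin,
          nsmul_eq_mul, mul_one] at hlt
        exact lt_irrefl _ hlt
      rw [hw1c, hw2c]
      congr 1
      refine Finset.sum_congr rfl fun i _ => ?_
      rw [hall w1 hw1a hw1b i, hall w2 hw2a hw2b i]
    · have hqn2 : q < n := lt_of_le_of_ne hqn hqn'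
      have hq0 : ((q:ℝ)) ≠ 0 := by
        have : (0:ℝ) < q := by exact_mod_cast hq
        linarith
      intro m1 h1 m2 h2 aa bb ha hb hab
      obtain ⟨w1, hw1a, hw1b, hw1c⟩ := hMK m1 h1
      obtain ⟨w2, hw2a, hw2b, hw2c⟩ := hMK m2 h2
      set w3 : Fin n → ℝ := fun i => aa * w1 i + bb * w2 i with hw3
      have hw3a : ∀ i, 0 ≤ w3 i ∧ w3 i ≤ 1 := by
        intro i
        constructor
        · exact add_nonneg (mul_nonneg ha (hw1a i).1) (mul_nonneg hb (hw2a i).1)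
        · have e1 : aa * w1 i ≤ aa * 1 := mul_le_mul_of_nonneg_left (hw1a i).2 ha
          have e2 : bb * w2 i ≤ bb * 1 := mul_le_mul_of_nonneg_left (hw2a i).2 hb
          simp only [hw3]
          rw [mul_one] at e1 e2
          linarith
      have hw3b : ∑ i, w3 i = (q:ℝ) := by
        simp only [hw3]
        rw [Finset.sum_add_distrib, ← Finset.mul_sum, ← Finset.mul_sum, hw1b, hw2b,
          ← add_mul, hab, one_mul]
      have hS1 : ∑ i, w1 i • x i = (q:ℝ) • m1 := by
        rw [hw1c, smul_smul, mul_inv_cancel₀ hq0, one_smul]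
      have hS2 : ∑ i, w2 i • x i = (q:ℝ) • m2 := by
        rw [hw2c, smul_smul, mul_inv_cancel₀ hq0, one_smul]
      have hw3m : ∑ i, w3 i • x i = (q:ℝ) • (aa • m1 + bb • m2) := by
        have hstep : ∑ i, w3 i • x i
            = aa • (∑ i, w1 i • x i) + bb • (∑ i, w2 i • x i) := by
          rw [Finset.smul_sum, Finset.smul_sum, ← Finset.sum_add_distrib]
          refine Finset.sum_congr rfl fun i _ => ?_
          simp only [hw3]
          rw [add_smul, mul_smul, mul_smul]
        rw [hstep, hS1, hS2, smul_add]
        congr 1 <;> rw [smul_comm]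
      exact K_subset_Mset hn x hinj q hq hqn2 _ w3 hw3a hw3b hw3m
end

section
/- Let K > 0 and let P be a Borel probability measure on ℝ^d with support contained in B̄(0,K) such that P({y : ⟨y,v⟩ = c}) = 0 for every unit vector v and every c ∈ ℝ, and P(∂B̄(x,r)) = 0 for every x ∈ ℝ^d and every r ≥ 0. Then for every h ∈ (0,1), the set M_h(P) is convex. -/
open MeasureTheory ENNReal Set Metric

section stmt5aux

open Filter
open scoped Topology

namespace Stmt5Aux
set_option linter.unusedSectionVars false

local notation "⟪" x ", " y "⟫" => @inner ℝ _ _ x y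

variable {d : ℕ} {K : ℝ} {P : Measure (Ed d)} [IsProbabilityMeasure P] {h : ℝ}

lemma measSet_half (v : Ed d) (c : ℝ) : MeasurableSet {y : Ed d | c < ⟪y, v⟫} :=
  measurableSet_lt measurable_const (continuous_id.inner continuous_const).measurable

lemma measSet_half_lt (v : Ed d) (c : ℝ) : MeasurableSet {y : Ed d | ⟪y, v⟫ < c} :=
  measurableSet_lt (continuous_id.inner continuous_const).measurable measurable_const

lemma measSet_hyp (v : Ed d) (c : ℝ) : MeasurableSet {y : Ed d | ⟪y, v⟫ = c} :=
  measurableSet_eq_fun (continuous_id.inner continuous_const).measurable measurable_const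

lemma ae_norm_le (hsupp : P ((closedBall (0:Ed d) K)ᶜ) = 0) : ∀ᵐ u ∂P, ‖u‖ ≤ K := by
  have h1 : ∀ᵐ u ∂P, u ∈ closedBall (0:Ed d) K := by
    rw [ae_iff]
    exact hsupp
  filter_upwards [h1] with u hu
  simpa [mem_closedBall, dist_zero_right] using hu

lemma integrable_bdd (hsupp : P ((closedBall (0:Ed d) K)ᶜ) = 0)
    {E : Type} [NormedAddCommGroup E] {f : Ed d → E} (hfc : Continuous f) {C : ℝ}
    (hb : ∀ u : Ed d, ‖u‖ ≤ K → ‖f u‖ ≤ C) : Integrable f P :=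
  (integrable_const C).mono' hfc.aestronglyMeasurable <| by
    filter_upwards [ae_norm_le hsupp] with u hu using hb u hu

lemma integrable_id' (hsupp : P ((closedBall (0:Ed d) K)ᶜ) = 0) :
    Integrable (fun u : Ed d => u) P :=
  integrable_bdd hsupp continuous_id fun _ hu => hu

lemma integrable_normsq (hsupp : P ((closedBall (0:Ed d) K)ᶜ) = 0) :
    Integrable (fun u : Ed d => ‖u‖^2) P := by
  refine integrable_bdd hsupp (by continuity) (C := K^2) fun u hu => ?_
  have h0 : (0:ℝ) ≤ ‖u‖ := norm_nonneg u
  rw [Real.norm_eq_abs, abs_of_nonneg (by positivity)]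
  nlinarith

lemma integrable_sub_sq (hsupp : P ((closedBall (0:Ed d) K)ᶜ) = 0) (x : Ed d) :
    Integrable (fun u : Ed d => ‖u - x‖^2) P := by
  refine integrable_bdd hsupp (by continuity) (C := (K + ‖x‖)^2) fun u hu => ?_
  have h1 : ‖u - x‖ ≤ ‖u‖ + ‖x‖ := norm_sub_le u x
  have h0 : (0:ℝ) ≤ ‖u - x‖ := norm_nonneg _
  have h2 : (0:ℝ) ≤ ‖x‖ := norm_nonneg _
  rw [Real.norm_eq_abs, abs_of_nonneg (by positivity)]
  nlinarith

lemma integrable_inner' (hsupp : P ((closedBall (0:Ed d) K)ᶜ) = 0) (v : Ed d) :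
    Integrable (fun u : Ed d => ⟪u, v⟫) P := by
  refine integrable_bdd hsupp (continuous_id.inner continuous_const) (C := K * ‖v‖) fun u hu => ?_
  calc ‖⟪u, v⟫‖ ≤ ‖u‖ * ‖v‖ := norm_inner_le_norm u v
  _ ≤ K * ‖v‖ := by have := norm_nonneg v; nlinarith

/-! ### Facts about the localization radius -/

lemma S_mono {x : Ed d} {r₁ r₂ : ℝ}
    (h1 : r₁ ∈ {r : ℝ | 0 < r ∧ ENNReal.ofReal h < P (closedBall x r)}) (h12 : r₁ ≤ r₂) :
    r₂ ∈ {r : ℝ | 0 < r ∧ ENNReal.ofReal h < P (closedBall x r)} :=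
  ⟨lt_of_lt_of_le h1.1 h12, lt_of_lt_of_le h1.2 (measure_mono (closedBall_subset_closedBall h12))⟩

lemma measure_cb_K (hsupp : P ((closedBall (0:Ed d) K)ᶜ) = 0) :
    P (closedBall (0:Ed d) K) = 1 := by
  have h1 := measure_add_measure_compl (μ := P) (measurableSet_closedBall (x := (0:Ed d)) (ε := K))
  rw [hsupp, add_zero, measure_univ] at h1
  exact h1

lemma S_nonempty (hsupp : P ((closedBall (0:Ed d) K)ᶜ) = 0) (hK : 0 < K)
    (hh : h ∈ Set.Ioo (0:ℝ) 1) (x : Ed d) :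
    (K + ‖x‖ + 1) ∈ {r : ℝ | 0 < r ∧ ENNReal.ofReal h < P (closedBall x r)} := by
  constructor
  · positivity
  · calc ENNReal.ofReal h < 1 := ENNReal.ofReal_lt_one.2 hh.2
    _ = P (closedBall (0:Ed d) K) := (measure_cb_K hsupp).symm
    _ ≤ P (closedBall x (K + ‖x‖ + 1)) := by
        refine measure_mono fun u hu => ?_
        rw [mem_closedBall] at hu ⊢
        rw [dist_zero_right] at hu
        calc dist u x ≤ ‖u‖ + ‖x‖ := by
              rw [dist_eq_norm]; exact (norm_sub_le u x)
        _ ≤ K + ‖x‖ + 1 := by linarith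

lemma delta_nonneg (x : Ed d) : 0 ≤ dtmRadius P h x :=
  Real.sInf_nonneg fun r hr => hr.1.le

lemma S_bddBelow (x : Ed d) :
    BddBelow {r : ℝ | 0 < r ∧ ENNReal.ofReal h < P (closedBall x r)} :=
  ⟨0, fun r hr => hr.1.le⟩

lemma measure_cb_gt (hsupp : P ((closedBall (0:Ed d) K)ᶜ) = 0) (hK : 0 < K)
    (hh : h ∈ Set.Ioo (0:ℝ) 1) {x : Ed d} {r : ℝ} (hr : dtmRadius P h x < r) :
    ENNReal.ofReal h < P (closedBall x r) := by
  obtain ⟨s, hs, hsr⟩ := (csInf_lt_iff (S_bddBelow x) ⟨_, S_nonempty hsupp hK hh x⟩).1 hr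
  exact (S_mono hs hsr.le).2

lemma measure_singleton' (hsph : ∀ (x : Ed d) (r : ℝ), 0 ≤ r → P (sphere x r) = 0) (x : Ed d) :
    P {x} = 0 := by
  have h1 : sphere x (0:ℝ) = {x} := by
    ext y; simp [mem_sphere, dist_eq_zero]
  rw [← h1]; exact hsph x 0 le_rfl

lemma measure_cb_le (hsph : ∀ (x : Ed d) (r : ℝ), 0 ≤ r → P (sphere x r) = 0)
    {x : Ed d} {r : ℝ} (hr : r < dtmRadius P h x) :
    P (closedBall x r) ≤ ENNReal.ofReal h := by
  rcases lt_trichotomy r 0 with h0 | h0 | h0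
  · rw [closedBall_eq_empty.2 h0]; simp
  · subst h0
    rw [closedBall_zero, measure_singleton' hsph x]
    exact zero_le
  · by_contra hc
    push_neg at hc
    exact absurd (csInf_le (S_bddBelow x) ⟨h0, hc⟩) (not_le.2 hr)

lemma measure_cb_delta_ge (hsupp : P ((closedBall (0:Ed d) K)ᶜ) = 0) (hK : 0 < K)
    (hh : h ∈ Set.Ioo (0:ℝ) 1) (x : Ed d) :
    ENNReal.ofReal h ≤ P (closedBall x (dtmRadius P h x)) := by
  set δ := dtmRadius P h x with hδ
  have hset : closedBall x δ = ⋂ n : ℕ, closedBall x (δ + 1/(n+1)) := by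
    ext u
    simp only [mem_iInter, mem_closedBall]
    constructor
    · intro hu n
      have : (0:ℝ) < 1/(n+1) := by positivity
      linarith
    · intro hu
      by_contra hcon
      push_neg at hcon
      obtain ⟨n, hn⟩ := exists_nat_one_div_lt (show (0:ℝ) < dist u x - δ by linarith)
      have := hu n
      linarith
  rw [hset, Directed.measure_iInter
    (fun n => (measurableSet_closedBall).nullMeasurableSet)
    (fun m n => ⟨max m n, ?_, ?_⟩) ⟨0, measure_ne_top P _⟩]
  · refine le_iInf fun n => ?_
    refine (measure_cb_gt hsupp hK hh ?_).le
    have : (0:ℝ) < 1/((n:ℝ)+1) := by positivity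
    linarith
  · refine closedBall_subset_closedBall ?_
    have h1 : (1:ℝ)/(max m n + 1) ≤ 1/(m+1) := by
      apply one_div_le_one_div_of_le (by positivity)
      simp [Nat.cast_le, le_max_left]
    linarith
  · refine closedBall_subset_closedBall ?_
    have h1 : (1:ℝ)/(max m n + 1) ≤ 1/(n+1) := by
      apply one_div_le_one_div_of_le (by positivity)
      simp [Nat.cast_le, le_max_right]
    linarith

lemma measure_ball_delta_le (hsph : ∀ (x : Ed d) (r : ℝ), 0 ≤ r → P (sphere x r) = 0)
    (x : Ed d) :
    P (ball x (dtmRadius P h x)) ≤ ENNReal.ofReal h := by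
  set δ := dtmRadius P h x with hδ
  have hset : ball x δ = ⋃ n : ℕ, closedBall x (δ - 1/(n+1)) := by
    ext u
    simp only [mem_iUnion, mem_ball, mem_closedBall]
    constructor
    · intro hu
      obtain ⟨n, hn⟩ := exists_nat_one_div_lt (show (0:ℝ) < δ - dist u x by linarith)
      exact ⟨n, by linarith⟩
    · rintro ⟨n, hn⟩
      have : (0:ℝ) < 1/(n+1) := by positivity
      linarith
  rw [hset, Directed.measure_iUnion ?_]
  · refine iSup_le fun n => ?_
    refine measure_cb_le hsph ?_
    have : (0:ℝ) < 1/(n+1) := by positivity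
    linarith
  · refine Monotone.directed_le fun m n hmn => closedBall_subset_closedBall ?_
    have h1 : (1:ℝ)/(n+1) ≤ 1/(m+1) := by
      apply one_div_le_one_div_of_le (by positivity)
      have : (m:ℝ) ≤ n := Nat.cast_le.2 hmn
      linarith
    linarith

lemma delta_pos (hsupp : P ((closedBall (0:Ed d) K)ᶜ) = 0) (hK : 0 < K)
    (hsph : ∀ (x : Ed d) (r : ℝ), 0 ≤ r → P (sphere x r) = 0)
    (hh : h ∈ Set.Ioo (0:ℝ) 1) (x : Ed d) :
    0 < dtmRadius P h x := by
  rcases lt_or_eq_of_le (delta_nonneg (P := P) (h := h) x) with h0 | h0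
  · exact h0
  · exfalso
    have h1 := measure_cb_delta_ge hsupp hK hh x
    rw [← h0, closedBall_zero, measure_singleton' hsph x] at h1
    exact absurd h1 (not_le.2 (ENNReal.ofReal_pos.2 hh.1))

lemma measure_ball_delta (hsupp : P ((closedBall (0:Ed d) K)ᶜ) = 0) (hK : 0 < K)
    (hsph : ∀ (x : Ed d) (r : ℝ), 0 ≤ r → P (sphere x r) = 0)
    (hh : h ∈ Set.Ioo (0:ℝ) 1) (x : Ed d) :
    P (ball x (dtmRadius P h x)) = ENNReal.ofReal h := by
  refine le_antisymm (measure_ball_delta_le hsph x) ?_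
  have h1 := measure_cb_delta_ge hsupp hK hh x
  have h2 : P (closedBall x (dtmRadius P h x))
      ≤ P (ball x (dtmRadius P h x)) + P (sphere x (dtmRadius P h x)) := by
    rw [← ball_union_sphere]
    exact measure_union_le _ _
  rw [hsph x _ (delta_nonneg x), add_zero] at h2
  exact le_trans h1 h2

lemma delta_lip (hsupp : P ((closedBall (0:Ed d) K)ᶜ) = 0) (hK : 0 < K)
    (hh : h ∈ Set.Ioo (0:ℝ) 1) (x y : Ed d) :
    dtmRadius P h y ≤ dtmRadius P h x + dist x y := by
  have key : ∀ r ∈ {r : ℝ | 0 < r ∧ ENNReal.ofReal h < P (closedBall x r)},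
      dtmRadius P h y - dist x y ≤ r := by
    intro r hr
    have hmem : (r + dist x y) ∈ {r : ℝ | 0 < r ∧ ENNReal.ofReal h < P (closedBall y r)} := by
      refine ⟨by have := dist_nonneg (x := x) (y := y); linarith [hr.1], ?_⟩
      refine lt_of_lt_of_le hr.2 (measure_mono fun u hu => ?_)
      rw [mem_closedBall] at hu ⊢
      calc dist u y ≤ dist u x + dist x y := dist_triangle u x y
      _ ≤ r + dist x y := by linarith
    have h4 : dtmRadius P h y ≤ r + dist x y := csInf_le (S_bddBelow y) hmem
    linarith
  have h2 : dtmRadius P h y - dist x y ≤ dtmRadius P h x :=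
    le_csInf ⟨_, S_nonempty hsupp hK hh x⟩ key
  linarith

/-! ### Facts about the half-space threshold -/

lemma T_nonempty (hsupp : P ((closedBall (0:Ed d) K)ᶜ) = 0) (hK : 0 < K)
    (hh : h ∈ Set.Ioo (0:ℝ) 1) {v : Ed d} (hv : ‖v‖ = 1) :
    (-(K+1)) ∈ {c : ℝ | ENNReal.ofReal h < P {y : Ed d | c < ⟪y, v⟫}} := by
  have hsub : closedBall (0:Ed d) K ⊆ {y : Ed d | -(K+1) < ⟪y, v⟫} := by
    intro y hy
    rw [mem_closedBall, dist_zero_right] at hy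
    have h1 : |⟪y, v⟫| ≤ ‖y‖ := by
      calc |⟪y, v⟫| = ‖⟪y, v⟫‖ := (Real.norm_eq_abs _).symm
      _ ≤ ‖y‖ * ‖v‖ := norm_inner_le_norm y v
      _ = ‖y‖ := by rw [hv, mul_one]
    have := abs_le.1 h1
    show -(K+1) < ⟪y, v⟫
    linarith [this.1]
  calc ENNReal.ofReal h < 1 := ENNReal.ofReal_lt_one.2 hh.2
  _ = P (closedBall (0:Ed d) K) := (measure_cb_K hsupp).symm
  _ ≤ P {y : Ed d | -(K+1) < ⟪y, v⟫} := measure_mono hsub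

lemma T_bddAbove (hsupp : P ((closedBall (0:Ed d) K)ᶜ) = 0) (hK : 0 < K)
    (hh : h ∈ Set.Ioo (0:ℝ) 1) {v : Ed d} (hv : ‖v‖ = 1) :
    BddAbove {c : ℝ | ENNReal.ofReal h < P {y : Ed d | c < ⟪y, v⟫}} := by
  refine ⟨K, fun c hc => ?_⟩
  by_contra hKc
  push_neg at hKc
  have hsub : {y : Ed d | c < ⟪y, v⟫} ⊆ (closedBall (0:Ed d) K)ᶜ := by
    intro y hy
    simp only [Set.mem_compl_iff, mem_closedBall, dist_zero_right, not_le]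
    have h1 : ⟪y, v⟫ ≤ ‖y‖ := by
      calc ⟪y, v⟫ ≤ |⟪y, v⟫| := le_abs_self _
      _ = ‖⟪y, v⟫‖ := (Real.norm_eq_abs _).symm
      _ ≤ ‖y‖ * ‖v‖ := norm_inner_le_norm y v
      _ = ‖y‖ := by rw [hv, mul_one]
    have hy' : c < ⟪y, v⟫ := hy
    linarith
  have h2 : P {y : Ed d | c < ⟪y, v⟫} = 0 :=
    le_antisymm (le_trans (measure_mono hsub) (le_of_eq hsupp)) (zero_le)
  have := hc
  rw [Set.mem_setOf_eq, h2] at this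
  exact absurd this (not_lt.2 (zero_le))

lemma measure_half_le (hsupp : P ((closedBall (0:Ed d) K)ᶜ) = 0) (hK : 0 < K)
    (hh : h ∈ Set.Ioo (0:ℝ) 1) {v : Ed d} (hv : ‖v‖ = 1) {c : ℝ} (hc : cInf P h v < c) :
    P {y : Ed d | c < ⟪y, v⟫} ≤ ENNReal.ofReal h := by
  by_contra hcon
  push_neg at hcon
  exact absurd (le_csSup (T_bddAbove hsupp hK hh hv) hcon) (not_le.2 hc)

lemma measure_half_gt (hsupp : P ((closedBall (0:Ed d) K)ᶜ) = 0) (hK : 0 < K)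
    (hh : h ∈ Set.Ioo (0:ℝ) 1) {v : Ed d} (hv : ‖v‖ = 1) {c : ℝ} (hc : c < cInf P h v) :
    ENNReal.ofReal h < P {y : Ed d | c < ⟪y, v⟫} := by
  obtain ⟨t, ht, hct⟩ := exists_lt_of_lt_csSup ⟨_, T_nonempty hsupp hK hh hv⟩ hc
  refine lt_of_lt_of_le ht (measure_mono fun y hy => ?_)
  have : t < ⟪y, v⟫ := hy
  show c < ⟪y, v⟫
  linarith

lemma measure_H_eq (hsupp : P ((closedBall (0:Ed d) K)ᶜ) = 0) (hK : 0 < K)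
    (hhyp : ∀ (v : Ed d), ‖v‖ = 1 → ∀ c : ℝ, P {y : Ed d | ⟪y, v⟫ = c} = 0)
    (hh : h ∈ Set.Ioo (0:ℝ) 1) {v : Ed d} (hv : ‖v‖ = 1) :
    P {y : Ed d | cInf P h v < ⟪y, v⟫} = ENNReal.ofReal h := by
  set c := cInf P h v with hc
  -- upper bound
  have hle : P {y : Ed d | c < ⟪y, v⟫} ≤ ENNReal.ofReal h := by
    have hset : {y : Ed d | c < ⟪y, v⟫} = ⋃ n : ℕ, {y : Ed d | c + 1/(n+1) < ⟪y, v⟫} := by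
      ext y
      simp only [Set.mem_setOf_eq, mem_iUnion]
      constructor
      · intro hy
        obtain ⟨n, hn⟩ := exists_nat_one_div_lt (show (0:ℝ) < ⟪y, v⟫ - c by linarith)
        exact ⟨n, by linarith⟩
      · rintro ⟨n, hn⟩
        have : (0:ℝ) < 1/((n:ℝ)+1) := by positivity
        linarith
    rw [hset, Directed.measure_iUnion ?_]
    · refine iSup_le fun n => ?_
      refine measure_half_le hsupp hK hh hv ?_
      have : (0:ℝ) < 1/((n:ℝ)+1) := by positivity
      linarith
    · refine Monotone.directed_le fun m n hmn y hy => ?_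
      have h1 : (1:ℝ)/(n+1) ≤ 1/(m+1) := by
        apply one_div_le_one_div_of_le (by positivity)
        have : (m:ℝ) ≤ n := Nat.cast_le.2 hmn
        linarith
      have hy' : c + 1/(m+1) < ⟪y, v⟫ := hy
      show c + 1/((n:ℝ)+1) < ⟪y, v⟫
      linarith
  -- lower bound on the closed half-space
  have hge : ENNReal.ofReal h ≤ P {y : Ed d | c ≤ ⟪y, v⟫} := by
    have hset : {y : Ed d | c ≤ ⟪y, v⟫} = ⋂ n : ℕ, {y : Ed d | c - 1/(n+1) < ⟪y, v⟫} := by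
      ext y
      simp only [Set.mem_setOf_eq, mem_iInter]
      constructor
      · intro hy n
        have : (0:ℝ) < 1/((n:ℝ)+1) := by positivity
        linarith
      · intro hy
        by_contra hcon
        push_neg at hcon
        obtain ⟨n, hn⟩ := exists_nat_one_div_lt (show (0:ℝ) < c - ⟪y, v⟫ by linarith)
        have := hy n
        linarith
    rw [hset, Directed.measure_iInter
      (fun n => (measSet_half v _).nullMeasurableSet)
      (fun m n => ⟨max m n, ?_, ?_⟩) ⟨0, measure_ne_top P _⟩]
    · refine le_iInf fun n => ?_
      refine (measure_half_gt hsupp hK hh hv ?_).le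
      have : (0:ℝ) < 1/((n:ℝ)+1) := by positivity
      linarith
    · intro y hy
      have h1 : (1:ℝ)/(max m n + 1) ≤ 1/(m+1) := by
        apply one_div_le_one_div_of_le (by positivity)
        simp [Nat.cast_le, le_max_left]
      have hy' : c - 1/(max m n + 1) < ⟪y, v⟫ := hy
      show c - 1/((m:ℝ)+1) < ⟪y, v⟫
      push_cast at hy' h1 ⊢
      linarith
    · intro y hy
      have h1 : (1:ℝ)/(max m n + 1) ≤ 1/(n+1) := by
        apply one_div_le_one_div_of_le (by positivity)
        simp [Nat.cast_le, le_max_right]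
      have hy' : c - 1/(max m n + 1) < ⟪y, v⟫ := hy
      show c - 1/((n:ℝ)+1) < ⟪y, v⟫
      push_cast at hy' h1 ⊢
      linarith
  -- combine
  refine le_antisymm hle ?_
  have hsplit : {y : Ed d | c ≤ ⟪y, v⟫} ⊆ {y : Ed d | c < ⟪y, v⟫} ∪ {y : Ed d | ⟪y, v⟫ = c} := by
    intro y hy
    rcases lt_or_eq_of_le (show c ≤ ⟪y, v⟫ from hy) with h1 | h1
    · exact Or.inl h1
    · exact Or.inr h1.symm
  calc ENNReal.ofReal h ≤ P {y : Ed d | c ≤ ⟪y, v⟫} := hge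
  _ ≤ P {y : Ed d | c < ⟪y, v⟫} + P {y : Ed d | ⟪y, v⟫ = c} :=
      le_trans (measure_mono hsplit) (measure_union_le _ _)
  _ = P {y : Ed d | c < ⟪y, v⟫} := by rw [hhyp v hv c, add_zero]

/-! ### The exchange (optimality) lemma -/

lemma measure_diff_eq {S T : Set (Ed d)} (hS : MeasurableSet S) (hT : MeasurableSet T)
    (hST : P S = P T) : P (S \ T) = P (T \ S) := by
  have h1 := measure_inter_add_diff (μ := P) S hT
  have h2 := measure_inter_add_diff (μ := P) T hS
  rw [Set.inter_comm T S] at h2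
  rw [← h1, ← h2] at hST
  exact (ENNReal.add_right_inj (measure_ne_top P _)).1 hST

lemma setIntegral_split {E : Type} [NormedAddCommGroup E] [NormedSpace ℝ E]
    {f : Ed d → E} (hf : Integrable f P)
    {S T : Set (Ed d)} (hS : MeasurableSet S) (hT : MeasurableSet T) :
    ∫ u in S, f u ∂P = (∫ u in S ∩ T, f u ∂P) + ∫ u in S \ T, f u ∂P := by
  rw [← setIntegral_union (disjoint_sdiff_self_right.mono_left Set.inter_subset_right)
    (hS.diff hT) (hf.integrableOn) (hf.integrableOn), Set.inter_union_diff]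

lemma exchange {S T : Set (Ed d)} (hS : MeasurableSet S) (hT : MeasurableSet T)
    (hST : P S = P T) {f : Ed d → ℝ} (hf : Integrable f P) {r : ℝ}
    (h1 : ∀ u ∈ S \ T, f u ≤ r) (h2 : ∀ u ∈ T \ S, r ≤ f u) :
    ∫ u in S, f u ∂P ≤ ∫ u in T, f u ∂P := by
  have hdiff := measure_diff_eq hS hT hST
  have key1 : ∫ u in S \ T, f u ∂P ≤ r * (P (S \ T)).toReal := by
    calc ∫ u in S \ T, f u ∂P ≤ ∫ _u in S \ T, r ∂P :=
          setIntegral_mono_on hf.integrableOn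
            (integrableOn_const (measure_ne_top P _)) (hS.diff hT) h1
    _ = r * (P (S \ T)).toReal := by rw [setIntegral_const, measureReal_def, smul_eq_mul, mul_comm]
  have key2 : r * (P (T \ S)).toReal ≤ ∫ u in T \ S, f u ∂P := by
    calc r * (P (T \ S)).toReal = ∫ _u in T \ S, r ∂P := by
          rw [setIntegral_const, measureReal_def, smul_eq_mul, mul_comm]
    _ ≤ ∫ u in T \ S, f u ∂P :=
          setIntegral_mono_on (integrableOn_const (measure_ne_top P _))
            hf.integrableOn (hT.diff hS) h2
  have e1 := setIntegral_split hf hS hT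
  have e2 := setIntegral_split hf hT hS
  rw [Set.inter_comm T S] at e2
  rw [e1, e2]
  have : (P (S \ T)).toReal = (P (T \ S)).toReal := by rw [hdiff]
  rw [this] at key1
  linarith

/-! ### Quadratic expansion -/

lemma expand_sq (hsupp : P ((closedBall (0:Ed d) K)ᶜ) = 0) (x : Ed d)
    {T : Set (Ed d)} (hT : MeasurableSet T) :
    ∫ u in T, ‖u - x‖^2 ∂P
      = (∫ u in T, ‖u‖^2 ∂P) - 2 * ⟪x, ∫ u in T, u ∂P⟫ + ‖x‖^2 * (P T).toReal := by
  have hid : IntegrableOn (fun u : Ed d => u) T P := (integrable_id' hsupp).integrableOn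
  have hnsq : IntegrableOn (fun u : Ed d => ‖u‖^2) T P := (integrable_normsq hsupp).integrableOn
  have hinn : IntegrableOn (fun u : Ed d => ⟪x, u⟫) T P :=
    ((integrable_inner' hsupp x).congr (ae_of_all _ fun u => real_inner_comm x u)).integrableOn
  have hA : ∫ u in T, (‖u‖^2 - 2 * ⟪x, u⟫ + ‖x‖^2) ∂P
      = (∫ u in T, (‖u‖^2 - 2 * ⟪x, u⟫) ∂P) + ∫ _u in T, (‖x‖^2 : ℝ) ∂P := by
    refine integral_add ?_ ?_
    · exact hnsq.sub (hinn.const_mul 2)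
    · exact integrableOn_const (measure_ne_top P _)
  have hB : ∫ u in T, (‖u‖^2 - 2 * ⟪x, u⟫) ∂P
      = (∫ u in T, ‖u‖^2 ∂P) - ∫ u in T, 2 * ⟪x, u⟫ ∂P := by
    refine integral_sub ?_ ?_
    · exact hnsq
    · exact hinn.const_mul 2
  have hC : ∫ u in T, 2 * ⟪x, u⟫ ∂P = 2 * ∫ u in T, ⟪x, u⟫ ∂P := by
    have := integral_smul (μ := P.restrict T) (2:ℝ) (fun u : Ed d => ⟪x, u⟫)
    simpa [smul_eq_mul] using this
  have hD : ∫ _u in T, (‖x‖^2 : ℝ) ∂P = ‖x‖^2 * (P T).toReal := by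
    rw [setIntegral_const, measureReal_def, smul_eq_mul, mul_comm]
  have h3 : ∫ u in T, ⟪x, u⟫ ∂P = ⟪x, ∫ u in T, u ∂P⟫ := integral_inner hid x
  have h4 : ∫ u in T, ‖u - x‖^2 ∂P = ∫ u in T, (‖u‖^2 - 2 * ⟪x, u⟫ + ‖x‖^2) ∂P := by
    refine integral_congr_ae (ae_of_all _ fun u => ?_)
    show ‖u - x‖^2 = ‖u‖^2 - 2 * ⟪x, u⟫ + ‖x‖^2
    rw [norm_sub_sq_real, ← real_inner_comm u x]
  rw [h4, hA, hB, hC, hD, h3]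


/-! ### Ball optimality -/

lemma ball_vs (hsupp : P ((closedBall (0:Ed d) K)ᶜ) = 0) (hK : 0 < K)
    (hsph : ∀ (x : Ed d) (r : ℝ), 0 ≤ r → P (sphere x r) = 0)
    (hh : h ∈ Set.Ioo (0:ℝ) 1) (x : Ed d)
    {T : Set (Ed d)} (hT : MeasurableSet T) (hPT : P T = ENNReal.ofReal h) :
    (∫ u in ball x (dtmRadius P h x), ‖u‖^2 ∂P) - 2 * ⟪x, ∫ u in ball x (dtmRadius P h x), u ∂P⟫
      ≤ (∫ u in T, ‖u‖^2 ∂P) - 2 * ⟪x, ∫ u in T, u ∂P⟫ := by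
  set δ := dtmRadius P h x with hδ
  set B := ball x δ with hB
  have hPB : P B = ENNReal.ofReal h := measure_ball_delta hsupp hK hsph hh x
  have hmass : P B = P T := by rw [hPB, hPT]
  have hex : ∫ u in B, ‖u - x‖^2 ∂P ≤ ∫ u in T, ‖u - x‖^2 ∂P := by
    refine exchange measurableSet_ball hT hmass (integrable_sub_sq hsupp x) (r := δ^2) ?_ ?_
    · intro u hu
      have h1 : dist u x < δ := mem_ball.1 hu.1
      rw [dist_eq_norm] at h1
      have h0 : (0:ℝ) ≤ ‖u - x‖ := norm_nonneg _
      nlinarith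
    · intro u hu
      have h1 : ¬ dist u x < δ := fun hc => hu.2 (mem_ball.2 hc)
      push_neg at h1
      rw [dist_eq_norm] at h1
      have h0 : (0:ℝ) ≤ δ := delta_nonneg x
      nlinarith
  rw [expand_sq hsupp x measurableSet_ball, expand_sq hsupp x hT, hPB, hPT] at hex
  linarith

/-! ### Half-space maximality -/

lemma inner_setIntegral (hsupp : P ((closedBall (0:Ed d) K)ᶜ) = 0) (v : Ed d)
    {T : Set (Ed d)} (hT : MeasurableSet T) :
    ∫ u in T, ⟪u, v⟫ ∂P = ⟪∫ u in T, u ∂P, v⟫ := by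
  rw [real_inner_comm]
  rw [← integral_inner ((integrable_id' hsupp).integrableOn) v]
  exact integral_congr_ae (ae_of_all _ fun u => real_inner_comm v u)

lemma inner_le_s (hsupp : P ((closedBall (0:Ed d) K)ᶜ) = 0) (hK : 0 < K)
    (hhyp : ∀ (v : Ed d), ‖v‖ = 1 → ∀ c : ℝ, P {y : Ed d | ⟪y, v⟫ = c} = 0)
    (hh : h ∈ Set.Ioo (0:ℝ) 1) {v : Ed d} (hv : ‖v‖ = 1)
    {T : Set (Ed d)} (hT : MeasurableSet T) (hPT : P T = ENNReal.ofReal h) :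
    ∫ u in T, ⟪u, v⟫ ∂P ≤ ∫ u in {y : Ed d | cInf P h v < ⟪y, v⟫}, ⟪u, v⟫ ∂P := by
  set c := cInf P h v with hc
  set H := {y : Ed d | c < ⟪y, v⟫} with hH
  have hPH : P H = ENNReal.ofReal h := measure_H_eq hsupp hK hhyp hh hv
  have hmass : P H = P T := by rw [hPH, hPT]
  have hex : ∫ u in H, -⟪u, v⟫ ∂P ≤ ∫ u in T, -⟪u, v⟫ ∂P := by
    refine exchange (measSet_half v c) hT hmass ((integrable_inner' hsupp v).neg) (r := -c) ?_ ?_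
    · intro u hu
      have h1 : c < ⟪u, v⟫ := hu.1
      linarith
    · intro u hu
      have h1 : ¬ c < ⟪u, v⟫ := hu.2
      push_neg at h1
      linarith
  rw [integral_neg, integral_neg] at hex
  linarith

lemma eq_case (hsupp : P ((closedBall (0:Ed d) K)ᶜ) = 0) (hK : 0 < K)
    (hhyp : ∀ (v : Ed d), ‖v‖ = 1 → ∀ c : ℝ, P {y : Ed d | ⟪y, v⟫ = c} = 0)
    (hh : h ∈ Set.Ioo (0:ℝ) 1) {v : Ed d} (hv : ‖v‖ = 1)
    {T : Set (Ed d)} (hT : MeasurableSet T) (hPT : P T = ENNReal.ofReal h)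
    (heq : ∫ u in T, ⟪u, v⟫ ∂P = ∫ u in {y : Ed d | cInf P h v < ⟪y, v⟫}, ⟪u, v⟫ ∂P) :
    ∫ u in T, u ∂P = ∫ u in {y : Ed d | cInf P h v < ⟪y, v⟫}, u ∂P := by
  set c := cInf P h v with hc
  set H := {y : Ed d | c < ⟪y, v⟫} with hH
  have hHm : MeasurableSet H := measSet_half v c
  have hPH : P H = ENNReal.ofReal h := measure_H_eq hsupp hK hhyp hh hv
  have hmass : P T = P H := by rw [hPH, hPT]
  have hdiff : P (T \ H) = P (H \ T) := measure_diff_eq hT hHm hmass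
  have hinn : Integrable (fun u : Ed d => ⟪u, v⟫) P := integrable_inner' hsupp v
  -- equality of integrals over the two difference sets
  have e1 := setIntegral_split hinn hT hHm
  have e2 := setIntegral_split hinn hHm hT
  rw [Set.inter_comm H T] at e2
  have heqd : ∫ u in T \ H, ⟪u, v⟫ ∂P = ∫ u in H \ T, ⟪u, v⟫ ∂P := by
    rw [e1, e2] at heq; linarith
  -- show P (T \ H) = 0
  have hTH0 : P (T \ H) = 0 := by
    refine le_antisymm ?_ (zero_le)
    have hint1 : ∫ u in T \ H, (c - ⟪u, v⟫) ∂P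
        = c * (P (T \ H)).toReal - ∫ u in T \ H, ⟪u, v⟫ ∂P := by
      rw [integral_sub (integrableOn_const (C := c) (measure_ne_top P _)) hinn.integrableOn,
        setIntegral_const, measureReal_def, smul_eq_mul, mul_comm]
    have hint2 : ∫ u in H \ T, (c - ⟪u, v⟫) ∂P
        = c * (P (H \ T)).toReal - ∫ u in H \ T, ⟪u, v⟫ ∂P := by
      rw [integral_sub (integrableOn_const (C := c) (measure_ne_top P _)) hinn.integrableOn,
        setIntegral_const, measureReal_def, smul_eq_mul, mul_comm]
    have hmassr : (P (T \ H)).toReal = (P (H \ T)).toReal := by rw [hdiff]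
    have hsame : ∫ u in T \ H, (c - ⟪u, v⟫) ∂P = ∫ u in H \ T, (c - ⟪u, v⟫) ∂P := by
      rw [hint1, hint2, heqd, hmassr]
    have hnonpos : ∫ u in H \ T, (c - ⟪u, v⟫) ∂P ≤ 0 := by
      have : ∫ u in H \ T, (c - ⟪u, v⟫) ∂P ≤ ∫ _u in H \ T, (0:ℝ) ∂P := by
        refine setIntegral_mono_on
          ((integrableOn_const (measure_ne_top P _)).sub hinn.integrableOn)
          (integrableOn_const (measure_ne_top P _)) (hHm.diff hT) fun u hu => ?_
        have h1 : c < ⟪u, v⟫ := hu.1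
        linarith
      simpa using this
    have hnonneg : ∀ᵐ u ∂(P.restrict (T \ H)), 0 ≤ c - ⟪u, v⟫ := by
      refine (ae_restrict_iff' (hT.diff hHm)).2 (ae_of_all _ fun u hu => ?_)
      have h1 : ¬ c < ⟪u, v⟫ := hu.2
      push_neg at h1
      linarith
    have hzero : ∫ u in T \ H, (c - ⟪u, v⟫) ∂P = 0 :=
      le_antisymm (hsame ▸ hnonpos) (integral_nonneg_of_ae hnonneg)
    have haezero : (fun u : Ed d => c - ⟪u, v⟫) =ᶠ[ae (P.restrict (T \ H))] 0 :=
      (integral_eq_zero_iff_of_nonneg_ae hnonneg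
        ((integrable_const c).sub hinn).integrableOn).1 hzero
    -- hence a.e. on T \ H we have ⟪u,v⟫ = c
    have hae : ∀ᵐ u ∂(P.restrict (T \ H)), ⟪u, v⟫ = c := by
      filter_upwards [haezero] with u hu
      have hu' : c - ⟪u, v⟫ = 0 := hu
      linarith
    have hsubnull : P ({y : Ed d | ¬ ⟪y, v⟫ = c} ∩ (T \ H)) = 0 := by
      have := ae_iff.1 hae
      rwa [Measure.restrict_apply' (hT.diff hHm)] at this
    have hsub : T \ H ⊆ ({y : Ed d | ¬ ⟪y, v⟫ = c} ∩ (T \ H)) ∪ {y : Ed d | ⟪y, v⟫ = c} := by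
      intro y hy
      by_cases hyc : ⟪y, v⟫ = c
      · exact Or.inr hyc
      · exact Or.inl ⟨hyc, hy⟩
    calc P (T \ H) ≤ P (({y : Ed d | ¬ ⟪y, v⟫ = c} ∩ (T \ H)) ∪ {y : Ed d | ⟪y, v⟫ = c}) :=
          measure_mono hsub
    _ ≤ P ({y : Ed d | ¬ ⟪y, v⟫ = c} ∩ (T \ H)) + P {y : Ed d | ⟪y, v⟫ = c} :=
          measure_union_le _ _
    _ ≤ 0 := by rw [hsubnull, hhyp v hv c, add_zero]
  have hHT0 : P (H \ T) = 0 := by rw [← hdiff]; exact hTH0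
  have hid : Integrable (fun u : Ed d => u) P := integrable_id' hsupp
  have i1 : ∫ u in T, u ∂P = ∫ u in T ∩ H, u ∂P := by
    rw [setIntegral_split hid hT hHm,
      show P.restrict (T \ H) = 0 from Measure.restrict_eq_zero.2 hTH0,
      integral_zero_measure, add_zero]
  have i2 : ∫ u in H, u ∂P = ∫ u in T ∩ H, u ∂P := by
    rw [setIntegral_split hid hHm hT,
      show P.restrict (H \ T) = 0 from Measure.restrict_eq_zero.2 hHT0,
      integral_zero_measure, add_zero, Set.inter_comm]
  rw [i1, i2]

/-! ### Bounds -/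

lemma norm_setIntegral_le (hsupp : P ((closedBall (0:Ed d) K)ᶜ) = 0) (hK : 0 < K)
    {T : Set (Ed d)} (hT : MeasurableSet T) :
    ‖∫ u in T, u ∂P‖ ≤ K := by
  have h1 : ∀ᵐ u ∂(P.restrict T), ‖u‖ ≤ K := ae_restrict_of_ae (ae_norm_le hsupp)
  calc ‖∫ u in T, u ∂P‖ ≤ K * (P.restrict T Set.univ).toReal := by
        refine norm_integral_le_of_norm_le_const ?_
        exact h1
  _ ≤ K * 1 := by
        have h2 : P.restrict T Set.univ ≤ 1 := by
          rw [Measure.restrict_apply_univ]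
          exact prob_le_one
        have h3 : (P.restrict T Set.univ).toReal ≤ 1 := by
          calc (P.restrict T Set.univ).toReal ≤ (1 : ℝ≥0∞).toReal :=
                ENNReal.toReal_mono ENNReal.one_ne_top h2
          _ = 1 := by simp
        nlinarith
  _ = K := mul_one K

lemma normsq_setIntegral_le (hsupp : P ((closedBall (0:Ed d) K)ᶜ) = 0) (hK : 0 < K)
    {T : Set (Ed d)} (hT : MeasurableSet T) :
    ∫ u in T, ‖u‖^2 ∂P ≤ K^2 := by
  have h1 : ∀ᵐ u ∂(P.restrict T), ‖u‖^2 ≤ K^2 := by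
    filter_upwards [ae_restrict_of_ae (ae_norm_le hsupp)] with u hu
    have := norm_nonneg u
    nlinarith
  calc ∫ u in T, ‖u‖^2 ∂P ≤ ∫ _u in T, (K^2 : ℝ) ∂P :=
        integral_mono_ae (integrable_normsq hsupp).integrableOn
          (integrableOn_const (measure_ne_top P _)) h1
  _ = (P T).toReal * K^2 := by rw [setIntegral_const, measureReal_def, smul_eq_mul]
  _ ≤ 1 * K^2 := by
        have h3 : (P T).toReal ≤ 1 := by
          calc (P T).toReal ≤ (1 : ℝ≥0∞).toReal := ENNReal.toReal_mono ENNReal.one_ne_top prob_le_one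
          _ = 1 := by simp
        nlinarith
  _ = K^2 := one_mul _

/-! ### Lipschitz property of the support function -/

lemma s_lip (hsupp : P ((closedBall (0:Ed d) K)ᶜ) = 0) (hK : 0 < K)
    (hhyp : ∀ (v : Ed d), ‖v‖ = 1 → ∀ c : ℝ, P {y : Ed d | ⟪y, v⟫ = c} = 0)
    (hh : h ∈ Set.Ioo (0:ℝ) 1) {v w : Ed d} (hv : ‖v‖ = 1) (hw : ‖w‖ = 1) :
    (∫ u in {y : Ed d | cInf P h v < ⟪y, v⟫}, ⟪u, v⟫ ∂P)
      - (∫ u in {y : Ed d | cInf P h w < ⟪y, w⟫}, ⟪u, w⟫ ∂P) ≤ K * ‖v - w‖ := by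
  set Hv := {y : Ed d | cInf P h v < ⟪y, v⟫} with hHv
  have hHvm : MeasurableSet Hv := measSet_half v _
  have hPHv : P Hv = ENNReal.ofReal h := measure_H_eq hsupp hK hhyp hh hv
  have h1 : ∫ u in Hv, ⟪u, w⟫ ∂P ≤ ∫ u in {y : Ed d | cInf P h w < ⟪y, w⟫}, ⟪u, w⟫ ∂P :=
    inner_le_s hsupp hK hhyp hh hw hHvm hPHv
  have h2 : ∫ u in Hv, ⟪u, v⟫ ∂P - ∫ u in Hv, ⟪u, w⟫ ∂P = ⟪∫ u in Hv, u ∂P, v - w⟫ := by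
    rw [inner_setIntegral hsupp v hHvm, inner_setIntegral hsupp w hHvm, ← inner_sub_right]
  have h3 : ⟪∫ u in Hv, u ∂P, v - w⟫ ≤ K * ‖v - w‖ := by
    calc ⟪∫ u in Hv, u ∂P, v - w⟫ ≤ ‖∫ u in Hv, u ∂P‖ * ‖v - w‖ := real_inner_le_norm _ _
    _ ≤ K * ‖v - w‖ := by
          have := norm_setIntegral_le hsupp hK hHvm
          have := norm_nonneg (v - w)
          nlinarith
  linarith

/-! ### Continuity of the local mean and local second moment -/

lemma continuous_ball_integral (hsupp : P ((closedBall (0:Ed d) K)ᶜ) = 0) (hK : 0 < K)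
    (hsph : ∀ (x : Ed d) (r : ℝ), 0 ≤ r → P (sphere x r) = 0)
    (hh : h ∈ Set.Ioo (0:ℝ) 1)
    {E : Type} [NormedAddCommGroup E] [NormedSpace ℝ E]
    {f : Ed d → E} (hf : Integrable f P) :
    Continuous (fun x : Ed d => ∫ u in ball x (dtmRadius P h x), f u ∂P) := by
  have hlipδ : ∀ x y : Ed d, |dtmRadius P h x - dtmRadius P h y| ≤ dist x y := by
    intro x y
    rw [abs_sub_le_iff]
    constructor
    · have := delta_lip hsupp hK hh y x
      rw [dist_comm]
      linarith
    · have := delta_lip hsupp hK hh x y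
      linarith
  refine SeqContinuous.continuous ?_
  intro xs x hxs
  have hδtend : Tendsto (fun n => dtmRadius P h (xs n)) atTop (𝓝 (dtmRadius P h x)) := by
    rw [Metric.tendsto_atTop] at hxs ⊢
    intro ε hε
    obtain ⟨N, hN⟩ := hxs ε hε
    refine ⟨N, fun n hn => ?_⟩
    rw [Real.dist_eq]
    calc |dtmRadius P h (xs n) - dtmRadius P h x| ≤ dist (xs n) x := hlipδ _ _
    _ < ε := hN n hn
  have hdisttend : ∀ u : Ed d, Tendsto (fun n => dist u (xs n)) atTop (𝓝 (dist u x)) := by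
    intro u
    exact ((continuous_const.dist continuous_id).tendsto x).comp hxs
  have hrw : ∀ z : Ed d, ∫ u in ball z (dtmRadius P h z), f u ∂P
      = ∫ u, (ball z (dtmRadius P h z)).indicator f u ∂P :=
    fun z => (integral_indicator measurableSet_ball).symm
  simp only [hrw]
  refine tendsto_integral_of_dominated_convergence (fun u => ‖f u‖)
    (fun n => hf.aestronglyMeasurable.indicator measurableSet_ball) hf.norm
    (fun n => ae_of_all _ fun u => norm_indicator_le_norm_self f u) ?_
  have hsphere : P (sphere x (dtmRadius P h x)) = 0 := hsph x _ (delta_nonneg x)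
  have hae : ∀ᵐ u ∂P, u ∉ sphere x (dtmRadius P h x) := by
    rw [ae_iff]
    simp only [not_not, setOf_mem_eq]; exact hsphere
  filter_upwards [hae] with u hu
  rw [mem_sphere] at hu
  rcases lt_or_gt_of_ne hu with hlt | hgt
  · -- u in the open ball, eventually in all balls
    have hev : ∀ᶠ n in atTop, dist u (xs n) < dtmRadius P h (xs n) := by
      have htt : Tendsto (fun n => dtmRadius P h (xs n) - dist u (xs n)) atTop
          (𝓝 (dtmRadius P h x - dist u x)) := hδtend.sub (hdisttend u)
      have hpos : (0:ℝ) < dtmRadius P h x - dist u x := by linarith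
      filter_upwards [htt.eventually (eventually_gt_nhds hpos)] with n hn
      linarith [hn]
    have heq : ∀ᶠ n in atTop, (ball (xs n) (dtmRadius P h (xs n))).indicator f u = f u := by
      filter_upwards [hev] with n hn
      exact Set.indicator_of_mem (mem_ball.2 hn) f
    rw [Set.indicator_of_mem (mem_ball.2 hlt) f]
    exact Tendsto.congr' (heq.mono fun n hn => hn.symm) tendsto_const_nhds
  · -- u outside the closed ball, eventually outside all balls
    have hev : ∀ᶠ n in atTop, ¬ dist u (xs n) < dtmRadius P h (xs n) := by
      have htt : Tendsto (fun n => dist u (xs n) - dtmRadius P h (xs n)) atTop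
          (𝓝 (dist u x - dtmRadius P h x)) := (hdisttend u).sub hδtend
      have hpos : (0:ℝ) < dist u x - dtmRadius P h x := by linarith
      filter_upwards [htt.eventually (eventually_gt_nhds hpos)] with n hn
      intro hc
      linarith [hn]
    have heq : ∀ᶠ n in atTop, (ball (xs n) (dtmRadius P h (xs n))).indicator f u = 0 := by
      filter_upwards [hev] with n hn
      exact Set.indicator_of_notMem (fun hc => hn (mem_ball.1 hc)) f
    rw [Set.indicator_of_notMem (fun hc => (not_lt.2 (le_of_lt hgt)) (mem_ball.1 hc)) f]
    exact Tendsto.congr' (heq.mono fun n hn => hn.symm) tendsto_const_nhds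

/-! ### Membership in `Mset` -/

lemma toReal_inv_ofReal (hh : h ∈ Set.Ioo (0:ℝ) 1) :
    ((ENNReal.ofReal h)⁻¹).toReal = h⁻¹ := by
  rw [ENNReal.toReal_inv, ENNReal.toReal_ofReal hh.1.le]

lemma mem_Mset_ball (hsupp : P ((closedBall (0:Ed d) K)ᶜ) = 0) (hK : 0 < K)
    (hsph : ∀ (x : Ed d) (r : ℝ), 0 ≤ r → P (sphere x r) = 0)
    (hh : h ∈ Set.Ioo (0:ℝ) 1) (x : Ed d) :
    (h⁻¹ : ℝ) • ∫ u in ball x (dtmRadius P h x), u ∂P ∈ Mset P h := by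
  set B := ball x (dtmRadius P h x) with hB
  have hPB : P B = ENNReal.ofReal h := measure_ball_delta hsupp hK hsph hh x
  refine Or.inl ⟨x, (ENNReal.ofReal h)⁻¹ • P.restrict B, ⟨P.restrict B, rfl,
    Measure.restrict_le_self, ?_, ?_, ?_⟩, ?_⟩
  · rw [Measure.restrict_apply_univ]; exact hPB
  · intro A hA
    rw [Measure.restrict_apply' measurableSet_ball, Set.inter_eq_self_of_subset_left hA]
  · rw [Measure.restrict_apply' measurableSet_ball]
    have : (closedBall x (dtmRadius P h x))ᶜ ∩ B = ∅ := by
      rw [Set.eq_empty_iff_forall_notMem]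
      rintro y ⟨hy1, hy2⟩
      exact hy1 (ball_subset_closedBall hy2)
    rw [this]; exact measure_empty
  · rw [mMean, integral_smul_measure, toReal_inv_ofReal hh]

lemma mem_Mset_half (hsupp : P ((closedBall (0:Ed d) K)ᶜ) = 0) (hK : 0 < K)
    (hhyp : ∀ (v : Ed d), ‖v‖ = 1 → ∀ c : ℝ, P {y : Ed d | ⟪y, v⟫ = c} = 0)
    (hh : h ∈ Set.Ioo (0:ℝ) 1) {v : Ed d} (hv : ‖v‖ = 1) :
    (h⁻¹ : ℝ) • ∫ u in {y : Ed d | cInf P h v < ⟪y, v⟫}, u ∂P ∈ Mset P h := by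
  set H := {y : Ed d | cInf P h v < ⟪y, v⟫} with hH
  have hHm : MeasurableSet H := measSet_half v _
  have hPH : P H = ENNReal.ofReal h := measure_H_eq hsupp hK hhyp hh hv
  refine Or.inr ⟨v, hv, (ENNReal.ofReal h)⁻¹ • P.restrict H, ⟨P.restrict H, rfl,
    Measure.restrict_le_self, ?_, ?_, ?_⟩, ?_⟩
  · rw [Measure.restrict_apply_univ]; exact hPH
  · intro A hA
    rw [Measure.restrict_apply' hHm, Set.inter_eq_self_of_subset_left hA]
  · rw [Measure.restrict_apply' hHm]
    have : {y : Ed d | ⟪y, v⟫ < cInf P h v} ∩ H = ∅ := by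
      rw [Set.eq_empty_iff_forall_notMem]
      rintro y ⟨hy1, hy2⟩
      have h1 : ⟪y, v⟫ < cInf P h v := hy1
      have h2 : cInf P h v < ⟪y, v⟫ := hy2
      linarith
    rw [this]; exact measure_empty
  · rw [mMean, integral_smul_measure, toReal_inv_ofReal hh]

/-! ### Representation of elements of `Mset` -/

lemma rep_of_mem (hsupp : P ((closedBall (0:Ed d) K)ᶜ) = 0)
    (hhyp : ∀ (v : Ed d), ‖v‖ = 1 → ∀ c : ℝ, P {y : Ed d | ⟪y, v⟫ = c} = 0)
    (hsph : ∀ (x : Ed d) (r : ℝ), 0 ≤ r → P (sphere x r) = 0)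
    (hh : h ∈ Set.Ioo (0:ℝ) 1) {m : Ed d} (hm : m ∈ Mset P h) :
    ∃ T : Set (Ed d), MeasurableSet T ∧ P T = ENNReal.ofReal h ∧
      m = (h⁻¹ : ℝ) • ∫ u in T, u ∂P := by
  rcases hm with ⟨x, μ, ⟨Q, hQμ, hQle, hQuniv, hQloc, hQout⟩, hmean⟩ |
    ⟨v, hv, μ, ⟨Q, hQμ, hQle, hQuniv, hQloc, hQout⟩, hmean⟩
  · set B := ball x (dtmRadius P h x) with hB
    have hQr : Q = P.restrict B := by
      refine Measure.ext fun A hA => ?_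
      have hsplit := (measure_inter_add_diff (μ := Q) (t := B) A measurableSet_ball).symm
      have h1 : Q (A ∩ B) = P (A ∩ B) := hQloc _ Set.inter_subset_right
      have h2 : Q (A \ B) = 0 := by
        refine le_antisymm ?_ (zero_le)
        have hsub : A \ B ⊆ sphere x (dtmRadius P h x) ∪ (closedBall x (dtmRadius P h x))ᶜ := by
          intro y hy
          by_cases hyc : y ∈ closedBall x (dtmRadius P h x)
          · left
            rw [mem_sphere]
            rcases lt_or_eq_of_le (mem_closedBall.1 hyc) with h3 | h3
            · exact absurd (mem_ball.2 h3) hy.2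
            · exact h3
          · exact Or.inr hyc
        calc Q (A \ B) ≤ Q (sphere x (dtmRadius P h x) ∪ (closedBall x (dtmRadius P h x))ᶜ) :=
              measure_mono hsub
        _ ≤ Q (sphere x (dtmRadius P h x)) + Q ((closedBall x (dtmRadius P h x))ᶜ) :=
              measure_union_le _ _
        _ ≤ P (sphere x (dtmRadius P h x)) + 0 := by
              rw [hQout]
              exact add_le_add (Measure.le_iff'.1 hQle _) le_rfl
        _ = 0 := by rw [hsph x _ (delta_nonneg x), add_zero]
      rw [hsplit, h1, h2, add_zero, Measure.restrict_apply' measurableSet_ball]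
    have hPB : P B = ENNReal.ofReal h := by
      have := hQuniv
      rw [hQr, Measure.restrict_apply_univ] at this
      exact this
    refine ⟨B, measurableSet_ball, hPB, ?_⟩
    rw [hmean, hQμ, hQr, mMean, integral_smul_measure, toReal_inv_ofReal hh]
  · set c := cInf P h v with hc
    set H := {y : Ed d | c < ⟪y, v⟫} with hH
    have hHm : MeasurableSet H := measSet_half v c
    have hQr : Q = P.restrict H := by
      refine Measure.ext fun A hA => ?_
      have hsplit := (measure_inter_add_diff (μ := Q) A hHm).symm
      have h1 : Q (A ∩ H) = P (A ∩ H) := hQloc _ Set.inter_subset_right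
      have h2 : Q (A \ H) = 0 := by
        refine le_antisymm ?_ (zero_le)
        have hsub : A \ H ⊆ {y : Ed d | ⟪y, v⟫ = c} ∪ {y : Ed d | ⟪y, v⟫ < c} := by
          intro y hy
          have h3 : ¬ c < ⟪y, v⟫ := hy.2
          push_neg at h3
          rcases lt_or_eq_of_le h3 with h4 | h4
          · exact Or.inr h4
          · exact Or.inl h4
        calc Q (A \ H) ≤ Q ({y : Ed d | ⟪y, v⟫ = c} ∪ {y : Ed d | ⟪y, v⟫ < c}) :=
              measure_mono hsub
        _ ≤ Q {y : Ed d | ⟪y, v⟫ = c} + Q {y : Ed d | ⟪y, v⟫ < c} := measure_union_le _ _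
        _ ≤ P {y : Ed d | ⟪y, v⟫ = c} + 0 := by
              rw [hQout]
              exact add_le_add (Measure.le_iff'.1 hQle _) le_rfl
        _ = 0 := by rw [hhyp v hv c, add_zero]
      rw [hsplit, h1, h2, add_zero, Measure.restrict_apply' hHm]
    have hPH : P H = ENNReal.ofReal h := by
      have := hQuniv
      rw [hQr, Measure.restrict_apply_univ] at this
      exact this
    refine ⟨H, hHm, hPH, ?_⟩
    rw [hmean, hQμ, hQr, mMean, integral_smul_measure, toReal_inv_ofReal hh]

end Stmt5Aux

end stmt5aux

set_option maxHeartbeats 1600000 in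
/-- for a compactly supported measure putting mass neither on hyperplanes nor on
spheres, the set `M_h(P)` is convex. -/
theorem stmt_5 {d : ℕ} (K : ℝ) (hK : 0 < K)
    (P : Measure (Ed d)) [IsProbabilityMeasure P]
    (hsupp : P ((closedBall (0 : Ed d) K)ᶜ) = 0)
    (hhyp : ∀ (v : Ed d), ‖v‖ = 1 → ∀ c : ℝ, P {y : Ed d | (inner ℝ y v : ℝ) = c} = 0)
    (hsph : ∀ (x : Ed d) (r : ℝ), 0 ≤ r → P (sphere x r) = 0)
    (h : ℝ) (hh : h ∈ Set.Ioo (0:ℝ) 1) :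
    Convex ℝ (Mset P h) := by
  classical
  intro m1 hm1 m2 hm2 a b ha hb hab
  rcases Nat.eq_zero_or_pos d with hd0 | hdpos
  · -- trivial case `d = 0`
    haveI : Subsingleton (Ed d) := by
      subst hd0
      unfold Ed EuclideanSpace PiLp
      exact (WithLp.equiv 2 _).subsingleton
    have : a • m1 + b • m2 = m1 := Subsingleton.elim _ _
    rw [this]
    exact hm1
  rcases eq_or_lt_of_le ha with ha0 | hapos
  · have hb1 : b = 1 := by linarith
    rw [← ha0, hb1, zero_smul, one_smul, zero_add]
    exact hm2
  rcases eq_or_lt_of_le hb with hb0 | hbpos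
  · have ha1 : a = 1 := by linarith
    rw [← hb0, ha1, zero_smul, one_smul, add_zero]
    exact hm1
  haveI : Nontrivial (Ed d) := by
    have hfr := finrank_euclideanSpace_fin (𝕜 := ℝ) (n := d)
    exact Module.nontrivial_of_finrank_pos (R := ℝ) (by rw [hfr]; exact hdpos)
  obtain ⟨T1, hT1m, hT1mass, hT1rep⟩ := Stmt5Aux.rep_of_mem hsupp hhyp hsph hh hm1
  obtain ⟨T2, hT2m, hT2mass, hT2rep⟩ := Stmt5Aux.rep_of_mem hsupp hhyp hsph hh hm2
  set β1 := ∫ u in T1, u ∂P with hβ1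
  set β2 := ∫ u in T2, u ∂P with hβ2
  set b0 : Ed d := a • β1 + b • β2 with hb0def
  have hm0 : a • m1 + b • m2 = (h⁻¹ : ℝ) • b0 := by
    rw [hT1rep, hT2rep, hb0def]
    module
  set sfun : Ed d → ℝ :=
    fun v => ∫ u in {y : Ed d | cInf P h v < (inner ℝ y v : ℝ)}, (inner ℝ u v : ℝ) ∂P with hsfun
  by_cases hcase : ∀ v : Ed d, ‖v‖ = 1 → (inner ℝ b0 v : ℝ) < sfun v
  · -- the target is attained at a finite minimizer
    set bB : Ed d → Ed d := fun x => ∫ u in ball x (dtmRadius P h x), u ∂P with hbB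
    set aB : Ed d → ℝ := fun x => ∫ u in ball x (dtmRadius P h x), ‖u‖^2 ∂P with haB
    have hbBc : Continuous bB :=
      Stmt5Aux.continuous_ball_integral hsupp hK hsph hh (Stmt5Aux.integrable_id' hsupp)
    have haBc : Continuous aB :=
      Stmt5Aux.continuous_ball_integral hsupp hK hsph hh (Stmt5Aux.integrable_normsq hsupp)
    set g : Ed d → ℝ :=
      fun x => 2 * (inner ℝ x (bB x) : ℝ) - 2 * (inner ℝ x b0 : ℝ) - aB x with hg
    have hgc : Continuous g := by
      have h1 : Continuous fun x : Ed d => (inner ℝ x (bB x) : ℝ) :=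
        continuous_id.inner hbBc
      have h2 : Continuous fun x : Ed d => (inner ℝ x b0 : ℝ) :=
        continuous_id.inner continuous_const
      exact ((continuous_const.mul h1).sub (continuous_const.mul h2)).sub haBc
    -- uniform gap over the unit sphere
    have hsne : (sphere (0 : Ed d) 1).Nonempty := NormedSpace.sphere_nonempty.2 zero_le_one
    have hφc : ContinuousOn (fun v : Ed d => sfun v - (inner ℝ b0 v : ℝ)) (sphere (0:Ed d) 1) := by
      have hlip : LipschitzOnWith (Real.toNNReal K) sfun (sphere (0:Ed d) 1) := by
        rw [lipschitzOnWith_iff_dist_le_mul]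
        intro v hv w hw
        have hv1 : ‖v‖ = 1 := mem_sphere_zero_iff_norm.1 hv
        have hw1 : ‖w‖ = 1 := mem_sphere_zero_iff_norm.1 hw
        have h1 := Stmt5Aux.s_lip hsupp hK hhyp hh hv1 hw1
        have h2 := Stmt5Aux.s_lip hsupp hK hhyp hh hw1 hv1
        rw [Real.dist_eq, dist_eq_norm, abs_sub_le_iff]
        have hKK : K ≤ (Real.toNNReal K : ℝ) := Real.le_coe_toNNReal K
        have hn : ‖v - w‖ = ‖w - v‖ := norm_sub_rev v w
        have hnn : (0:ℝ) ≤ ‖v - w‖ := norm_nonneg _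
        constructor
        · calc sfun v - sfun w ≤ K * ‖v - w‖ := h1
          _ ≤ (Real.toNNReal K : ℝ) * ‖v - w‖ := by nlinarith
        · calc sfun w - sfun v ≤ K * ‖w - v‖ := h2
          _ = K * ‖v - w‖ := by rw [hn]
          _ ≤ (Real.toNNReal K : ℝ) * ‖v - w‖ := by nlinarith
      exact hlip.continuousOn.sub (continuous_const.inner continuous_id).continuousOn
    obtain ⟨v₀, hv₀mem, hv₀min⟩ :=
      (isCompact_sphere (0:Ed d) 1).exists_isMinOn hsne hφc
    set ε := sfun v₀ - (inner ℝ b0 v₀ : ℝ) with hεdef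
    have hε : 0 < ε := sub_pos.2 (hcase v₀ (mem_sphere_zero_iff_norm.1 hv₀mem))
    have hgap : ∀ v : Ed d, ‖v‖ = 1 → ε ≤ sfun v - (inner ℝ b0 v : ℝ) := by
      intro v hv1
      exact (isMinOn_iff.1 hv₀min) v (mem_sphere_zero_iff_norm.2 hv1)
    -- coercivity
    have hcoer : ∀ x : Ed d, x ≠ 0 → 2 * (ε * ‖x‖) - K^2 ≤ g x := by
      intro x hx
      have hnx : (0:ℝ) < ‖x‖ := norm_pos_iff.2 hx
      set v : Ed d := ‖x‖⁻¹ • x with hvdef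
      have hv1 : ‖v‖ = 1 := by
        rw [hvdef, norm_smul, norm_inv, norm_norm, inv_mul_cancel₀ (ne_of_gt hnx)]
      set Hv := {y : Ed d | cInf P h v < (inner ℝ y v : ℝ)} with hHv
      have hHm : MeasurableSet Hv := Stmt5Aux.measSet_half v (cInf P h v)
      have hPH : P Hv = ENNReal.ofReal h := Stmt5Aux.measure_H_eq hsupp hK hhyp hh hv1
      set bH := ∫ u in Hv, u ∂P with hbHdef
      set aH := ∫ u in Hv, ‖u‖^2 ∂P with haHdef
      have hopt : aB x - 2 * (inner ℝ x (bB x) : ℝ) ≤ aH - 2 * (inner ℝ x bH : ℝ) :=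
        Stmt5Aux.ball_vs hsupp hK hsph hh x hHm hPH
      have haHle : aH ≤ K^2 := Stmt5Aux.normsq_setIntegral_le hsupp hK hHm
      have hxv : x = ‖x‖ • v := by
        rw [hvdef, smul_smul, mul_inv_cancel₀ (ne_of_gt hnx), one_smul]
      have hsv : sfun v = (inner ℝ bH v : ℝ) := Stmt5Aux.inner_setIntegral hsupp v hHm
      have hgapv : ε ≤ sfun v - (inner ℝ b0 v : ℝ) := hgap v hv1
      have hxH : (inner ℝ x bH : ℝ) = ‖x‖ * (inner ℝ v bH : ℝ) := by
        conv_lhs => rw [hxv]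
        exact real_inner_smul_left _ _ _
      have hxb0 : (inner ℝ x b0 : ℝ) = ‖x‖ * (inner ℝ v b0 : ℝ) := by
        conv_lhs => rw [hxv]
        exact real_inner_smul_left _ _ _
      have hc1 : (inner ℝ v bH : ℝ) = (inner ℝ bH v : ℝ) := real_inner_comm bH v
      have hc2 : (inner ℝ v b0 : ℝ) = (inner ℝ b0 v : ℝ) := real_inner_comm b0 v
      have hinner : ‖x‖ * ε ≤ (inner ℝ x bH : ℝ) - (inner ℝ x b0 : ℝ) := by
        have h2 : ε ≤ (inner ℝ v bH : ℝ) - (inner ℝ v b0 : ℝ) := by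
          rw [hc1, hc2, ← hsv]
          linarith
        have h3 := mul_le_mul_of_nonneg_left h2 hnx.le
        rw [hxH, hxb0]
        linarith [h3]
      have hgx : g x = 2 * (inner ℝ x (bB x) : ℝ) - 2 * (inner ℝ x b0 : ℝ) - aB x := rfl
      rw [hgx]
      linarith
    have hcoer' : Filter.Tendsto g (Filter.cocompact (Ed d)) Filter.atTop := by
      have h2 : Filter.Tendsto (fun x : Ed d => ‖x‖) (Filter.cocompact (Ed d)) Filter.atTop :=
        tendsto_norm_cocompact_atTop
      have h3 : Filter.Tendsto (fun x : Ed d => (2 * ε) * ‖x‖) (Filter.cocompact (Ed d)) Filter.atTop :=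
        h2.const_mul_atTop (by positivity)
      have h4 : Filter.Tendsto (fun x : Ed d => (2 * ε) * ‖x‖ + (-(K^2))) (Filter.cocompact (Ed d)) Filter.atTop :=
        Filter.tendsto_atTop_add_const_right _ _ h3
      refine Filter.tendsto_atTop_mono' _ ?_ h4
      have hmem : {x : Ed d | x ≠ 0} ∈ Filter.cocompact (Ed d) :=
        Filter.mem_cocompact.2 ⟨{0}, isCompact_singleton, fun x hx => hx⟩
      filter_upwards [hmem] with x hx
      have := hcoer x hx
      linarith [this]
    obtain ⟨x0, hx0⟩ := hgc.exists_forall_le hcoer'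
    -- the minimizer recovers the target mean
    have hball : ∀ z : Ed d, P (ball z (dtmRadius P h z)) = ENNReal.ofReal h :=
      fun z => Stmt5Aux.measure_ball_delta hsupp hK hsph hh z
    have hkey : ∀ w : Ed d, 0 ≤ (inner ℝ w (bB x0 - b0) : ℝ) := by
      intro w
      have hstep : ∀ t : ℝ, 0 < t → 0 ≤ (inner ℝ w (bB (x0 + t • w) - b0) : ℝ) := by
        intro t ht
        set z : Ed d := x0 + t • w with hz
        have h1 : g x0 ≤ g z := hx0 z
        have h2 : aB x0 - 2 * (inner ℝ x0 (bB x0) : ℝ) ≤ aB z - 2 * (inner ℝ x0 (bB z) : ℝ) :=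
          Stmt5Aux.ball_vs hsupp hK hsph hh x0 measurableSet_ball (hball z)
        have e1 : g x0 = 2 * (inner ℝ x0 (bB x0) : ℝ) - 2 * (inner ℝ x0 b0 : ℝ) - aB x0 := rfl
        have e2 : g z = 2 * (inner ℝ z (bB z) : ℝ) - 2 * (inner ℝ z b0 : ℝ) - aB z := rfl
        have e3 : (inner ℝ z (bB z) : ℝ) = (inner ℝ x0 (bB z) : ℝ) + t * (inner ℝ w (bB z) : ℝ) := by
          rw [hz, inner_add_left, real_inner_smul_left]
        have e4 : (inner ℝ z b0 : ℝ) = (inner ℝ x0 b0 : ℝ) + t * (inner ℝ w b0 : ℝ) := by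
          rw [hz, inner_add_left, real_inner_smul_left]
        have e5 : (inner ℝ w (bB z - b0) : ℝ) = (inner ℝ w (bB z) : ℝ) - (inner ℝ w b0 : ℝ) := by
          rw [inner_sub_right]
        have hfinal : 0 ≤ t * (inner ℝ w (bB z) : ℝ) - t * (inner ℝ w b0 : ℝ) := by
          linarith
        rw [e5]
        by_contra hq
        push_neg at hq
        nlinarith
      have hblim : Filter.Tendsto (fun n : ℕ => (inner ℝ w (bB (x0 + (1/((n:ℝ)+1)) • w) - b0) : ℝ)) Filter.atTop
          (nhds (inner ℝ w (bB x0 - b0))) := by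
        have hxlim : Filter.Tendsto (fun n : ℕ => x0 + (1/((n:ℝ)+1)) • w) Filter.atTop (nhds x0) := by
          have h0 : Filter.Tendsto (fun n : ℕ => 1/((n:ℝ)+1)) Filter.atTop (nhds 0) :=
            tendsto_one_div_add_atTop_nhds_zero_nat
          have := (h0.smul_const w).const_add x0
          simpa using this
        have hcont : Continuous fun x : Ed d => (inner ℝ w (bB x - b0) : ℝ) :=
          continuous_const.inner (hbBc.sub continuous_const)
        exact (hcont.tendsto x0).comp hxlim
      exact ge_of_tendsto hblim (Filter.Eventually.of_forall fun n => hstep _ (by positivity))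
    have hbeq : bB x0 = b0 := by
      have h1 := hkey (b0 - bB x0)
      have h2 : (inner ℝ (b0 - bB x0) (bB x0 - b0) : ℝ) = -‖b0 - bB x0‖^2 := by
        rw [show bB x0 - b0 = -(b0 - bB x0) from (neg_sub _ _).symm, inner_neg_right,
          real_inner_self_eq_norm_sq]
      have h3 : ‖b0 - bB x0‖ = 0 := by nlinarith [norm_nonneg (b0 - bB x0)]
      have h4 : b0 - bB x0 = 0 := norm_eq_zero.1 h3
      have h5 : b0 = bB x0 := by
        have := sub_eq_zero.1 h4
        exact this
      exact h5.symm
    rw [hm0, ← hbeq]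
    exact Stmt5Aux.mem_Mset_ball hsupp hK hsph hh x0
  · -- the target is attained at infinity
    push_neg at hcase
    obtain ⟨v, hv1, hge⟩ := hcase
    have hHm : MeasurableSet {y : Ed d | cInf P h v < (inner ℝ y v : ℝ)} :=
      Stmt5Aux.measSet_half v (cInf P h v)
    have hb1v : (inner ℝ β1 v : ℝ) ≤ sfun v := by
      have h1 := Stmt5Aux.inner_le_s hsupp hK hhyp hh hv1 hT1m hT1mass
      rwa [Stmt5Aux.inner_setIntegral hsupp v hT1m] at h1
    have hb2v : (inner ℝ β2 v : ℝ) ≤ sfun v := by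
      have h1 := Stmt5Aux.inner_le_s hsupp hK hhyp hh hv1 hT2m hT2mass
      rwa [Stmt5Aux.inner_setIntegral hsupp v hT2m] at h1
    have hb0v : (inner ℝ b0 v : ℝ) = a * (inner ℝ β1 v : ℝ) + b * (inner ℝ β2 v : ℝ) := by
      rw [hb0def, inner_add_left, real_inner_smul_left, real_inner_smul_left]
    have hsum : a * sfun v + b * sfun v = sfun v := by rw [← add_mul, hab, one_mul]
    have he1 : (inner ℝ β1 v : ℝ) = sfun v := by
      by_contra hne
      have hlt : (inner ℝ β1 v : ℝ) < sfun v := lt_of_le_of_ne hb1v hne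
      have h1 : a * (inner ℝ β1 v : ℝ) < a * sfun v := mul_lt_mul_of_pos_left hlt hapos
      have h2 : b * (inner ℝ β2 v : ℝ) ≤ b * sfun v := mul_le_mul_of_nonneg_left hb2v hb
      linarith [hge, hb0v]
    have he2 : (inner ℝ β2 v : ℝ) = sfun v := by
      by_contra hne
      have hlt : (inner ℝ β2 v : ℝ) < sfun v := lt_of_le_of_ne hb2v hne
      have h1 : b * (inner ℝ β2 v : ℝ) < b * sfun v := mul_lt_mul_of_pos_left hlt hbpos
      have h2 : a * (inner ℝ β1 v : ℝ) ≤ a * sfun v := mul_le_mul_of_nonneg_left hb1v ha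
      linarith [hge, hb0v]
    have hr1 : β1 = ∫ u in {y : Ed d | cInf P h v < (inner ℝ y v : ℝ)}, u ∂P := by
      refine Stmt5Aux.eq_case hsupp hK hhyp hh hv1 hT1m hT1mass ?_
      rw [Stmt5Aux.inner_setIntegral hsupp v hT1m]
      exact he1
    have hr2 : β2 = ∫ u in {y : Ed d | cInf P h v < (inner ℝ y v : ℝ)}, u ∂P := by
      refine Stmt5Aux.eq_case hsupp hK hhyp hh hv1 hT2m hT2mass ?_
      rw [Stmt5Aux.inner_setIntegral hsupp v hT2m]
      exact he2
    have hb0H : b0 = ∫ u in {y : Ed d | cInf P h v < (inner ℝ y v : ℝ)}, u ∂P := by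
      rw [hb0def, hr1, hr2, ← add_smul, hab, one_smul]
    rw [hm0, hb0H]
    exact Stmt5Aux.mem_Mset_half hsupp hK hhyp hh hv1
end
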